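/- arXiv:1604.05155 — 7 statements merged into one kernel-verified Lean document; each statement's English description precedes it below -/
import Mathlib

section
/- A real number x ∈ (0,1] has a finite ECF expansion, i.e. T_E^n x = 0 for some n ≥ 1, if and only if x is rational. -/
open Set

/-- The Engel continued fraction map, with the convention `T_E 0 = 0`. -/
noncomputable def ecfT (x : ℝ) : ℝ :=
  if x = 0 then 0 else (1 / (⌊1 / x⌋ : ℝ)) * (1 / x - (⌊1 / x⌋ : ℝ))

private lemma floor_nat_div (d p : ℕ) (hp : 0 < p) :
    ⌊(d : ℝ) / (p : ℝ)⌋ = (d / p : ℕ) := by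
  rw [← Int.natCast_floor_eq_floor (by positivity), Nat.floor_div_eq_div]

private lemma ecfT_rat (p d : ℕ) (hp : 0 < p) (hpd : p ≤ d) :
    ecfT ((p : ℝ) / d) = ((d % p : ℕ) : ℝ) / (((d / p : ℕ) : ℝ) * p) := by
  have hd : 0 < d := lt_of_lt_of_le hp hpd
  have hx : ((p : ℝ) / d) ≠ 0 := by positivity
  have h1 : (1 : ℝ) / ((p : ℝ) / d) = (d : ℝ) / p := one_div_div _ _
  have ha : ⌊(1 : ℝ) / ((p : ℝ) / d)⌋ = (d / p : ℕ) := by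
    rw [h1]; exact floor_nat_div d p hp
  have haa : 0 < d / p := Nat.div_pos hpd hp
  have hmod : (d % p : ℕ) + p * (d / p) = d := Nat.mod_add_div d p
  have hmodR : ((d % p : ℕ) : ℝ) = (d : ℝ) - (p : ℝ) * ((d / p : ℕ) : ℝ) := by
    have := congrArg (fun n : ℕ => (n : ℝ)) hmod
    push_cast at this ⊢
    linarith
  rw [ecfT, if_neg hx, ha, h1, hmodR]
  have hap : ((d / p : ℕ) : ℝ) ≠ 0 := by positivity
  have hpR : (p : ℝ) ≠ 0 := by positivity
  rw [Int.cast_natCast]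
  field_simp

private lemma rat_fin : ∀ p : ℕ, ∀ d : ℕ, 0 < p → p ≤ d →
    ∃ n : ℕ, 1 ≤ n ∧ ecfT^[n] ((p : ℝ) / d) = 0 := by
  intro p
  induction p using Nat.strong_induction_on with
  | _ p IH =>
    intro d hp hpd
    have hd : 0 < d := lt_of_lt_of_le hp hpd
    have haa : 0 < d / p := Nat.div_pos hpd hp
    have hecf := ecfT_rat p d hp hpd
    by_cases hr : d % p = 0
    · refine ⟨1, le_refl _, ?_⟩
      simp [Function.iterate_one, hecf, hr]
    · have hr0 : 0 < d % p := Nat.pos_of_ne_zero hr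
      have hrp : d % p < p := Nat.mod_lt d hp
      have hle : d % p ≤ (d / p) * p := le_trans hrp.le (Nat.le_mul_of_pos_left p haa)
      obtain ⟨n, hn1, hn⟩ := IH (d % p) hrp ((d / p) * p) hr0 hle
      refine ⟨n + 1, le_add_self, ?_⟩
      rw [Function.iterate_succ_apply, hecf]
      have : (((d / p : ℕ) : ℝ) * p) = (((d / p) * p : ℕ) : ℝ) := by push_cast; ring
      rw [this]
      exact hn

private lemma fin_rat : ∀ n : ℕ, ∀ x : ℝ, 0 < x → x ≤ 1 → ecfT^[n] x = 0 →
    ∃ q : ℚ, x = (q : ℝ) := by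
  intro n
  induction n with
  | zero => intro x hx _ h; simp at h; exact absurd h (ne_of_gt hx)
  | succ n IH =>
    intro x hx hx1 h
    rw [Function.iterate_succ_apply] at h
    have hxne : x ≠ 0 := ne_of_gt hx
    have h1x : (1 : ℝ) ≤ 1 / x := by rw [le_div_iff₀ hx]; simpa using hx1
    set a : ℤ := ⌊1 / x⌋ with ha
    have ha1 : 1 ≤ a := by exact_mod_cast Int.le_floor.mpr (by exact_mod_cast h1x)
    have haR : (1 : ℝ) ≤ (a : ℝ) := by exact_mod_cast ha1
    have haR0 : (a : ℝ) ≠ 0 := by positivity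
    have hfr0 : (0 : ℝ) ≤ 1 / x - a := by
      have := Int.floor_le (1 / x); linarith
    have hfr1 : 1 / x - a < 1 := by
      have := Int.lt_floor_add_one (1 / x); linarith
    have hT : ecfT x = (1 / (a : ℝ)) * (1 / x - a) := by rw [ecfT, if_neg hxne]
    by_cases h0 : ecfT x = 0
    · -- 1/x = a, x = 1/a
      rw [hT] at h0
      have h0' : 1 / x - (a : ℝ) = 0 := by
        rcases mul_eq_zero.mp h0 with h | h
        · exact absurd h (by positivity)
        · exact h
      refine ⟨((a : ℚ))⁻¹, ?_⟩
      have hxa : 1 / x = (a : ℝ) := by linarith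
      have : x = ((a : ℝ))⁻¹ := by
        field_simp at hxa ⊢
        linarith
      rw [this]; push_cast; ring
    · have hTpos : 0 < ecfT x := by
        rw [hT]
        rcases lt_or_eq_of_le hfr0 with h' | h'
        · positivity
        · exfalso; apply h0; rw [hT, ← h']; ring
      have hT1 : ecfT x ≤ 1 := by
        rw [hT]
        have h1a : 1 / (a : ℝ) ≤ 1 := by
          rw [div_le_one (by linarith)]; linarith
        calc (1 / (a : ℝ)) * (1 / x - a) ≤ 1 * (1 / x - a) := by
              apply mul_le_mul_of_nonneg_right h1a hfr0
          _ ≤ 1 := by linarith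
      obtain ⟨q, hq⟩ := IH (ecfT x) hTpos hT1 h
      refine ⟨((a : ℚ) + (a : ℚ) * q)⁻¹, ?_⟩
      have hinv : 1 / x = (a : ℝ) + (a : ℝ) * ecfT x := by
        rw [hT]; field_simp; ring
      rw [hq] at hinv
      have : x = ((a : ℝ) + (a : ℝ) * (q : ℝ))⁻¹ := by
        rw [← hinv]; field_simp
      rw [this]; push_cast; ring

/-- A real `x ∈ (0,1]` has a finite ECF expansion iff it is rational. -/
theorem ecf_finite_iff_rational (x : ℝ) (hx : x ∈ Set.Ioc (0 : ℝ) 1) :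
    (∃ n : ℕ, 1 ≤ n ∧ ecfT^[n] x = 0) ↔ ∃ q : ℚ, x = (q : ℝ) := by
  obtain ⟨hx0, hx1⟩ := hx
  constructor
  · rintro ⟨n, -, hn⟩
    exact fin_rat n x hx0 hx1 hn
  · rintro ⟨q, rfl⟩
    have hq0 : (0 : ℚ) < q := by exact_mod_cast hx0
    have hnum : 0 < q.num := Rat.num_pos.mpr hq0
    set p : ℕ := q.num.toNat with hpdef
    have hp : 0 < p := by rw [hpdef]; omega
    have hcast : ((q : ℝ)) = (p : ℝ) / (q.den : ℝ) := by
      rw [Rat.cast_def]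
      congr 1
      rw [hpdef]
      exact_mod_cast (Int.toNat_of_nonneg hnum.le).symm
    have hpd : p ≤ q.den := by
      have hdpos : (0 : ℝ) < (q.den : ℝ) := by exact_mod_cast q.pos
      have : (p : ℝ) / (q.den : ℝ) ≤ 1 := by rw [← hcast]; exact hx1
      have := (div_le_one hdpos).mp this
      exact_mod_cast this
    rw [hcast]
    exact rat_fin p q.den hp hpd
end

section
/- Characterization of admissible sequences: a sequence (b_1, b_2, …, b_n, …) of positive integers is admissible for ECF expansions (that is, for every n ≥ 1 there exists x ∈ (0,1] with b_j(x) = b_j for all 1 ≤ j ≤ n) if and only if b_{n+1} ≥ b_n for all n ≥ 1. -/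
open Set

/-- The `n`-th partial quotient of the ECF expansion (`n ≥ 1`). -/
noncomputable def ecfB (n : ℕ) (x : ℝ) : ℤ := ⌊1 / (ecfT^[n - 1] x)⌋

/-- A point realizing a given finite block of digits. -/
noncomputable def ecfBuild : List ℤ → ℝ
  | [] => 0
  | [k] => 2 / (2 * (k : ℝ) + 1)
  | k :: l => 1 / ((k : ℝ) * (1 + ecfBuild l))

lemma ecfBuild_pos : ∀ l : List ℤ, l ≠ [] → (∀ m ∈ l, 1 ≤ m) → 0 < ecfBuild l
  | [], h, _ => absurd rfl h
  | [k], _, hp => by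
      have hk : (1:ℝ) ≤ (k:ℝ) := by exact_mod_cast hp k (by simp)
      have h2 : (0:ℝ) < 2 * (k:ℝ) + 1 := by linarith
      simpa [ecfBuild] using div_pos two_pos h2
  | k :: a :: l, _, hp => by
      have hk : (1:ℝ) ≤ (k:ℝ) := by exact_mod_cast hp k (by simp)
      have ht : 0 < ecfBuild (a :: l) :=
        ecfBuild_pos (a :: l) (by simp) (fun m hm => hp m (by simp [hm]))
      have : (0:ℝ) < (k:ℝ) * (1 + ecfBuild (a :: l)) := by nlinarith
      simpa [ecfBuild] using one_div_pos.mpr this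

lemma ecfBuild_le_one : ∀ l : List ℤ, l ≠ [] → (∀ m ∈ l, 1 ≤ m) → ecfBuild l ≤ 1
  | [], h, _ => absurd rfl h
  | [k], _, hp => by
      have hk : (1:ℝ) ≤ (k:ℝ) := by exact_mod_cast hp k (by simp)
      have h2 : (0:ℝ) < 2 * (k:ℝ) + 1 := by linarith
      have : ecfBuild [k] = 2 / (2 * (k:ℝ) + 1) := rfl
      rw [this, div_le_one h2]
      linarith
  | k :: a :: l, _, hp => by
      have hk : (1:ℝ) ≤ (k:ℝ) := by exact_mod_cast hp k (by simp)
      have ht : 0 < ecfBuild (a :: l) :=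
        ecfBuild_pos (a :: l) (by simp) (fun m hm => hp m (by simp [hm]))
      have : ecfBuild (k :: a :: l) = 1 / ((k:ℝ) * (1 + ecfBuild (a :: l))) := rfl
      rw [this, div_le_one (by nlinarith)]
      nlinarith

lemma ecfBuild_floor : ∀ (k : ℤ) (l : List ℤ), List.Chain' (· ≤ ·) (k :: l) →
    (∀ m ∈ k :: l, 1 ≤ m) → ⌊1 / ecfBuild (k :: l)⌋ = k
  | k, [], _, hp => by
      have hk : (1:ℝ) ≤ (k:ℝ) := by exact_mod_cast hp k (by simp)
      have h2 : (0:ℝ) < 2 * (k:ℝ) + 1 := by linarith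
      have hx : 1 / ecfBuild [k] = (k : ℝ) + 1/2 := by
        simp only [ecfBuild]
        field_simp
      rw [hx, Int.floor_eq_iff]
      refine ⟨by linarith, ?_⟩
      linarith
  | k, a :: l, hc, hp => by
      have hk : (1:ℝ) ≤ (k:ℝ) := by exact_mod_cast hp k (by simp)
      have hka : (k:ℝ) ≤ (a:ℝ) := by exact_mod_cast (List.isChain_cons_cons.mp hc).1
      have ha : (1:ℝ) ≤ (a:ℝ) := by exact_mod_cast hp a (by simp)
      have ht : 0 < ecfBuild (a :: l) :=
        ecfBuild_pos (a :: l) (by simp) (fun m hm => hp m (by simp [hm]))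
      -- key upper bound : a * t < 1, by induction-free argument below
      have hat : (a:ℝ) * ecfBuild (a :: l) < 1 := by
        cases l with
        | nil =>
            have h2 : (0:ℝ) < 2 * (a:ℝ) + 1 := by linarith
            have : ecfBuild [a] = 2 / (2 * (a:ℝ) + 1) := rfl
            rw [this, ← mul_div_assoc, div_lt_one h2]
            linarith
        | cons c l' =>
            have hc' : 0 < ecfBuild (c :: l') :=
              ecfBuild_pos (c :: l') (by simp) (fun m hm => hp m (by simp [hm]))
            have hca : (0:ℝ) < (a:ℝ) * (1 + ecfBuild (c :: l')) := by nlinarith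
            have : ecfBuild (a :: c :: l') = 1 / ((a:ℝ) * (1 + ecfBuild (c :: l'))) := rfl
            rw [this]
            rw [mul_one_div, div_lt_one hca]
            nlinarith
      have hkt : (k:ℝ) * ecfBuild (a :: l) < 1 := by
        calc (k:ℝ) * ecfBuild (a :: l) ≤ (a:ℝ) * ecfBuild (a :: l) := by nlinarith
        _ < 1 := hat
      have hd : (0:ℝ) < (k:ℝ) * (1 + ecfBuild (a :: l)) := by nlinarith
      have hx : 1 / ecfBuild (k :: a :: l) = (k:ℝ) * (1 + ecfBuild (a :: l)) := by
        have : ecfBuild (k :: a :: l) = 1 / ((k:ℝ) * (1 + ecfBuild (a :: l))) := rfl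
        rw [this, one_div_one_div]
      rw [hx, Int.floor_eq_iff]
      constructor
      · nlinarith
      · nlinarith

lemma ecfT_ecfBuild (k a : ℤ) (l : List ℤ) (hc : List.Chain' (· ≤ ·) (k :: a :: l))
    (hp : ∀ m ∈ k :: a :: l, 1 ≤ m) :
    ecfT (ecfBuild (k :: a :: l)) = ecfBuild (a :: l) := by
  have hk : (1:ℝ) ≤ (k:ℝ) := by exact_mod_cast hp k (by simp)
  have ht : 0 < ecfBuild (a :: l) :=
    ecfBuild_pos (a :: l) (by simp) (fun m hm => hp m (by simp [hm]))
  have hxpos : 0 < ecfBuild (k :: a :: l) :=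
    ecfBuild_pos _ (by simp) hp
  have hfl : ⌊1 / ecfBuild (k :: a :: l)⌋ = k := ecfBuild_floor k (a :: l) hc hp
  have hx : 1 / ecfBuild (k :: a :: l) = (k:ℝ) * (1 + ecfBuild (a :: l)) := by
    have : ecfBuild (k :: a :: l) = 1 / ((k:ℝ) * (1 + ecfBuild (a :: l))) := rfl
    rw [this, one_div_one_div]
  have hk0 : (k:ℝ) ≠ 0 := by linarith
  rw [ecfT, if_neg (ne_of_gt hxpos), hfl, hx]
  field_simp
  ring

lemma ecfBuild_digits : ∀ (l : List ℤ) (j : ℕ) (hj : j < l.length),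
    List.Chain' (· ≤ ·) l → (∀ m ∈ l, 1 ≤ m) →
    ⌊1 / (ecfT^[j] (ecfBuild l))⌋ = l.get ⟨j, hj⟩
  | [], j, hj, _, _ => by simp at hj
  | k :: l, 0, _, hc, hp => by
      simpa using ecfBuild_floor k l hc hp
  | k :: [], j + 1, hj, _, _ => by simp at hj
  | k :: a :: l, j + 1, hj, hc, hp => by
      rw [Function.iterate_succ_apply, ecfT_ecfBuild k a l hc hp]
      have := ecfBuild_digits (a :: l) j (by simpa using hj)
        (List.isChain_cons_cons.mp hc).2 (fun m hm => hp m (by simp [hm]))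
      simpa using this

/-- A sequence `(b_1, b_2, …)` of positive integers is admissible for ECF expansions
(every finite initial block is realized by some `x ∈ (0,1]`) iff it is non-decreasing. -/
theorem ecf_admissible_iff (b : ℕ → ℤ) (hb : ∀ n, 1 ≤ n → 1 ≤ b n) :
    (∀ n : ℕ, 1 ≤ n → ∃ x ∈ Set.Ioc (0 : ℝ) 1,
        ∀ j : ℕ, 1 ≤ j → j ≤ n → ecfB j x = b j) ↔
    (∀ n : ℕ, 1 ≤ n → b n ≤ b (n + 1)) := by
  constructor
  · intro H n hn
    obtain ⟨x, _, hdig⟩ := H (n + 1) (by omega)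
    have hyB : ⌊1 / (ecfT^[n - 1] x)⌋ = b n := hdig n hn (by omega)
    have hzB : ⌊1 / (ecfT^[n] x)⌋ = b (n + 1) := by
      have := hdig (n + 1) (by omega) le_rfl
      simpa [ecfB] using this
    set y := ecfT^[n - 1] x with hy
    set z := ecfT^[n] x with hz
    have hz1 : (1:ℝ) ≤ 1 / z := by
      have : (1:ℤ) ≤ ⌊1 / z⌋ := hzB ▸ hb (n + 1) (by omega)
      exact_mod_cast (Int.le_floor.mp this)
    have hzpos : 0 < z := by
      by_contra h
      push_neg at h
      have : 1 / z ≤ 0 := one_div_nonpos.mpr h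
      linarith
    have hy1 : (1:ℝ) ≤ 1 / y := by
      have : (1:ℤ) ≤ ⌊1 / y⌋ := hyB ▸ hb n hn
      exact_mod_cast (Int.le_floor.mp this)
    have hypos : 0 < y := by
      by_contra h
      push_neg at h
      have : 1 / y ≤ 0 := one_div_nonpos.mpr h
      linarith
    have hbn : (1:ℝ) ≤ (b n : ℝ) := by exact_mod_cast hb n hn
    have hzy : z = (1 / (b n : ℝ)) * (1 / y - (b n : ℝ)) := by
      have hiter : z = ecfT y := by
        obtain ⟨m, rfl⟩ : ∃ m, n = m + 1 := ⟨n - 1, by omega⟩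
        rw [hy, hz]
        simp only [Nat.add_sub_cancel]
        exact Function.iterate_succ_apply' ecfT m x
      rw [hiter, ecfT, if_neg (ne_of_gt hypos), hyB]
    have hfr : 1 / y - (b n : ℝ) < 1 := by
      have := Int.sub_one_lt_floor (1 / y)
      rw [hyB] at this
      linarith
    have hzlt : z < 1 / (b n : ℝ) := by
      rw [hzy]
      have h1 : (0:ℝ) < 1 / (b n : ℝ) := by positivity
      calc (1 / (b n : ℝ)) * (1 / y - (b n : ℝ)) < (1 / (b n : ℝ)) * 1 := by
            exact mul_lt_mul_of_pos_left hfr h1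
        _ = 1 / (b n : ℝ) := mul_one _
    have hlt : (b n : ℝ) < 1 / z := by
      have := one_div_lt_one_div_of_lt hzpos hzlt
      rwa [one_div_one_div] at this
    have : (b n : ℤ) ≤ ⌊1 / z⌋ := Int.le_floor.mpr (le_of_lt hlt)
    rwa [hzB] at this
  · intro H n hn
    set l : List ℤ := (List.range n).map (fun i => b (i + 1)) with hl
    have hlen : l.length = n := by simp [hl]
    have hpos : ∀ m ∈ l, 1 ≤ m := by
      intro m hm
      simp only [hl, List.mem_map, List.mem_range] at hm
      obtain ⟨i, _, rfl⟩ := hm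
      exact hb (i + 1) (by omega)
    have hchain : List.Chain' (· ≤ ·) l := by
      rw [show List.Chain' (· ≤ ·) l ↔ List.IsChain (· ≤ ·) l from Iff.rfl, List.isChain_iff_getElem]
      intro i hi
      have h1 : l.get ⟨i, by omega⟩ = b (i + 1) := by simp [hl]
      have h2 : l.get ⟨i + 1, by omega⟩ = b (i + 2) := by simp [hl]
      rw [List.get_eq_getElem] at h1 h2
      rw [h1, h2]
      exact H (i + 1) (by omega)
    have hne : l ≠ [] := by
      intro h
      rw [h] at hlen
      simp at hlen
      omega
    refine ⟨ecfBuild l, ⟨ecfBuild_pos l hne hpos, ecfBuild_le_one l hne hpos⟩, ?_⟩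
    intro j hj hjn
    have hjl : j - 1 < l.length := by omega
    have hdg := ecfBuild_digits l (j - 1) hjl hchain hpos
    rw [ecfB, hdg]
    have hget : l.get ⟨j - 1, hjl⟩ = b (j - 1 + 1) := by simp [hl]
    rw [hget]
    congr 1
    omega
end

section
/- Structure and length of cylinders: let (b_1, …, b_n) be an admissible sequence. Then the n-th order cylinder B(b_1, …, b_n) is an interval whose two endpoints are the finite ECF values [[b_1, …, b_{n−1}, b_n]] and [[b_1, …, b_{n−1}, b_n + 1]]; consequently, its Lebesgue measure is P(B(b_1, …, b_n)) = (∏_{i=1}^{n−1} b_i) / (Q_n·(Q_n + Q_{n−1})). -/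
open MeasureTheory Set

/-- The finite ECF value `[[c_1, …, c_m]]`, defined by `[[c_m]] = 1/c_m` and
`[[c_k, …, c_m]] = 1/(c_k + c_k [[c_{k+1}, …, c_m]])` (`ecfVal [] = 0`). -/
noncomputable def ecfVal : List ℕ → ℝ
  | [] => 0
  | c :: rest => 1 / (c + c * ecfVal rest)

/-- The continuants `Q_k` of the ECF expansion: `Q_0 = 1`, `Q_1 = b_1`,
`Q_k = b_k Q_{k-1} + b_{k-1} Q_{k-2}` (equivalently `Q_{-1} = 0`). -/
def ecfQ (b : ℕ → ℕ) : ℕ → ℤ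
  | 0 => 1
  | 1 => (b 1 : ℤ)
  | (k + 2) => (b (k + 2) : ℤ) * ecfQ b (k + 1) + (b (k + 1) : ℤ) * ecfQ b k

namespace ECFAux

def mrow : List ℕ → (ℤ × ℤ) × (ℤ × ℤ)
  | [] => ((0, 1), (1, 0))
  | c :: l =>
      (((mrow l).2.1, (mrow l).2.2),
        ((c : ℤ) * ((mrow l).1.1 + (mrow l).2.1), (c : ℤ) * ((mrow l).1.2 + (mrow l).2.2)))

lemma mrow_nonneg (l : List ℕ) (h : ∀ c ∈ l, 1 ≤ c) :
    0 ≤ (mrow l).1.1 ∧ 0 ≤ (mrow l).1.2 ∧ 0 < (mrow l).2.1 ∧ 0 ≤ (mrow l).2.2 := by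
  induction l with
  | nil => simp [mrow]
  | cons c l ih =>
      have hc : 1 ≤ c := h c (by simp)
      obtain ⟨hA, hB, hC, hD⟩ := ih (fun d hd => h d (by simp [hd]))
      refine ⟨le_of_lt hC, hD, ?_, ?_⟩
      · simp only [mrow]
        have : (1 : ℤ) ≤ (c : ℤ) := by exact_mod_cast hc
        nlinarith
      · simp only [mrow]
        positivity

lemma mrow_det (l : List ℕ) :
    (mrow l).1.2 * (mrow l).2.1 - (mrow l).1.1 * (mrow l).2.2
      = (-1) ^ l.length * (l.prod : ℤ) := by
  induction l with
  | nil => simp [mrow]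
  | cons c l ih =>
      simp only [mrow, List.length_cons, List.prod_cons, pow_succ]
      have h2 : (mrow l).2.2 * ((c:ℤ) * ((mrow l).1.1 + (mrow l).2.1))
          - (mrow l).2.1 * ((c:ℤ) * ((mrow l).1.2 + (mrow l).2.2))
          = -(c:ℤ) * ((mrow l).1.2 * (mrow l).2.1 - (mrow l).1.1 * (mrow l).2.2) := by ring
      rw [h2, ih]; push_cast; ring

lemma mrow_append (l : List ℕ) (d : ℕ) :
    mrow (l ++ [d]) =
      (((mrow l).1.1 * d + (mrow l).1.2, (mrow l).1.1 * d),
        ((mrow l).2.1 * d + (mrow l).2.2, (mrow l).2.1 * d)) := by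
  induction l with
  | nil => simp [mrow]
  | cons c l ih =>
      have h1 : mrow ((c :: l) ++ [d]) =
          (((mrow (l ++ [d])).2.1, (mrow (l ++ [d])).2.2),
            ((c : ℤ) * ((mrow (l ++ [d])).1.1 + (mrow (l ++ [d])).2.1),
              (c : ℤ) * ((mrow (l ++ [d])).1.2 + (mrow (l ++ [d])).2.2))) := rfl
      rw [h1, ih]
      simp only [mrow, Prod.mk.injEq]
      refine ⟨?_, ?_⟩ <;> try (constructor <;> ring)
      all_goals ring

noncomputable def ecfValT : List ℕ → ℝ → ℝ
  | [], t => 1 / t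
  | c :: l, t => 1 / (c + c * ecfValT l t)

lemma ecfVal_append (l : List ℕ) (d : ℕ) :
    ecfVal (l ++ [d]) = ecfValT l (d : ℝ) := by
  induction l with
  | nil => simp [ecfVal, ecfValT]
  | cons c l ih =>
      have h1 : ecfVal ((c :: l) ++ [d]) = 1 / (c + c * ecfVal (l ++ [d])) := rfl
      rw [h1, ih]; rfl

lemma ecfValT_rep (l : List ℕ) (h : ∀ c ∈ l, 1 ≤ c) (t : ℝ) (ht : 0 < t) :
    0 < ((mrow l).2.1 : ℝ) * t + ((mrow l).2.2 : ℝ) ∧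
      ecfValT l t =
        (((mrow l).1.1 : ℝ) * t + ((mrow l).1.2 : ℝ)) /
          (((mrow l).2.1 : ℝ) * t + ((mrow l).2.2 : ℝ)) := by
  induction l with
  | nil =>
      constructor
      · simpa [mrow] using ht
      · simp [mrow, ecfValT]
  | cons c l ih =>
      have hc : 1 ≤ c := h c (by simp)
      obtain ⟨hden, hval⟩ := ih (fun d hd => h d (by simp [hd]))
      obtain ⟨hA, hB, hC, hD⟩ := mrow_nonneg l (fun d hd => h d (by simp [hd]))
      have hA' : (0:ℝ) ≤ ((mrow l).1.1 : ℝ) := by exact_mod_cast hA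
      have hB' : (0:ℝ) ≤ ((mrow l).1.2 : ℝ) := by exact_mod_cast hB
      have hC' : (0:ℝ) < ((mrow l).2.1 : ℝ) := by exact_mod_cast hC
      have hD' : (0:ℝ) ≤ ((mrow l).2.2 : ℝ) := by exact_mod_cast hD
      have hc' : (1:ℝ) ≤ (c:ℝ) := by exact_mod_cast hc
      have hnum : 0 ≤ ((mrow l).1.1:ℝ) * t + ((mrow l).1.2:ℝ) :=
        add_nonneg (mul_nonneg hA' ht.le) hB'
      have hden3 : (0:ℝ) < (c:ℝ) * (((((mrow l).1.1:ℝ)) + ((mrow l).2.1:ℝ)) * t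
          + (((mrow l).1.2:ℝ) + ((mrow l).2.2:ℝ))) := by nlinarith
      have key : (c:ℝ) + c * ecfValT l t
          = ((c:ℝ) * (((((mrow l).1.1:ℝ)) + ((mrow l).2.1:ℝ)) * t
              + (((mrow l).1.2:ℝ) + ((mrow l).2.2:ℝ)))) / (((mrow l).2.1:ℝ)*t + ((mrow l).2.2:ℝ)) := by
        rw [hval]; field_simp; ring
      constructor
      · simp only [mrow]
        push_cast
        nlinarith
      · show 1 / ((c:ℝ) + c * ecfValT l t) = _
        rw [key, one_div_div]
        simp only [mrow]
        push_cast
        rw [div_eq_div_iff hden3.ne' (by nlinarith : (0:ℝ) < (c:ℝ) * ((mrow l).1.1 + (mrow l).2.1) * t + (c:ℝ) * ((mrow l).1.2 + (mrow l).2.2)).ne']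
        ring

end ECFAux
namespace ECFAux

/-- the digit list of `b` of length `m` -/
def lst (b : ℕ → ℕ) (m : ℕ) : List ℕ := (List.range m).map (fun i => b (i + 1))

lemma lst_succ (b : ℕ → ℕ) (m : ℕ) : lst b (m + 1) = lst b m ++ [b (m + 1)] := by
  simp [lst, List.range_succ]

lemma mrow_lst (b : ℕ → ℕ) (m : ℕ) :
    (mrow (lst b m)).2.1 = ecfQ b m ∧
      (mrow (lst b m)).2.2 = if m = 0 then 0 else (b m : ℤ) * ecfQ b (m - 1) := by
  induction m with
  | zero => simp [lst, mrow, ecfQ]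
  | succ m ih =>
      obtain ⟨hC, hD⟩ := ih
      rw [lst_succ, mrow_append, hC, hD]
      match m with
      | 0 => simp [ecfQ]
      | k + 1 =>
          simp only [Nat.succ_ne_zero, if_false, Nat.add_sub_cancel]
          constructor
          · show ecfQ b (k+1) * (b (k+2) : ℤ) + (b (k+1) : ℤ) * ecfQ b k = ecfQ b (k + 2)
            rw [show ecfQ b (k+2) = (b (k + 2) : ℤ) * ecfQ b (k + 1) + (b (k + 1) : ℤ) * ecfQ b k from rfl]
            ring
          · ring

/-- `C * b n + D = Q n` where `(C, D)` is the bottom row for the first `n-1` digits. -/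
lemma mrow_Q (b : ℕ → ℕ) (n : ℕ) (hn : 1 ≤ n) :
    (mrow (lst b (n - 1))).2.1 * (b n : ℤ) + (mrow (lst b (n - 1))).2.2 = ecfQ b n := by
  match n, hn with
  | 1, _ =>
      obtain ⟨C, D⟩ := mrow_lst b 0
      rw [show (1:ℕ) - 1 = 0 from rfl, C, D]
      simp [ecfQ]
  | (k + 2), _ =>
      obtain ⟨C, D⟩ := mrow_lst b (k + 1)
      rw [show (k + 2) - 1 = k + 1 from rfl, C, D]
      simp only [Nat.succ_ne_zero, if_false, Nat.add_sub_cancel]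
      rw [show ecfQ b (k+2) = (b (k + 2) : ℤ) * ecfQ b (k + 1) + (b (k + 1) : ℤ) * ecfQ b k from rfl]
      ring

lemma ecfVal_nonneg (l : List ℕ) (h : ∀ c ∈ l, 1 ≤ c) : 0 ≤ ecfVal l := by
  induction l with
  | nil => simp [ecfVal]
  | cons c l ih =>
      have hc : 1 ≤ c := h c (by simp)
      have hr := ih (fun d hd => h d (by simp [hd]))
      have hc' : (1:ℝ) ≤ (c:ℝ) := by exact_mod_cast hc
      have : (0:ℝ) < (c:ℝ) + c * ecfVal l := by nlinarith
      rw [show ecfVal (c :: l) = 1 / ((c:ℝ) + c * ecfVal l) from rfl]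
      positivity

lemma ecfVal_pos_le (c : ℕ) (hc : 1 ≤ c) (l : List ℕ) (hl : l ≠ [])
    (h : ∀ d ∈ l, c ≤ d) : 0 < ecfVal l ∧ ecfVal l ≤ 1 / (c : ℝ) := by
  match l, hl with
  | d :: l, _ =>
      have hd : c ≤ d := h d (by simp)
      have hd1 : 1 ≤ d := le_trans hc hd
      have hr : 0 ≤ ecfVal l :=
        ecfVal_nonneg l (fun e he => le_trans hc (h e (by simp [he])))
      have hd' : (1:ℝ) ≤ (d:ℝ) := by exact_mod_cast hd1
      have hcd : (c:ℝ) ≤ (d:ℝ) := by exact_mod_cast hd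
      have hc' : (0:ℝ) < (c:ℝ) := by exact_mod_cast hc
      have hden : (d:ℝ) ≤ (d:ℝ) + d * ecfVal l := by nlinarith
      have hdenpos : (0:ℝ) < (d:ℝ) + d * ecfVal l := by nlinarith
      rw [show ecfVal (d :: l) = 1 / ((d:ℝ) + d * ecfVal l) from rfl]
      constructor
      · positivity
      · calc 1 / ((d:ℝ) + d * ecfVal l) ≤ 1 / (d:ℝ) := by
              apply one_div_le_one_div_of_le (by positivity) hden
          _ ≤ 1 / (c:ℝ) := one_div_le_one_div_of_le hc' hcd

end ECFAux
namespace ECFAux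

lemma ecfB_one (x : ℝ) : ecfB 1 x = ⌊1 / x⌋ := rfl

lemma ecfB_succ (i : ℕ) (hi : 1 ≤ i) (x : ℝ) : ecfB (i + 1) x = ecfB i (ecfT x) := by
  unfold ecfB
  rw [show i + 1 - 1 = (i - 1) + 1 by omega, Function.iterate_succ_apply]

lemma chain (b : ℕ → ℕ) (N : ℕ) (hmono : ∀ k, 1 ≤ k → k < N → b k ≤ b (k + 1)) :
    ∀ j, 1 ≤ j → j ≤ N → ∀ i, 1 ≤ i → i ≤ j → b i ≤ b j := by
  intro j
  induction j with
  | zero => omega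
  | succ j ih =>
      intro _ hjN i hi hij
      rcases Nat.eq_or_lt_of_le hij with rfl | hlt
      · exact le_refl _
      · have h1j : 1 ≤ j := by omega
        exact le_trans (ih h1j (by omega) i hi (by omega)) (hmono j h1j (by omega))

lemma step_iff (n : ℕ) (hn : 1 ≤ n) (b : ℕ → ℕ) (hb2 : 1 ≤ b 2) (x : ℝ) :
    (x ∈ Set.Ioc (0:ℝ) 1 ∧ ∀ i, 1 ≤ i → i ≤ n + 1 → ecfB i x = (b i : ℤ)) ↔
      (x ∈ Set.Ioc (0:ℝ) 1 ∧ ⌊1 / x⌋ = (b 1 : ℤ) ∧ ecfT x ∈ Set.Ioc (0:ℝ) 1 ∧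
        ∀ i, 1 ≤ i → i ≤ n → ecfB i (ecfT x) = (b (i + 1) : ℤ)) := by
  constructor
  · rintro ⟨hxI, hdig⟩
    have h1 : ⌊1 / x⌋ = (b 1 : ℤ) := by rw [← ecfB_one]; exact hdig 1 le_rfl (by omega)
    have h2 : ⌊1 / ecfT x⌋ = (b 2 : ℤ) := by
      rw [← ecfB_one, ← ecfB_succ 1 le_rfl]; exact hdig 2 (by omega) (by omega)
    have hge : (1 : ℝ) ≤ 1 / ecfT x := by
      have : (1 : ℤ) ≤ ⌊1 / ecfT x⌋ := by rw [h2]; exact_mod_cast hb2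
      exact_mod_cast le_trans (by norm_num) (Int.le_floor.mp this)
    have hTpos : 0 < ecfT x := by
      by_contra hle
      push_neg at hle
      have : 1 / ecfT x ≤ 0 := one_div_nonpos.mpr hle
      linarith
    have hT1 : ecfT x ≤ 1 := by
      have hc : 1 / ecfT x * ecfT x = 1 := one_div_mul_cancel hTpos.ne'
      nlinarith
    refine ⟨hxI, h1, ⟨hTpos, hT1⟩, fun i hi hin => ?_⟩
    rw [← ecfB_succ i hi]
    exact hdig (i + 1) (by omega) (by omega)
  · rintro ⟨hxI, hfl, hTI, hdig⟩
    refine ⟨hxI, fun i hi hin => ?_⟩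
    rcases Nat.lt_or_ge i 2 with h' | h'
    · have : i = 1 := by omega
      subst this
      rw [ecfB_one, hfl]
    · have hi1 : i = (i - 1) + 1 := by omega
      rw [hi1, ecfB_succ (i - 1) (by omega)]
      have := hdig (i - 1) (by omega) (by omega)
      rw [this]

lemma lst_cons (b : ℕ → ℕ) (m : ℕ) : lst b (m + 1) = b 1 :: lst (fun i => b (i + 1)) m := by
  simp [lst, List.range_succ_eq_map, List.map_map, Function.comp]

lemma lst_ne_nil (b : ℕ → ℕ) (m : ℕ) (hm : 1 ≤ m) : lst b m ≠ [] := by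
  have : (lst b m).length = m := by simp [lst]
  intro h
  rw [h] at this
  simp at this
  omega

lemma mem_lst (b : ℕ → ℕ) (m : ℕ) (d : ℕ) (hd : d ∈ lst b m) :
    ∃ i, i < m ∧ d = b (i + 1) := by
  simp only [lst, List.mem_map, List.mem_range] at hd
  obtain ⟨i, hi, rfl⟩ := hd
  exact ⟨i, hi, rfl⟩

set_option maxHeartbeats 2000000 in
lemma cyl_struct (n : ℕ) (hn : 1 ≤ n) : ∀ b : ℕ → ℕ,
    (∀ i, 1 ≤ i → i ≤ n → 1 ≤ b i) →
    (∀ i, 1 ≤ i → i < n → b i ≤ b (i + 1)) →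
    (Set.Ioo (min (ecfVal (lst b n)) (ecfVal (lst b (n - 1) ++ [b n + 1])))
        (max (ecfVal (lst b n)) (ecfVal (lst b (n - 1) ++ [b n + 1])))
      ⊆ {x ∈ Set.Ioc (0:ℝ) 1 | ∀ i, 1 ≤ i → i ≤ n → ecfB i x = (b i : ℤ)}) ∧
    ({x ∈ Set.Ioc (0:ℝ) 1 | ∀ i, 1 ≤ i → i ≤ n → ecfB i x = (b i : ℤ)}
      ⊆ Set.Icc (min (ecfVal (lst b n)) (ecfVal (lst b (n - 1) ++ [b n + 1])))
        (max (ecfVal (lst b n)) (ecfVal (lst b (n - 1) ++ [b n + 1])))) := by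
  induction n, hn using Nat.le_induction with
  | base =>
      intro b hpos hmono
      have hb1 : 1 ≤ b 1 := hpos 1 le_rfl le_rfl
      set β : ℝ := (b 1 : ℝ) with hβdef
      have hβ : (1:ℝ) ≤ β := by rw [hβdef]; exact_mod_cast hb1
      have hβ0 : (0:ℝ) < β := by linarith
      have hu : ecfVal (lst b 1) = 1 / β := by
        simp [lst, List.range_succ, ecfVal, hβdef]
      have hv : ecfVal (lst b 0 ++ [b 1 + 1]) = 1 / (β + 1) := by
        simp [lst, ecfVal, hβdef]
      have hlt : 1 / (β + 1) < 1 / β := by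
        apply one_div_lt_one_div_of_lt hβ0; linarith
      rw [hu, hv, min_eq_right hlt.le, max_eq_left hlt.le]
      constructor
      · rintro x ⟨hx1, hx2⟩
        have hβ1 : (0:ℝ) < β + 1 := by linarith
        have hx0 : 0 < x := lt_trans (by positivity) hx1
        have hxb : x * β < 1 := (lt_div_iff₀ hβ0).mp hx2
        have hxb1 : 1 < x * (β + 1) := (div_lt_iff₀ hβ1).mp hx1
        have hfl : ⌊1 / x⌋ = (b 1 : ℤ) := by
          rw [Int.floor_eq_iff]
          constructor
          · push_cast; rw [le_div_iff₀ hx0]; nlinarith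
          · push_cast; rw [div_lt_iff₀ hx0]; nlinarith
        refine ⟨⟨hx0, ?_⟩, fun i hi hin => ?_⟩
        · calc x ≤ 1 / β := le_of_lt hx2
            _ ≤ 1 := by rw [div_le_one hβ0]; exact hβ
        · have : i = 1 := by omega
          subst this
          rw [ecfB_one, hfl]
      · rintro x ⟨⟨hx0, hx1⟩, hdig⟩
        have hfl : ⌊1 / x⌋ = (b 1 : ℤ) := by rw [← ecfB_one]; exact hdig 1 le_rfl le_rfl
        have hβ1 : (0:ℝ) < β + 1 := by linarith
        have hle : β ≤ 1 / x := by
          have h2 : (b 1 : ℤ) ≤ ⌊1 / x⌋ := le_of_eq hfl.symm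
          rw [hβdef]
          exact_mod_cast Int.le_floor.mp h2
        have hlt' : 1 / x < β + 1 := by
          have h' := Int.lt_floor_add_one (1 / x)
          rw [hfl] at h'
          rw [hβdef]
          exact_mod_cast h'
        constructor
        · rw [div_le_iff₀ hβ1]; nlinarith [mul_one_div_cancel hx0.ne']
        · rw [le_div_iff₀ hβ0]; nlinarith [mul_one_div_cancel hx0.ne']
  | succ n hn ih =>
      intro b hpos hmono
      simp only [Nat.add_sub_cancel]
      have hb1 : 1 ≤ b 1 := hpos 1 (by omega) (by omega)
      have hb2 : 1 ≤ b 2 := hpos 2 (by omega) (by omega)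
      have hb12 : b 1 ≤ b 2 := hmono 1 (by omega) (by omega)
      set b' : ℕ → ℕ := fun i => b (i + 1) with hb'def
      obtain ⟨ih1, ih2⟩ := ih b' (fun i h1 h2 => hpos (i + 1) (by omega) (by omega))
        (fun i h1 h2 => hmono (i + 1) (by omega) (by omega))
      set u' : ℝ := ecfVal (lst b' n) with hu'def
      set v' : ℝ := ecfVal (lst b' (n - 1) ++ [b' n + 1]) with hv'def
      have hub : 0 < u' ∧ u' ≤ 1 / (b 2 : ℝ) := by
        rw [hu'def]
        apply ecfVal_pos_le (b 2) hb2 _ (lst_ne_nil b' n hn)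
        intro d hd
        obtain ⟨i, hi, rfl⟩ := mem_lst b' n d hd
        exact chain b (n + 1) hmono (i + 2) (by omega) (by omega) 2 (by omega) (by omega)
      have hvb : 0 < v' ∧ v' ≤ 1 / (b 2 : ℝ) := by
        rw [hv'def]
        apply ecfVal_pos_le (b 2) hb2 _ (by simp)
        intro d hd
        rcases List.mem_append.mp hd with hd | hd
        · obtain ⟨i, hi, rfl⟩ := mem_lst b' (n - 1) d hd
          exact chain b (n + 1) hmono (i + 2) (by omega) (by omega) 2 (by omega) (by omega)
        · have hd' : d = b (n + 1) + 1 := by simpa [hb'def] using hd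
          have hbn : b 2 ≤ b (n + 1) :=
            chain b (n + 1) hmono (n + 1) (by omega) (by omega) 2 (by omega) (by omega)
          omega
      obtain ⟨hu'0, hu'le⟩ := hub
      obtain ⟨hv'0, hv'le⟩ := hvb
      set m' := min u' v' with hm'def
      set M' := max u' v' with hM'def
      have hm'0 : 0 < m' := lt_min hu'0 hv'0
      have hm'M' : m' ≤ M' := min_le_max
      have hM'0 : 0 < M' := lt_of_lt_of_le hm'0 hm'M'
      have hM'le : M' ≤ 1 / (b 2 : ℝ) := max_le hu'le hv'le
      set β : ℝ := (b 1 : ℝ) with hβdef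
      have hβ : (1 : ℝ) ≤ β := by rw [hβdef]; exact_mod_cast hb1
      have hβ0 : (0 : ℝ) < β := by linarith
      have hM'β : β * M' ≤ 1 := by
        have h2 : β ≤ (b 2 : ℝ) := by rw [hβdef]; exact_mod_cast hb12
        have hb2' : (0 : ℝ) < (b 2 : ℝ) := by
          have : (1 : ℝ) ≤ (b 2 : ℝ) := by exact_mod_cast hb2
          linarith
        calc β * M' ≤ (b 2 : ℝ) * (1 / (b 2 : ℝ)) :=
              mul_le_mul h2 hM'le hM'0.le (by positivity)
          _ = 1 := mul_one_div_cancel hb2'.ne'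
      have hu : ecfVal (lst b (n + 1)) = 1 / (β + β * u') := by
        rw [lst_cons, ← hb'def, hβdef, hu'def]
        simp [ecfVal]
      have hv : ecfVal (lst b n ++ [b (n + 1) + 1]) = 1 / (β + β * v') := by
        have hn' : n = (n - 1) + 1 := by omega
        rw [hn', lst_cons, ← hb'def, List.cons_append, ← hn']
        rw [hβdef, hv'def]
        have hbn' : b (n + 1) = b' n := by simp [hb'def]
        rw [hbn']
        simp [ecfVal]
      clear_value b' u' v' m' M' β
      have hf : ∀ s r : ℝ, 0 ≤ s → s ≤ r → 1 / (β + β * r) ≤ 1 / (β + β * s) := by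
        intro s r hs hsr
        apply one_div_le_one_div_of_le (by nlinarith) (by nlinarith)
      have humin : 1 / (β + β * M') ≤
          min (ecfVal (lst b (n + 1))) (ecfVal (lst b n ++ [b (n + 1) + 1])) := by
        rw [hu, hv]
        exact le_min (hf u' M' hu'0.le (by rw [hM'def]; exact le_max_left _ _))
          (hf v' M' hv'0.le (by rw [hM'def]; exact le_max_right _ _))
      have humax : max (ecfVal (lst b (n + 1))) (ecfVal (lst b n ++ [b (n + 1) + 1])) ≤
          1 / (β + β * m') := by
        rw [hu, hv]
        exact max_le (hf m' u' hm'0.le (by rw [hm'def]; exact min_le_left _ _))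
          (hf m' v' hm'0.le (by rw [hm'def]; exact min_le_right _ _))
      have h1 : min (ecfVal (lst b (n + 1))) (ecfVal (lst b n ++ [b (n + 1) + 1])) ≤
          1 / (β + β * M') := by
        rcases max_choice u' v' with h | h
        · rw [hM'def, h, ← hu]; exact min_le_left _ _
        · rw [hM'def, h, ← hv]; exact min_le_right _ _
      have h2 : 1 / (β + β * m') ≤
          max (ecfVal (lst b (n + 1))) (ecfVal (lst b n ++ [b (n + 1) + 1])) := by
        rcases min_choice u' v' with h | h
        · rw [hm'def, h, ← hu]; exact le_max_left _ _
        · rw [hm'def, h, ← hv]; exact le_max_right _ _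
      constructor
      · rintro x ⟨hxlo, hxhi⟩
        have hxfM : 1 / (β + β * M') < x := lt_of_le_of_lt humin hxlo
        have hxfm : x < 1 / (β + β * m') := lt_of_lt_of_le hxhi humax
        have hdenm : (0 : ℝ) < β + β * m' := by nlinarith
        have hdenM : (0 : ℝ) < β + β * M' := by nlinarith
        have hx0 : 0 < x := lt_trans (one_div_pos.mpr hdenM) hxfM
        have hA : β + β * m' < 1 / x := by
          rw [lt_div_iff₀ hx0]
          nlinarith [(lt_div_iff₀ hdenm).mp hxfm]
        have hB : 1 / x < β + β * M' := by
          rw [div_lt_iff₀ hx0]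
          nlinarith [(div_lt_iff₀ hdenM).mp hxfM]
        set y : ℝ := (1 / x - β) / β with hydef
        have hym : m' < y := by rw [hydef, lt_div_iff₀ hβ0]; nlinarith
        have hyM : y < M' := by rw [hydef, div_lt_iff₀ hβ0]; nlinarith
        have hyB' := ih1 (Set.mem_Ioo.mpr ⟨hym, hyM⟩)
        obtain ⟨hyI, hydig⟩ := hyB'
        have hx1 : x ≤ 1 := by
          have h1b : 1 / (β + β * m') ≤ 1 / β :=
            one_div_le_one_div_of_le hβ0 (by nlinarith)
          have h1c : 1 / β ≤ 1 := by rw [div_le_one hβ0]; exact hβ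
          linarith
        have hfl : ⌊1 / x⌋ = (b 1 : ℤ) := by
          rw [Int.floor_eq_iff]
          constructor
          · push_cast
            rw [← hβdef]
            nlinarith
          · push_cast
            rw [← hβdef]
            linarith [hM'β]
        have hTx : ecfT x = y := by
          rw [ecfT, if_neg hx0.ne', hfl, hydef]
          push_cast
          rw [← hβdef]
          ring
        have := (step_iff n hn b hb2 x).mpr
          ⟨⟨hx0, hx1⟩, hfl, by rw [hTx]; exact hyI,
            fun i hi hin => by rw [hTx]; have hh := hydig i hi hin; simp only [hb'def] at hh; exact hh⟩
        exact ⟨this.1, this.2⟩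
      · rintro x ⟨hxI, hdig⟩
        obtain ⟨_, hfl, hTI, hTdig⟩ := (step_iff n hn b hb2 x).mp ⟨hxI, hdig⟩
        have hTB' : ecfT x ∈ {y ∈ Set.Ioc (0:ℝ) 1 |
            ∀ i, 1 ≤ i → i ≤ n → ecfB i y = (b' i : ℤ)} :=
          ⟨hTI, fun i hi hin => by simp only [hb'def]; exact hTdig i hi hin⟩
        obtain ⟨hTm, hTM⟩ := ih2 hTB'
        have hx0 : 0 < x := hxI.1
        have h1x : 1 / x = β + β * ecfT x := by
          rw [ecfT, if_neg hx0.ne', hfl]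
          push_cast
          rw [← hβdef]
          field_simp
          ring
        have hxeq : x = 1 / (β + β * ecfT x) := by
          rw [← h1x, one_div_one_div]
        have hT0 : 0 ≤ ecfT x := le_trans hm'0.le hTm
        constructor
        · calc min (ecfVal (lst b (n + 1))) (ecfVal (lst b n ++ [b (n + 1) + 1]))
              ≤ 1 / (β + β * M') := h1
            _ ≤ 1 / (β + β * ecfT x) := hf (ecfT x) M' hT0 hTM
            _ = x := hxeq.symm
        · calc x = 1 / (β + β * ecfT x) := hxeq
            _ ≤ 1 / (β + β * m') := hf m' (ecfT x) hm'0.le hTm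
            _ ≤ max (ecfVal (lst b (n + 1))) (ecfVal (lst b n ++ [b (n + 1) + 1])) := h2

end ECFAux
namespace ECFAux

lemma prod_lst (b : ℕ → ℕ) (m : ℕ) : (lst b m).prod = ∏ i ∈ Finset.Icc 1 m, b i := by
  induction m with
  | zero => simp [lst]
  | succ m ih =>
      rw [lst_succ, List.prod_append, ih, Finset.prod_Icc_succ_top (by omega : 1 ≤ m + 1)]
      simp

lemma lst_mem_one_le (b : ℕ → ℕ) (m : ℕ) (hpos : ∀ i, 1 ≤ i → i ≤ m → 1 ≤ b i) :
    ∀ c ∈ lst b m, 1 ≤ c := by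
  intro c hc
  obtain ⟨i, hi, rfl⟩ := mem_lst b m c hc
  exact hpos (i + 1) (by omega) (by omega)

lemma diff_formula (n : ℕ) (hn : 1 ≤ n) (b : ℕ → ℕ)
    (hpos : ∀ i, 1 ≤ i → i ≤ n → 1 ≤ b i) :
    |ecfVal (lst b n) - ecfVal (lst b (n - 1) ++ [b n + 1])|
      = (∏ i ∈ Finset.Icc 1 (n - 1), (b i : ℝ)) /
          ((ecfQ b n : ℝ) * ((ecfQ b n : ℝ) + (ecfQ b (n - 1) : ℝ))) := by
  set l : List ℕ := lst b (n - 1) with hldef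
  have hml : ∀ c ∈ l, 1 ≤ c :=
    lst_mem_one_le b (n - 1) (fun i h1 h2 => hpos i h1 (by omega))
  have hbn : 1 ≤ b n := hpos n hn le_rfl
  set t : ℝ := (b n : ℝ) with htdef
  have ht : (0 : ℝ) < t := by rw [htdef]; exact_mod_cast hbn
  have hu : ecfVal (lst b n) = ecfValT l t := by
    rw [hldef, htdef, show n = (n - 1) + 1 by omega]
    rw [lst_succ, ecfVal_append]
    norm_num
  have hv : ecfVal (lst b (n - 1) ++ [b n + 1]) = ecfValT l (t + 1) := by
    rw [hldef, htdef, ecfVal_append]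
    push_cast
    ring_nf
  obtain ⟨hd1, hrep1⟩ := ecfValT_rep l hml t ht
  obtain ⟨hd2, hrep2⟩ := ecfValT_rep l hml (t + 1) (by linarith)
  set A := (mrow l).1.1
  set B := (mrow l).1.2
  set C := (mrow l).2.1
  set D := (mrow l).2.2
  -- denominators are the continuants
  have hlen : l.length = n - 1 := by rw [hldef]; simp [lst]
  have hQn : (C : ℝ) * t + (D : ℝ) = (ecfQ b n : ℝ) := by
    have := mrow_Q b n hn
    rw [htdef]
    exact_mod_cast this
  have hQn1 : (C : ℝ) = (ecfQ b (n - 1) : ℝ) := by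
    exact_mod_cast congrArg (fun z : ℤ => (z : ℝ)) (mrow_lst b (n - 1)).1
  have hQn2 : (C : ℝ) * (t + 1) + (D : ℝ) = (ecfQ b n : ℝ) + (ecfQ b (n - 1) : ℝ) := by
    rw [← hQn, ← hQn1]; ring
  have hdiff : ecfValT l t - ecfValT l (t + 1)
      = ((B : ℝ) * C - (A : ℝ) * D) / (((C : ℝ) * t + D) * ((C : ℝ) * (t + 1) + D)) := by
    rw [hrep1, hrep2, div_sub_div _ _ hd1.ne' hd2.ne']
    congr 1
    ring
  have hdet : (B : ℝ) * C - (A : ℝ) * D = (-1 : ℝ) ^ (n - 1) * ((l.prod : ℕ) : ℝ) := by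
    have h := mrow_det l
    rw [hlen] at h
    have h2 := congrArg (fun z : ℤ => (z : ℝ)) h
    simp only [Int.cast_sub, Int.cast_mul, Int.cast_pow, Int.cast_neg, Int.cast_one,
      Int.cast_natCast] at h2
    exact h2
  have hprod : ((l.prod : ℕ) : ℝ) = ∏ i ∈ Finset.Icc 1 (n - 1), (b i : ℝ) := by
    rw [hldef, prod_lst]
    push_cast
    rfl
  rw [hu, hv, hdiff, abs_div, hdet, abs_mul, abs_pow, abs_neg, abs_one, one_pow, one_mul,
    Nat.abs_cast, abs_of_pos (mul_pos hd1 hd2), hQn, hQn2, hprod]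

end ECFAux

/-- Structure and length of cylinders: for an admissible `(b_1, …, b_n)`, the cylinder
`B(b_1,…,b_n)` is an interval with endpoints `[[b_1,…,b_n]]` and `[[b_1,…,b_{n-1},b_n+1]]`,
and its Lebesgue measure is `(∏_{i=1}^{n-1} b_i)/(Q_n (Q_n + Q_{n-1}))`. -/
theorem ecf_cylinder_structure (n : ℕ) (hn : 1 ≤ n) (b : ℕ → ℕ)
    (hpos : ∀ i, 1 ≤ i → i ≤ n → 1 ≤ b i)
    (hmono : ∀ i, 1 ≤ i → i < n → b i ≤ b (i + 1)) :
    let B : Set ℝ := {x ∈ Set.Ioc (0 : ℝ) 1 | ∀ i, 1 ≤ i → i ≤ n → ecfB i x = (b i : ℤ)}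
    let u : ℝ := ecfVal ((List.range n).map (fun i => b (i + 1)))
    let v : ℝ := ecfVal ((List.range (n - 1)).map (fun i => b (i + 1)) ++ [b n + 1])
    Set.Ioo (min u v) (max u v) ⊆ B ∧ B ⊆ Set.Icc (min u v) (max u v) ∧
    volume B = ENNReal.ofReal
      ((∏ i ∈ Finset.Icc 1 (n - 1), (b i : ℝ)) /
        ((ecfQ b n : ℝ) * ((ecfQ b n : ℝ) + (ecfQ b (n - 1) : ℝ)))) := by
  intro B u v
  obtain ⟨hsub1, hsub2⟩ := ECFAux.cyl_struct n hn b hpos hmono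
  refine ⟨hsub1, hsub2, ?_⟩
  have h3 : volume B = ENNReal.ofReal (max u v - min u v) :=
    le_antisymm (by rw [← Real.volume_Icc]; exact measure_mono hsub2)
      (by rw [← Real.volume_Ioo]; exact measure_mono hsub1)
  have h4 : max u v - min u v = |u - v| := by rw [max_sub_min_eq_abs, abs_sub_comm]
  have h5 : |u - v| = (∏ i ∈ Finset.Icc 1 (n - 1), (b i : ℝ)) /
      ((ecfQ b n : ℝ) * ((ecfQ b n : ℝ) + (ecfQ b (n - 1) : ℝ))) :=
    ECFAux.diff_formula n hn b hpos
  rw [h3, h4, h5]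
end

section
/- The partial quotient sequence of the ECF expansion is not a homogeneous Markov chain: one has P(B(1,1,2)) = 1/35, P(B(1,2,2)) = 1/44, P(B(2,2,2)) = 1/88, P(B(1,1,2,2)) = 1/133, P(B(1,2,2,2)) = 1/165 and P(B(2,2,2,2)) = 1/330, and hence P(b_4 = 2 | b_3 = 2, b_2 = 1, b_1 = 1) = 5/19 ≠ 972/3667 = P(b_4 = 2 | b_3 = 2), where the conditional probabilities are quotients P(A ∩ B)/P(B) of Lebesgue measures of the corresponding events. -/
open MeasureTheory Set

/-- The cylinder `B(b_1, …, b_n)` associated to a finite block given as a list. -/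
noncomputable def ecfCyl (l : List ℕ) : Set ℝ :=
  {x ∈ Set.Ioc (0 : ℝ) 1 | ∀ i : ℕ, ∀ h : i < l.length, ecfB (i + 1) x = (l.get ⟨i, h⟩ : ℤ)}

lemma floor_eq_iff_mem (b : ℤ) (hb : 1 ≤ b) (x : ℝ) (hx : 0 < x) :
    ⌊1/x⌋ = b ↔ x ∈ Ioc (1/((b:ℝ)+1)) (1/(b:ℝ)) := by
  have hb0 : (0:ℝ) < b := by exact_mod_cast hb
  have hx1 : 1/x * x = 1 := by field_simp
  rw [Int.floor_eq_iff]
  constructor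
  · rintro ⟨h1, h2⟩
    push_cast at h2
    constructor
    · rw [div_lt_iff₀ (by positivity : (0:ℝ) < (b:ℝ)+1)]
      nlinarith [mul_lt_mul_of_pos_right h2 hx]
    · rw [le_div_iff₀ hb0]
      nlinarith [mul_le_mul_of_nonneg_right h1 hx.le]
  · rintro ⟨h1, h2⟩
    have hbx : (b:ℝ) * x ≤ 1 := by
      rw [le_div_iff₀ hb0] at h2; linarith [h2]
    have hbx2 : 1 < ((b:ℝ)+1) * x := by
      rw [div_lt_iff₀ (by positivity : (0:ℝ) < (b:ℝ)+1)] at h1; linarith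
    constructor
    · rw [le_div_iff₀ hx]; exact hbx
    · push_cast
      rw [div_lt_iff₀ hx]
      exact hbx2

lemma ecfT_eq (b : ℤ) (hb : 1 ≤ b) (x : ℝ) (hx : x ∈ Ioc (1/((b:ℝ)+1)) (1/(b:ℝ))) :
    ecfT x = 1/((b:ℝ)*x) - 1 := by
  have hb0 : (0:ℝ) < b := by exact_mod_cast hb
  have hx0 : 0 < x := lt_trans (by positivity) hx.1
  have hfl : ⌊1/x⌋ = b := (floor_eq_iff_mem b hb x hx0).2 hx
  rw [ecfT, if_neg hx0.ne', hfl]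
  field_simp

lemma ecfT_mem_Ico (x : ℝ) (hx : x ∈ Icc (0:ℝ) 1) : ecfT x ∈ Ico (0:ℝ) 1 := by
  rcases eq_or_lt_of_le hx.1 with h | h
  · simp [ecfT, ← h]
  · have hx1 : (1:ℝ) ≤ 1/x := by
      rw [le_div_iff₀ h]; simpa using hx.2
    have hb : 1 ≤ ⌊1/x⌋ := by exact_mod_cast Int.le_floor.2 (by exact_mod_cast hx1)
    have hb0 : (0:ℝ) < (⌊1/x⌋:ℤ) := by exact_mod_cast hb
    have h1 : (0:ℝ) ≤ 1/x - ⌊1/x⌋ := by linarith [Int.floor_le (1/x)]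
    have h2 : (1/x - (⌊1/x⌋:ℝ)) < 1 := by linarith [Int.lt_floor_add_one (1/x)]
    rw [ecfT, if_neg h.ne']
    constructor
    · positivity
    · calc 1 / (⌊1/x⌋:ℝ) * (1/x - ⌊1/x⌋) < 1 / (⌊1/x⌋:ℝ) * 1 := by
            apply mul_lt_mul_of_pos_left h2 (by positivity)
        _ ≤ 1 := by rw [mul_one]; rw [div_le_one hb0]; exact_mod_cast hb

lemma iter_mem_Icc (x : ℝ) (hx : x ∈ Ioc (0:ℝ) 1) (n : ℕ) : ecfT^[n] x ∈ Icc (0:ℝ) 1 := by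
  induction n with
  | zero => exact ⟨hx.1.le, hx.2⟩
  | succ n ih =>
    rw [Function.iterate_succ_apply']
    exact Ico_subset_Icc_self (ecfT_mem_Ico _ ih)

lemma digit_step (t : ℝ) (ht : t ∈ Icc (0:ℝ) 1) (h1 : 1 ≤ ⌊1/ecfT t⌋) :
    t ∈ Ioc (0:ℝ) 1 ∧ 1 ≤ ⌊1/t⌋ ∧ ⌊1/t⌋ ≤ ⌊1/ecfT t⌋ := by
  set s := ecfT t with hs
  have hs1 : (1:ℝ) ≤ 1/s := by exact_mod_cast (Int.le_floor.1 h1)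
  have hs0 : 0 < s := by
    by_contra h
    push_neg at h
    rcases eq_or_lt_of_le h with h' | h'
    · rw [h'] at hs1; norm_num at hs1
    · have : 1/s < 0 := by exact div_neg_of_pos_of_neg one_pos h'
      linarith
  have ht0 : t ≠ 0 := by
    intro h
    rw [h] at hs
    simp [ecfT] at hs
    rw [hs] at hs0; exact lt_irrefl _ hs0
  have ht0' : 0 < t := lt_of_le_of_ne ht.1 (Ne.symm ht0)
  have hx1 : (1:ℝ) ≤ 1/t := by
    rw [le_div_iff₀ ht0']; simpa using ht.2
  have hb : 1 ≤ ⌊1/t⌋ := Int.le_floor.2 (by exact_mod_cast hx1)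
  have hb0 : (0:ℝ) < (⌊1/t⌋:ℤ) := by exact_mod_cast hb
  refine ⟨⟨ht0', ht.2⟩, hb, ?_⟩
  -- s < 1/⌊1/t⌋, hence ⌊1/t⌋ < 1/s hence ⌊1/t⌋ ≤ ⌊1/s⌋
  have h2 : (1/t - (⌊1/t⌋:ℝ)) < 1 := by linarith [Int.lt_floor_add_one (1/t)]
  have hslt : s < 1 / (⌊1/t⌋:ℝ) := by
    rw [hs, ecfT, if_neg ht0]
    calc 1 / (⌊1/t⌋:ℝ) * (1/t - ⌊1/t⌋) < 1 / (⌊1/t⌋:ℝ) * 1 :=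
          mul_lt_mul_of_pos_left h2 (by positivity)
      _ = 1 / (⌊1/t⌋:ℝ) := mul_one _
  have : (⌊1/t⌋:ℝ) < 1/s := by
    rw [lt_div_iff₀ hs0]
    rw [lt_div_iff₀ hb0] at hslt
    linarith
  exact Int.le_floor.2 (le_of_lt this)

lemma mem_Ioc_of_floor (s : ℝ) (h : 1 ≤ ⌊1/s⌋) : s ∈ Ioc (0:ℝ) 1 := by
  have hs1 : (1:ℝ) ≤ 1/s := by exact_mod_cast (Int.le_floor.1 h)
  have hs0 : 0 < s := by
    by_contra hc
    push_neg at hc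
    rcases eq_or_lt_of_le hc with h' | h'
    · rw [h'] at hs1; norm_num at hs1
    · have : 1/s < 0 := div_neg_of_pos_of_neg one_pos h'
      linarith
  refine ⟨hs0, ?_⟩
  rw [le_div_iff₀ hs0, one_mul] at hs1
  exact hs1

lemma ecfB_one (x : ℝ) : ecfB 1 x = ⌊1/x⌋ := rfl

lemma ecfB_add_one (n : ℕ) (hn : n ≠ 0) (x : ℝ) : ecfB (n+1) x = ecfB n (ecfT x) := by
  obtain ⟨m, rfl⟩ := Nat.exists_eq_succ_of_ne_zero hn
  simp [ecfB, Function.iterate_succ_apply]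

lemma cyl_single (b : ℕ) (hb : 1 ≤ b) : ecfCyl [b] = Ioc (1/((b:ℝ)+1)) (1/(b:ℝ)) := by
  have hb' : 1 ≤ (b:ℤ) := by exact_mod_cast hb
  have hb0 : (0:ℝ) < b := by exact_mod_cast hb
  ext x
  simp only [ecfCyl, Set.mem_setOf_eq, List.length_singleton]
  constructor
  · rintro ⟨hx, hall⟩
    have h0 := hall 0 (by norm_num)
    rw [ecfB_one] at h0
    exact (floor_eq_iff_mem b hb' x hx.1).1 (by exact_mod_cast h0)
  · intro hx
    have hx0 : 0 < x := lt_trans (by positivity) hx.1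
    have hx1 : x ≤ 1 := le_trans hx.2 (by rw [div_le_one hb0]; exact_mod_cast hb)
    refine ⟨⟨hx0, hx1⟩, ?_⟩
    intro i hi
    interval_cases i
    rw [ecfB_one]
    simp only [List.get]
    exact_mod_cast (floor_eq_iff_mem b hb' x hx0).2 hx

lemma cyl_cons (b c : ℕ) (hb : 1 ≤ b) (hc : 1 ≤ c) (l : List ℕ) :
    ecfCyl (b::c::l) = Ioc (1/((b:ℝ)+1)) (1/(b:ℝ)) ∩ ecfT ⁻¹' ecfCyl (c::l) := by
  have hb' : 1 ≤ (b:ℤ) := by exact_mod_cast hb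
  have hb0 : (0:ℝ) < b := by exact_mod_cast hb
  ext x
  simp only [ecfCyl, Set.mem_setOf_eq, Set.mem_inter_iff, Set.mem_preimage,
    List.length_cons]
  constructor
  · rintro ⟨hx, hall⟩
    have h0 := hall 0 (by omega)
    rw [ecfB_one] at h0
    have hxmem : x ∈ Ioc (1/((b:ℝ)+1)) (1/(b:ℝ)) :=
      (floor_eq_iff_mem b hb' x hx.1).1 (by exact_mod_cast h0)
    have h1 := hall 1 (by omega)
    rw [ecfB_add_one 1 one_ne_zero, ecfB_one] at h1
    have hTc : 1 ≤ ⌊1/ecfT x⌋ := by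
      rw [h1]; exact_mod_cast hc
    refine ⟨hxmem, mem_Ioc_of_floor _ hTc, ?_⟩
    intro i hi
    have := hall (i+1) (by omega)
    rw [ecfB_add_one (i+1) (by omega)] at this
    simpa using this
  · rintro ⟨hxmem, hT, hall⟩
    have hx0 : 0 < x := lt_trans (by positivity) hxmem.1
    have hx1 : x ≤ 1 := le_trans hxmem.2 (by rw [div_le_one hb0]; exact_mod_cast hb)
    refine ⟨⟨hx0, hx1⟩, ?_⟩
    intro i hi
    by_cases hi0 : i = 0
    · subst hi0
      rw [ecfB_one]
      simpa using (floor_eq_iff_mem b hb' x hx0).2 hxmem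
    · obtain ⟨j, rfl⟩ := Nat.exists_eq_succ_of_ne_zero hi0
      rw [ecfB_add_one (j+1) (by omega)]
      have := hall j (by omega)
      simpa using this

section Steps

variable (b : ℕ)

lemma T_iffs (hb : 1 ≤ b) (u : ℝ) (hu : 0 ≤ u) (x : ℝ)
    (hx : x ∈ Ioc (1/((b:ℝ)+1)) (1/(b:ℝ))) :
    (u < ecfT x ↔ x < 1/((b:ℝ)*(1+u))) ∧ (u ≤ ecfT x ↔ x ≤ 1/((b:ℝ)*(1+u))) ∧
    (ecfT x < u ↔ 1/((b:ℝ)*(1+u)) < x) ∧ (ecfT x ≤ u ↔ 1/((b:ℝ)*(1+u)) ≤ x) := by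
  have hb' : 1 ≤ (b:ℤ) := by exact_mod_cast hb
  have hb0 : (0:ℝ) < b := by exact_mod_cast hb
  have hx0 : 0 < x := lt_trans (by positivity) hx.1
  have hbx : 0 < (b:ℝ)*x := by positivity
  have hk : 0 < (b:ℝ)*(1+u) := mul_pos hb0 (by linarith)
  have hT : ecfT x = 1/((b:ℝ)*x) - 1 := ecfT_eq b hb' x hx
  rw [hT]
  refine ⟨?_, ?_, ?_, ?_⟩
  · rw [lt_sub_iff_add_lt, lt_div_iff₀ hbx, lt_div_iff₀ hk,
      show (u+1)*((b:ℝ)*x) = x*((b:ℝ)*(1+u)) from by ring]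
  · rw [le_sub_iff_add_le, le_div_iff₀ hbx, le_div_iff₀ hk,
      show (u+1)*((b:ℝ)*x) = x*((b:ℝ)*(1+u)) from by ring]
  · rw [sub_lt_iff_lt_add, div_lt_iff₀ hbx, div_lt_iff₀ hk,
      show (u+1)*((b:ℝ)*x) = x*((b:ℝ)*(1+u)) from by ring]
  · rw [sub_le_iff_le_add, div_le_iff₀ hbx, div_le_iff₀ hk,
      show (u+1)*((b:ℝ)*x) = x*((b:ℝ)*(1+u)) from by ring]

lemma stepIoc (hb : 1 ≤ b) (u v : ℝ) (hu : 0 ≤ u) (hv : 0 ≤ v) :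
    Ioc (1/((b:ℝ)+1)) (1/(b:ℝ)) ∩ ecfT ⁻¹' (Ioc u v) =
    Ioc (1/((b:ℝ)+1)) (1/(b:ℝ)) ∩ Ico (1/((b:ℝ)*(1+v))) (1/((b:ℝ)*(1+u))) := by
  ext x
  simp only [mem_inter_iff, mem_preimage]
  refine and_congr_right fun hx => ?_
  rw [mem_Ioc, mem_Ico, (T_iffs b hb u hu x hx).1, (T_iffs b hb v hv x hx).2.2.2]
  exact and_comm

lemma stepIco (hb : 1 ≤ b) (u v : ℝ) (hu : 0 ≤ u) (hv : 0 ≤ v) :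
    Ioc (1/((b:ℝ)+1)) (1/(b:ℝ)) ∩ ecfT ⁻¹' (Ico u v) =
    Ioc (1/((b:ℝ)+1)) (1/(b:ℝ)) ∩ Ioc (1/((b:ℝ)*(1+v))) (1/((b:ℝ)*(1+u))) := by
  ext x
  simp only [mem_inter_iff, mem_preimage]
  refine and_congr_right fun hx => ?_
  rw [mem_Ico, mem_Ioc, (T_iffs b hb u hu x hx).2.1, (T_iffs b hb v hv x hx).2.2.1]
  exact and_comm

lemma stepIoo (hb : 1 ≤ b) (u v : ℝ) (hu : 0 ≤ u) (hv : 0 ≤ v) :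
    Ioc (1/((b:ℝ)+1)) (1/(b:ℝ)) ∩ ecfT ⁻¹' (Ioo u v) =
    Ioc (1/((b:ℝ)+1)) (1/(b:ℝ)) ∩ Ioo (1/((b:ℝ)*(1+v))) (1/((b:ℝ)*(1+u))) := by
  ext x
  simp only [mem_inter_iff, mem_preimage]
  refine and_congr_right fun hx => ?_
  rw [mem_Ioo, mem_Ioo, (T_iffs b hb u hu x hx).1, (T_iffs b hb v hv x hx).2.2.1]
  exact and_comm

end Steps

lemma c2 : ecfCyl [2] = Ioc (1/3 : ℝ) (1/2) := by
  rw [cyl_single 2 (by norm_num)]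
  norm_num

lemma c1 : ecfCyl [1] = Ioc (1/2 : ℝ) 1 := by
  rw [cyl_single 1 (by norm_num)]
  norm_num

lemma c12 : ecfCyl [1,2] = Ico (2/3 : ℝ) (3/4) := by
  rw [cyl_cons 1 2 (by norm_num) (by norm_num), c2,
    stepIoc 1 (by norm_num) _ _ (by norm_num) (by norm_num)]
  ext x
  simp only [mem_inter_iff, mem_Ioc, mem_Ico]
  norm_num
  intro h1 h2
  exact ⟨by linarith, by linarith⟩

lemma c22 : ecfCyl [2,2] = Ioo (1/3 : ℝ) (3/8) := by
  rw [cyl_cons 2 2 (by norm_num) (by norm_num), c2,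
    stepIoc 2 (by norm_num) _ _ (by norm_num) (by norm_num)]
  ext x
  simp only [mem_inter_iff, mem_Ioc, mem_Ico, mem_Ioo]
  norm_num
  constructor
  · rintro ⟨⟨h1, h2⟩, h3, h4⟩
    exact ⟨by linarith, by linarith⟩
  · rintro ⟨h1, h2⟩
    exact ⟨⟨by linarith, by linarith⟩, by linarith, by linarith⟩

lemma c112 : ecfCyl [1,1,2] = Ioc (4/7 : ℝ) (3/5) := by
  rw [cyl_cons 1 1 (by norm_num) (by norm_num), c12,
    stepIco 1 (by norm_num) _ _ (by norm_num) (by norm_num)]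
  ext x
  simp only [mem_inter_iff, mem_Ioc]
  norm_num
  intro h1 h2
  exact ⟨by linarith, by linarith⟩

lemma c122 : ecfCyl [1,2,2] = Ioo (8/11 : ℝ) (3/4) := by
  rw [cyl_cons 1 2 (by norm_num) (by norm_num), c22,
    stepIoo 1 (by norm_num) _ _ (by norm_num) (by norm_num)]
  ext x
  simp only [mem_inter_iff, mem_Ioc, mem_Ioo]
  norm_num
  intro h1 h2
  exact ⟨by linarith, by linarith⟩

lemma c222 : ecfCyl [2,2,2] = Ioo (4/11 : ℝ) (3/8) := by
  rw [cyl_cons 2 2 (by norm_num) (by norm_num), c22,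
    stepIoo 2 (by norm_num) _ _ (by norm_num) (by norm_num)]
  ext x
  simp only [mem_inter_iff, mem_Ioc, mem_Ioo]
  norm_num
  intro h1 h2
  exact ⟨by linarith, by linarith⟩

lemma c1122 : ecfCyl [1,1,2,2] = Ioo (4/7 : ℝ) (11/19) := by
  rw [cyl_cons 1 1 (by norm_num) (by norm_num), c122,
    stepIoo 1 (by norm_num) _ _ (by norm_num) (by norm_num)]
  ext x
  simp only [mem_inter_iff, mem_Ioc, mem_Ioo]
  norm_num
  intro h1 h2
  exact ⟨by linarith, by linarith⟩

lemma c1222 : ecfCyl [1,2,2,2] = Ioo (8/11 : ℝ) (11/15) := by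
  rw [cyl_cons 1 2 (by norm_num) (by norm_num), c222,
    stepIoo 1 (by norm_num) _ _ (by norm_num) (by norm_num)]
  ext x
  simp only [mem_inter_iff, mem_Ioc, mem_Ioo]
  norm_num
  intro h1 h2
  exact ⟨by linarith, by linarith⟩

lemma c2222 : ecfCyl [2,2,2,2] = Ioo (4/11 : ℝ) (11/30) := by
  rw [cyl_cons 2 2 (by norm_num) (by norm_num), c222,
    stepIoo 2 (by norm_num) _ _ (by norm_num) (by norm_num)]
  ext x
  simp only [mem_inter_iff, mem_Ioc, mem_Ioo]
  norm_num
  intro h1 h2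
  exact ⟨by linarith, by linarith⟩

lemma iter2 (x : ℝ) : ecfT^[2] x = ecfT (ecfT x) := by
  rw [show (2:ℕ) = 1+1 from rfl, Function.iterate_succ_apply', Function.iterate_one]

lemma iter3 (x : ℝ) : ecfT^[3] x = ecfT (ecfT (ecfT x)) := by
  rw [show (3:ℕ) = 2+1 from rfl, Function.iterate_succ_apply', iter2]

lemma ecfB2_eq (x : ℝ) : ecfB 2 x = ⌊1/ecfT x⌋ := by
  simp [ecfB]

lemma ecfB3_eq (x : ℝ) : ecfB 3 x = ⌊1/ecfT (ecfT x)⌋ := by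
  simp only [ecfB, show (3:ℕ)-1 = 2 from rfl, iter2]

lemma ecfB4_eq (x : ℝ) : ecfB 4 x = ⌊1/ecfT (ecfT (ecfT x))⌋ := by
  simp only [ecfB, show (4:ℕ)-1 = 3 from rfl, iter3]

lemma mem_cyl3 (x : ℝ) (hx : x ∈ Ioc (0:ℝ) 1) (d1 d2 d3 : ℕ)
    (h1 : ⌊1/x⌋ = (d1:ℤ)) (h2 : ⌊1/ecfT x⌋ = (d2:ℤ)) (h3 : ⌊1/ecfT (ecfT x)⌋ = (d3:ℤ)) :
    x ∈ ecfCyl [d1, d2, d3] := by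
  refine ⟨hx, ?_⟩
  intro i hi
  simp only [List.length_cons, List.length_nil] at hi
  interval_cases i
  · rw [ecfB_one, h1]; rfl
  · rw [ecfB2_eq, h2]; rfl
  · rw [ecfB3_eq, h3]; rfl

lemma mem_cyl4 (x : ℝ) (hx : x ∈ Ioc (0:ℝ) 1) (d1 d2 d3 d4 : ℕ)
    (h1 : ⌊1/x⌋ = (d1:ℤ)) (h2 : ⌊1/ecfT x⌋ = (d2:ℤ)) (h3 : ⌊1/ecfT (ecfT x)⌋ = (d3:ℤ))
    (h4 : ⌊1/ecfT (ecfT (ecfT x))⌋ = (d4:ℤ)) :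
    x ∈ ecfCyl [d1, d2, d3, d4] := by
  refine ⟨hx, ?_⟩
  intro i hi
  simp only [List.length_cons, List.length_nil] at hi
  interval_cases i
  · rw [ecfB_one, h1]; rfl
  · rw [ecfB2_eq, h2]; rfl
  · rw [ecfB3_eq, h3]; rfl
  · rw [ecfB4_eq, h4]; rfl

lemma b3set : {x ∈ Ioc (0:ℝ) 1 | ecfB 3 x = 2} =
    ecfCyl [1,1,2] ∪ ecfCyl [1,2,2] ∪ ecfCyl [2,2,2] := by
  ext x
  constructor
  · rintro ⟨hx, h3⟩
    rw [ecfB3_eq] at h3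
    have hT1 : ecfT x ∈ Icc (0:ℝ) 1 := Ico_subset_Icc_self (ecfT_mem_Ico x (Ioc_subset_Icc_self hx))
    have hd2 := digit_step (ecfT x) hT1 (by rw [h3]; norm_num)
    have hd1 := digit_step x (Ioc_subset_Icc_self hx) hd2.2.1
    have hb2le : ⌊1/ecfT x⌋ ≤ 2 := by rw [← h3]; exact hd2.2.2
    have hb1le : ⌊1/x⌋ ≤ ⌊1/ecfT x⌋ := hd1.2.2
    have hb1 : 1 ≤ ⌊1/x⌋ := hd1.2.1
    have hb2 : 1 ≤ ⌊1/ecfT x⌋ := hd2.2.1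
    rcases (show ⌊1/ecfT x⌋ = 1 ∨ ⌊1/ecfT x⌋ = 2 by omega) with h2 | h2
    · have h1 : ⌊1/x⌋ = 1 := by omega
      exact Or.inl (Or.inl (mem_cyl3 x hx 1 1 2 (by exact_mod_cast h1) (by exact_mod_cast h2) (by exact_mod_cast h3)))
    · rcases (show ⌊1/x⌋ = 1 ∨ ⌊1/x⌋ = 2 by omega) with h1 | h1
      · exact Or.inl (Or.inr (mem_cyl3 x hx 1 2 2 (by exact_mod_cast h1) (by exact_mod_cast h2) (by exact_mod_cast h3)))
      · exact Or.inr (mem_cyl3 x hx 2 2 2 (by exact_mod_cast h1) (by exact_mod_cast h2) (by exact_mod_cast h3))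
  · rintro ((⟨hx, hall⟩ | ⟨hx, hall⟩) | ⟨hx, hall⟩) <;>
      exact ⟨hx, by simpa using hall 2 (by norm_num)⟩

lemma b4set : {x ∈ Ioc (0:ℝ) 1 | ecfB 4 x = 2 ∧ ecfB 3 x = 2} =
    ecfCyl [1,1,2,2] ∪ ecfCyl [1,2,2,2] ∪ ecfCyl [2,2,2,2] := by
  ext x
  constructor
  · rintro ⟨hx, h4, h3⟩
    rw [ecfB3_eq] at h3
    rw [ecfB4_eq] at h4
    have hT1 : ecfT x ∈ Icc (0:ℝ) 1 := Ico_subset_Icc_self (ecfT_mem_Ico x (Ioc_subset_Icc_self hx))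
    have hd2 := digit_step (ecfT x) hT1 (by rw [h3]; norm_num)
    have hd1 := digit_step x (Ioc_subset_Icc_self hx) hd2.2.1
    have hb2le : ⌊1/ecfT x⌋ ≤ 2 := by rw [← h3]; exact hd2.2.2
    have hb1le : ⌊1/x⌋ ≤ ⌊1/ecfT x⌋ := hd1.2.2
    have hb1 : 1 ≤ ⌊1/x⌋ := hd1.2.1
    have hb2 : 1 ≤ ⌊1/ecfT x⌋ := hd2.2.1
    rcases (show ⌊1/ecfT x⌋ = 1 ∨ ⌊1/ecfT x⌋ = 2 by omega) with h2 | h2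
    · have h1 : ⌊1/x⌋ = 1 := by omega
      exact Or.inl (Or.inl (mem_cyl4 x hx 1 1 2 2 (by exact_mod_cast h1) (by exact_mod_cast h2) (by exact_mod_cast h3) (by exact_mod_cast h4)))
    · rcases (show ⌊1/x⌋ = 1 ∨ ⌊1/x⌋ = 2 by omega) with h1 | h1
      · exact Or.inl (Or.inr (mem_cyl4 x hx 1 2 2 2 (by exact_mod_cast h1) (by exact_mod_cast h2) (by exact_mod_cast h3) (by exact_mod_cast h4)))
      · exact Or.inr (mem_cyl4 x hx 2 2 2 2 (by exact_mod_cast h1) (by exact_mod_cast h2) (by exact_mod_cast h3) (by exact_mod_cast h4))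
  · rintro ((⟨hx, hall⟩ | ⟨hx, hall⟩) | ⟨hx, hall⟩) <;>
      exact ⟨hx, by simpa using hall 3 (by norm_num), by simpa using hall 2 (by norm_num)⟩

lemma v112 : volume (ecfCyl [1,1,2]) = (35:ENNReal)⁻¹ := by
  rw [c112, Real.volume_Ioc, show (3/5 - 4/7 : ℝ) = (35:ℝ)⁻¹ by norm_num,
    ENNReal.ofReal_inv_of_pos (by norm_num), ENNReal.ofReal_ofNat]

lemma v122 : volume (ecfCyl [1,2,2]) = (44:ENNReal)⁻¹ := by
  rw [c122, Real.volume_Ioo, show (3/4 - 8/11 : ℝ) = (44:ℝ)⁻¹ by norm_num,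
    ENNReal.ofReal_inv_of_pos (by norm_num), ENNReal.ofReal_ofNat]

lemma v222 : volume (ecfCyl [2,2,2]) = (88:ENNReal)⁻¹ := by
  rw [c222, Real.volume_Ioo, show (3/8 - 4/11 : ℝ) = (88:ℝ)⁻¹ by norm_num,
    ENNReal.ofReal_inv_of_pos (by norm_num), ENNReal.ofReal_ofNat]

lemma v1122 : volume (ecfCyl [1,1,2,2]) = (133:ENNReal)⁻¹ := by
  rw [c1122, Real.volume_Ioo, show (11/19 - 4/7 : ℝ) = (133:ℝ)⁻¹ by norm_num,
    ENNReal.ofReal_inv_of_pos (by norm_num), ENNReal.ofReal_ofNat]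

lemma v1222 : volume (ecfCyl [1,2,2,2]) = (165:ENNReal)⁻¹ := by
  rw [c1222, Real.volume_Ioo, show (11/15 - 8/11 : ℝ) = (165:ℝ)⁻¹ by norm_num,
    ENNReal.ofReal_inv_of_pos (by norm_num), ENNReal.ofReal_ofNat]

lemma v2222 : volume (ecfCyl [2,2,2,2]) = (330:ENNReal)⁻¹ := by
  rw [c2222, Real.volume_Ioo, show (11/30 - 4/11 : ℝ) = (330:ℝ)⁻¹ by norm_num,
    ENNReal.ofReal_inv_of_pos (by norm_num), ENNReal.ofReal_ofNat]

lemma vol3 : volume {x ∈ Ioc (0:ℝ) 1 | ecfB 3 x = 2} = ENNReal.ofReal (193/3080 : ℝ) := by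
  rw [b3set, c112, c122, c222]
  rw [measure_union ?d1 measurableSet_Ioo, measure_union ?d2 measurableSet_Ioo]
  case d1 =>
    rw [Set.disjoint_left]
    rintro a (⟨h1, h2⟩ | ⟨h1, h2⟩) ⟨h3, h4⟩ <;> linarith
  case d2 =>
    rw [Set.disjoint_left]
    rintro a ⟨h1, h2⟩ ⟨h3, h4⟩
    linarith
  rw [Real.volume_Ioc, Real.volume_Ioo, Real.volume_Ioo,
    ← ENNReal.ofReal_add (by norm_num) (by norm_num),
    ← ENNReal.ofReal_add (by norm_num) (by norm_num)]
  norm_num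

lemma vol4 : volume {x ∈ Ioc (0:ℝ) 1 | ecfB 4 x = 2 ∧ ecfB 3 x = 2} =
    ENNReal.ofReal (243/14630 : ℝ) := by
  rw [b4set, c1122, c1222, c2222]
  rw [measure_union ?d1 measurableSet_Ioo, measure_union ?d2 measurableSet_Ioo]
  case d1 =>
    rw [Set.disjoint_left]
    rintro a (⟨h1, h2⟩ | ⟨h1, h2⟩) ⟨h3, h4⟩ <;> linarith
  case d2 =>
    rw [Set.disjoint_left]
    rintro a ⟨h1, h2⟩ ⟨h3, h4⟩
    linarith
  rw [Real.volume_Ioo, Real.volume_Ioo, Real.volume_Ioo,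
    ← ENNReal.ofReal_add (by norm_num) (by norm_num),
    ← ENNReal.ofReal_add (by norm_num) (by norm_num)]
  norm_num


/-- The ECF partial quotient sequence is not a homogeneous Markov chain: explicit cylinder
measures give `P(b_4 = 2 | b_3 = 2, b_2 = 1, b_1 = 1) = 5/19 ≠ 972/3667 = P(b_4 = 2 | b_3 = 2)`. -/
theorem ecf_not_markov :
    volume (ecfCyl [1, 1, 2]) = (35 : ENNReal)⁻¹ ∧
    volume (ecfCyl [1, 2, 2]) = (44 : ENNReal)⁻¹ ∧
    volume (ecfCyl [2, 2, 2]) = (88 : ENNReal)⁻¹ ∧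
    volume (ecfCyl [1, 1, 2, 2]) = (133 : ENNReal)⁻¹ ∧
    volume (ecfCyl [1, 2, 2, 2]) = (165 : ENNReal)⁻¹ ∧
    volume (ecfCyl [2, 2, 2, 2]) = (330 : ENNReal)⁻¹ ∧
    volume (ecfCyl [1, 1, 2, 2]) / volume (ecfCyl [1, 1, 2]) = (5 : ENNReal) / 19 ∧
    volume {x ∈ Set.Ioc (0 : ℝ) 1 | ecfB 4 x = 2 ∧ ecfB 3 x = 2} /
        volume {x ∈ Set.Ioc (0 : ℝ) 1 | ecfB 3 x = 2} = (972 : ENNReal) / 3667 ∧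
    (5 : ENNReal) / 19 ≠ (972 : ENNReal) / 3667 := by
  refine ⟨v112, v122, v222, v1122, v1222, v2222, ?_, ?_, ?_⟩
  · rw [v1122, v112, div_eq_mul_inv, inv_inv, mul_comm, ← div_eq_mul_inv,
      ENNReal.div_eq_div_iff (by norm_num) (by simp) (by norm_num) (by simp)]
    norm_num
  · rw [vol4, vol3, ← ENNReal.ofReal_div_of_pos (by norm_num),
      show ((243/14630)/(193/3080) : ℝ) = 972/3667 by norm_num,
      ENNReal.ofReal_div_of_pos (by norm_num), ENNReal.ofReal_ofNat, ENNReal.ofReal_ofNat]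
  · rw [Ne, ENNReal.div_eq_div_iff (by norm_num) (by simp) (by norm_num) (by simp)]
    norm_num
end

section
/- Near-Markov property of ECF partial quotients: for every positive integer j, P(b_1 = j) = 1/(j(j+1)); and for all integers k ≥ j ≥ 1 and all n ≥ 1, j/(k(k+2)) ≤ P(b_{n+1} = k | b_n = j) ≤ (j+1)/(k(k+1)), where P(b_{n+1} = k | b_n = j) = P({b_{n+1} = k} ∩ {b_n = j}) / P(b_n = j). -/
open MeasureTheory Set

/-- Lebesgue measure on `(0,1]`. -/
noncomputable def ecfP : Measure ℝ := volume.restrict (Set.Ioc 0 1)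

lemma measurable_ecfT : Measurable ecfT := by
  have h1 : Measurable fun x : ℝ => 1 / x := by
    simp only [one_div]; exact measurable_inv
  have h2 : Measurable fun x : ℝ => ((⌊1 / x⌋ : ℤ) : ℝ) :=
    measurable_from_top.comp (Int.measurable_floor.comp h1)
  unfold ecfT
  exact Measurable.ite (MeasurableSet.singleton 0) measurable_const
    (((measurable_const.div h2)).mul (h1.sub h2))

lemma floor_one_div_eq {j : ℕ} (hj : 1 ≤ j) {y : ℝ} :
    ⌊1 / y⌋ = (j : ℤ) ↔ y ∈ Ioc (1 / ((j : ℝ) + 1)) (1 / (j : ℝ)) := by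
  have hj0 : (0:ℝ) < j := by exact_mod_cast hj
  rw [Int.floor_eq_iff]
  push_cast
  constructor
  · rintro ⟨h1, h2⟩
    have hy : 0 < y := by
      rcases lt_trichotomy y 0 with h | h | h
      · have : 1 / y < 0 := by exact one_div_neg.mpr h
        linarith
      · subst h; simp at h1; linarith
      · exact h
    rw [le_div_iff₀ hy] at h1
    rw [div_lt_iff₀ hy] at h2
    constructor
    · rw [div_lt_iff₀ (by positivity)]; nlinarith
    · rw [le_div_iff₀ hj0]; nlinarith
  · rintro ⟨h1, h2⟩
    have hy : 0 < y := lt_trans (by positivity) h1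
    rw [div_lt_iff₀ (by positivity)] at h1
    rw [le_div_iff₀ hj0] at h2
    constructor
    · rw [le_div_iff₀ hy]; nlinarith
    · rw [div_lt_iff₀ hy]; nlinarith

lemma ecfT_eq_s9 {j : ℕ} (hj : 1 ≤ j) {y : ℝ}
    (hy : y ∈ Ioc (1 / ((j : ℝ) + 1)) (1 / (j : ℝ))) :
    ecfT y = (1 / y - j) / j := by
  have hj0 : (0:ℝ) < j := by exact_mod_cast hj
  have hy0 : 0 < y := lt_trans (by positivity) hy.1
  have hfl : ⌊1 / y⌋ = (j : ℤ) := (floor_one_div_eq hj).mpr hy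
  unfold ecfT
  rw [if_neg (ne_of_gt hy0), hfl]
  push_cast
  rw [one_div_mul_eq_div]

/-- component measure -/
noncomputable def cm (b : ℕ) (C D c : ℝ) : Measure ℝ :=
  (volume.restrict (Ioo 0 (1 / (b : ℝ)))).withDensity
    (fun t => ENNReal.ofReal (c / (C * t + D) ^ 2))

lemma cm_ac {b : ℕ} {C D c : ℝ} : cm b C D c ≪ volume := by
  unfold cm
  exact (withDensity_absolutelyContinuous _ _).trans
    (Measure.absolutelyContinuous_of_le Measure.restrict_le_self)

lemma cm_apply {b : ℕ} {C D c : ℝ} {s : Set ℝ} (hs : MeasurableSet s)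
    (hsub : s ⊆ Ioo 0 (1 / (b : ℝ))) :
    cm b C D c s = ∫⁻ t in s, ENNReal.ofReal (c / (C * t + D) ^ 2) ∂volume := by
  unfold cm
  rw [withDensity_apply _ hs, Measure.restrict_restrict hs, inter_eq_self_of_subset_left hsub]

lemma cm_apply_zero {b : ℕ} {C D c : ℝ} {s : Set ℝ} (hs : MeasurableSet s)
    (hsub : s ∩ Ioo 0 (1 / (b : ℝ)) = ∅) :
    cm b C D c s = 0 := by
  unfold cm
  rw [withDensity_apply _ hs, Measure.restrict_restrict hs, hsub]
  simp

lemma cm_zero {b : ℕ} {C D : ℝ} : cm b C D 0 = 0 := by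
  unfold cm
  have : (fun t : ℝ => ENNReal.ofReal (0 / (C * t + D) ^ 2)) = 0 := by
    funext t; simp
  rw [this, withDensity_zero]

lemma cm_Ioo {b : ℕ} {C D c a a' : ℝ} (hC : 0 ≤ C) (hD : 0 < D) (hc : 0 ≤ c)
    (ha : 0 < a) (haa : a ≤ a') (ha' : a' ≤ 1 / (b : ℝ)) :
    cm b C D c (Ioo a a') = ENNReal.ofReal (c * (a' - a) / ((C * a + D) * (C * a' + D))) := by
  have hsub : Ioo a a' ⊆ Ioo 0 (1 / (b : ℝ)) := fun x hx => ⟨lt_trans ha hx.1, lt_of_lt_of_le hx.2 ha'⟩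
  rw [cm_apply measurableSet_Ioo hsub]
  have hpos : ∀ x ∈ Icc a a', 0 < C * x + D := by
    intro x hx; nlinarith [hx.1]
  have hcont : ContinuousOn (fun t : ℝ => c / (C * t + D) ^ 2) (Icc a a') := by
    apply ContinuousOn.div continuousOn_const (by fun_prop)
    intro x hx; exact pow_ne_zero _ (ne_of_gt (hpos x hx))
  have hint : IntegrableOn (fun t : ℝ => c / (C * t + D) ^ 2) (Ioo a a') := by
    exact (hcont.integrableOn_Icc).mono_set Ioo_subset_Icc_self
  rw [← ofReal_integral_eq_lintegral_ofReal hint]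
  · congr 1
    have : ∫ t in Ioo a a', c / (C * t + D) ^ 2 = ∫ t in a..a', c / (C * t + D) ^ 2 := by
      rw [intervalIntegral.integral_of_le haa, integral_Ioc_eq_integral_Ioo]
    rw [this]
    have hderiv : ∀ x ∈ uIcc a a', HasDerivAt (fun t => c * t / (D * (C * t + D)))
        (c / (C * x + D) ^ 2) x := by
      intro x hx
      rw [uIcc_of_le haa] at hx
      have hx0 : 0 < C * x + D := hpos x hx
      have h1 : HasDerivAt (fun t : ℝ => c * t) c x := by
        simpa using (hasDerivAt_id x).const_mul c
      have h2 : HasDerivAt (fun t : ℝ => D * (C * t + D)) (D * C) x := by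
        have : HasDerivAt (fun t : ℝ => C * t + D) C x := by
          simpa using ((hasDerivAt_id x).const_mul C).add_const D
        simpa using this.const_mul D
      have := h1.div h2 (by positivity)
      refine this.congr_deriv ?_
      field_simp
      ring
    rw [intervalIntegral.integral_eq_sub_of_hasDerivAt hderiv]
    · have h1 : 0 < C * a + D := hpos a ⟨le_refl a, haa⟩
      have h2 : 0 < C * a' + D := hpos a' ⟨haa, le_refl a'⟩
      rw [div_sub_div _ _ (mul_pos hD h2).ne' (mul_pos hD h1).ne',
        div_eq_div_iff (mul_pos (mul_pos hD h2) (mul_pos hD h1)).ne' (mul_pos h1 h2).ne']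
      ring
    · apply ContinuousOn.intervalIntegrable
      rw [uIcc_of_le haa]; exact hcont
  · filter_upwards [self_mem_ae_restrict measurableSet_Ioo] with x hx
    have := hpos x (Ioo_subset_Icc_self hx)
    positivity

/-- measures sandwiched between Ioo and Icc agree for measures a.c. wrt volume -/
lemma meas_sandwich {μ : Measure ℝ} (hac : μ ≪ volume) {a b : ℝ} {s : Set ℝ}
    (h1 : Ioo a b ⊆ s) (h2 : s ⊆ Icc a b) : μ s = μ (Ioo a b) := by
  have hnull : μ (Icc a b \ Ioo a b) = 0 := by
    apply hac
    have hsub : Icc a b \ Ioo a b ⊆ ({a, b} : Set ℝ) := by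
      intro x hx
      rcases hx with ⟨⟨hxa, hxb⟩, hx2⟩
      simp only [mem_Ioo, not_and, not_lt] at hx2
      rcases eq_or_lt_of_le hxa with h | h
      · exact Or.inl h.symm
      · exact Or.inr (le_antisymm hxb (hx2 h))
    exact measure_mono_null hsub (((Set.finite_singleton b).insert a).measure_zero _)
  apply le_antisymm
  · calc μ s ≤ μ (Ioo a b ∪ (Icc a b \ Ioo a b)) := by
          apply measure_mono; intro x hx
          by_cases h : x ∈ Ioo a b
          · exact Or.inl h
          · exact Or.inr ⟨h2 hx, h⟩
      _ ≤ μ (Ioo a b) + μ (Icc a b \ Ioo a b) := measure_union_le _ _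
      _ = μ (Ioo a b) := by rw [hnull, add_zero]
  · exact measure_mono h1

lemma cm_null {b : ℕ} {C D c : ℝ} {s : Set ℝ} (hs : MeasurableSet s)
    (h : volume (s ∩ Ioo 0 (1 / (b : ℝ))) = 0) : cm b C D c s = 0 := by
  unfold cm
  rw [withDensity_apply _ hs, Measure.restrict_restrict hs]
  exact setLIntegral_measure_zero _ _ h

set_option maxHeartbeats 1000000 in
lemma map_cm {b : ℕ} (hb : 1 ≤ b) {C D c : ℝ} (hC : 0 ≤ C) (hD : 0 < D) (hc : 0 ≤ c) :
    Measure.map ecfT (cm b C D c) =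
      Measure.sum (fun j : ℕ => if b ≤ j then cm j D (D + C / j) (c / j) else 0) := by
  have hb0 : (0:ℝ) < b := by exact_mod_cast hb
  ext A hA
  rw [Measure.map_apply measurable_ecfT hA, Measure.sum_apply _ hA]
  set U : ℕ → Set ℝ := fun j => Ioo (1 / ((j : ℝ) + 1)) (1 / (j : ℝ)) with hUdef
  have hpre : MeasurableSet (ecfT ⁻¹' A) := measurable_ecfT hA
  have hUmeas : ∀ j, MeasurableSet (U j) := fun j => measurableSet_Ioo
  have hmono : ∀ {p q : ℕ}, p < q → (1:ℝ) / q ≤ 1 / (p + 1) := by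
    intro p q h
    apply one_div_le_one_div_of_le (by positivity)
    exact_mod_cast h
  have hUdisj : Pairwise (Function.onFun Disjoint U) := by
    intro i j hij
    rcases lt_or_gt_of_ne hij with h | h
    · rw [Function.onFun, Set.disjoint_left]
      intro x hxi hxj
      have := hmono h
      have h1 := hxi.1
      have h2 := hxj.2
      linarith [h1, h2, this]
    · rw [Function.onFun, Set.disjoint_right]
      intro x hxj hxi
      have := hmono h
      have h1 := hxj.1
      have h2 := hxi.2
      linarith [h1, h2, this]
  -- step 1 : decompose
  have cover : cm b C D c (ecfT ⁻¹' A) = ∑' j, cm b C D c (ecfT ⁻¹' A ∩ U j) := by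
    have hN : cm b C D c (ecfT ⁻¹' A \ ⋃ j, U j) = 0 := by
      apply cm_null (hpre.diff (MeasurableSet.iUnion hUmeas))
      apply measure_mono_null
        (t := Set.range (fun m : ℕ => 1 / (m : ℝ)))
      · rintro y ⟨⟨hyA, hyU⟩, hy0, hy1⟩
        have hy01 : y < 1 := by
          have : (1:ℝ)/b ≤ 1 := by
            rw [div_le_one hb0]; exact_mod_cast hb
          linarith
        have h1y : 1 < 1 / y := by
          rw [lt_div_iff₀ hy0]; linarith
        have hfl : 1 ≤ ⌊1 / y⌋ := by
          exact Int.le_floor.mpr (by exact_mod_cast h1y.le)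
        set m : ℕ := (⌊1 / y⌋).toNat with hm
        have hm1 : 1 ≤ m := by omega
        have hmz : ⌊1 / y⌋ = (m : ℤ) := by omega
        have hmem : y ∈ Ioc (1 / ((m : ℝ) + 1)) (1 / (m : ℝ)) :=
          (floor_one_div_eq hm1).mp hmz
        have : y = 1 / (m : ℝ) := by
          by_contra hne
          exact hyU (mem_iUnion.mpr ⟨m, hmem.1, lt_of_le_of_ne hmem.2 hne⟩)
        exact ⟨m, this.symm⟩
      · exact (Set.countable_range _).measure_zero _
    have hsplit : cm b C D c (ecfT ⁻¹' A) = cm b C D c (ecfT ⁻¹' A ∩ ⋃ j, U j) := by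
      apply le_antisymm
      · calc cm b C D c (ecfT ⁻¹' A)
            = cm b C D c ((ecfT ⁻¹' A ∩ ⋃ j, U j) ∪ (ecfT ⁻¹' A \ ⋃ j, U j)) := by
              rw [inter_union_diff]
          _ ≤ cm b C D c (ecfT ⁻¹' A ∩ ⋃ j, U j) + cm b C D c (ecfT ⁻¹' A \ ⋃ j, U j) :=
              measure_union_le _ _
          _ = cm b C D c (ecfT ⁻¹' A ∩ ⋃ j, U j) := by rw [hN, add_zero]
      · exact measure_mono inter_subset_left
    rw [hsplit, inter_iUnion]
    exact measure_iUnion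
      (hUdisj.mono fun i j h => h.mono inter_subset_right inter_subset_right)
      (fun j => hpre.inter (hUmeas j))
  rw [cover]
  congr 1
  funext j
  by_cases hbj : b ≤ j
  · -- main case
    have hj1 : 1 ≤ j := le_trans hb hbj
    have hj0 : (0:ℝ) < j := by exact_mod_cast hj1
    have hj1R : (1:ℝ) ≤ j := by exact_mod_cast hj1
    rw [if_pos hbj]
    set s : Set ℝ := A ∩ Ioo 0 (1 / (j:ℝ)) with hs_def
    have hs : MeasurableSet s := hA.inter measurableSet_Ioo
    set ψ : ℝ → ℝ := fun t => ((j:ℝ) + j * t)⁻¹ with hψ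
    have hpos : ∀ t ∈ s, 0 < (j:ℝ) + j * t := by
      rintro t ⟨-, ht0, -⟩; nlinarith
    have himg : ecfT ⁻¹' A ∩ U j = ψ '' s := by
      ext y
      constructor
      · rintro ⟨hyA, hy1, hy2⟩
        have hy0 : 0 < y := lt_trans (by positivity) hy1
        have hyIoc : y ∈ Ioc (1 / ((j:ℝ) + 1)) (1 / (j:ℝ)) := ⟨hy1, le_of_lt hy2⟩
        have hT : ecfT y = (1 / y - j) / j := ecfT_eq_s9 hj1 hyIoc
        have hinv1 : (j:ℝ) < 1 / y := by
          rw [lt_div_iff₀ hy0]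
          have := (lt_div_iff₀ hj0).mp hy2
          linarith
        have hinv2 : 1 / y < (j:ℝ) + 1 := by
          rw [div_lt_iff₀ hy0]
          have := (div_lt_iff₀ (by positivity)).mp hy1
          linarith
        refine ⟨ecfT y, ⟨hyA, ?_, ?_⟩, ?_⟩
        · rw [hT]; apply div_pos (by linarith) hj0
        · rw [hT, div_lt_div_iff₀ hj0 hj0]; nlinarith
        · rw [hT]
          have heq : (j:ℝ) + j * ((1 / y - j) / j) = 1 / y := by field_simp; ring
          show ((j:ℝ) + j * ((1 / y - j) / j))⁻¹ = y
          rw [heq, one_div, inv_inv]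
      · rintro ⟨t, ⟨htA, ht0, ht1⟩, rfl⟩
        have htj : t * j < 1 := (lt_div_iff₀ hj0).mp ht1
        have h1 : 0 < (j:ℝ) + j * t := by nlinarith
        have h2 : (j:ℝ) + j * t < j + 1 := by nlinarith
        have h3 : (j:ℝ) < j + j * t := by nlinarith
        have hyU : ψ t ∈ U j := by
          constructor
          · show (1:ℝ) / ((j:ℝ) + 1) < ((j:ℝ) + j * t)⁻¹
            rw [← one_div]
            exact one_div_lt_one_div_of_lt h1 h2
          · show ((j:ℝ) + j * t)⁻¹ < 1 / (j:ℝ)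
            rw [← one_div]
            exact one_div_lt_one_div_of_lt hj0 h3
        refine ⟨?_, hyU⟩
        have hyIoc : ψ t ∈ Ioc (1 / ((j:ℝ) + 1)) (1 / (j:ℝ)) := ⟨hyU.1, le_of_lt hyU.2⟩
        have hT : ecfT (ψ t) = (1 / ψ t - j) / j := ecfT_eq_s9 hj1 hyIoc
        have hinv : 1 / ψ t = (j:ℝ) + j * t := by
          show 1 / ((j:ℝ) + j * t)⁻¹ = (j:ℝ) + j * t
          rw [one_div, inv_inv]
        have : ecfT (ψ t) = t := by
          rw [hT, hinv]; field_simp; ring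
        simpa [this] using htA
    have hUsub : U j ⊆ Ioo 0 (1 / (b:ℝ)) := by
      rintro x ⟨hx1, hx2⟩
      refine ⟨lt_trans (by positivity) hx1, lt_of_lt_of_le hx2 ?_⟩
      apply one_div_le_one_div_of_le hb0
      exact_mod_cast hbj
    have hderiv : ∀ t ∈ s, HasDerivWithinAt ψ (-(j:ℝ) / ((j:ℝ) + j * t) ^ 2) s t := by
      intro t ht
      have hne : (j:ℝ) + j * t ≠ 0 := ne_of_gt (hpos t ht)
      have hd : HasDerivAt (fun t : ℝ => (j:ℝ) + j * t) (j:ℝ) t := by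
        simpa using ((hasDerivAt_id t).const_mul (j:ℝ)).const_add (j:ℝ)
      exact (hd.inv hne).hasDerivWithinAt
    have hinj : Set.InjOn ψ s := by
      intro x hx y hy h
      have h1 : (j:ℝ) + j * x = (j:ℝ) + j * y := inv_injective h
      have h2 : (j:ℝ) * x = j * y := by linarith
      exact mul_left_cancel₀ (ne_of_gt hj0) h2
    calc cm b C D c (ecfT ⁻¹' A ∩ U j)
        = ∫⁻ y in ψ '' s, ENNReal.ofReal (c / (C * y + D) ^ 2) ∂volume := by
          rw [← himg]
          exact cm_apply (hpre.inter (hUmeas j)) (inter_subset_right.trans hUsub)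
      _ = ∫⁻ t in s, ENNReal.ofReal |(-(j:ℝ) / ((j:ℝ) + j * t) ^ 2)| *
            ENNReal.ofReal (c / (C * ψ t + D) ^ 2) ∂volume := by
          simpa only [ContinuousLinearMap.det_toSpanSingleton] using
            lintegral_image_eq_lintegral_abs_det_fderiv_mul volume hs
              (fun t ht => (hderiv t ht).hasFDerivWithinAt) hinj
              (fun y => ENNReal.ofReal (c / (C * y + D) ^ 2))
      _ = ∫⁻ t in s, ENNReal.ofReal ((c / j) / (D * t + (D + C / j)) ^ 2) ∂volume := by
          apply setLIntegral_congr_fun hs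
          intro t ht
          have h1 : 0 < (j:ℝ) + j * t := hpos t ht
          have habs : |(-(j:ℝ) / ((j:ℝ) + j * t) ^ 2)| = j / ((j:ℝ) + j * t) ^ 2 := by
            rw [abs_div, abs_neg, abs_of_pos hj0, abs_of_pos (by positivity)]
          beta_reduce
          rw [habs, ← ENNReal.ofReal_mul (by positivity)]
          congr 1
          show (j:ℝ) / ((j:ℝ) + j * t) ^ 2 * (c / (C * ((j:ℝ) + j * t)⁻¹ + D) ^ 2) =
            (c / j) / (D * t + (D + C / j)) ^ 2
          have hne : ((j:ℝ) + j * t) ≠ 0 := ne_of_gt h1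
          have hcd : 0 < C + D * ((j:ℝ) + j * t) := by positivity
          have hrw : C * ((j:ℝ) + j * t)⁻¹ + D = (C + D * ((j:ℝ) + j * t)) / ((j:ℝ) + j * t) := by
            rw [eq_div_iff hne, add_mul, inv_mul_cancel_right₀ hne]
          have key : D * t + (D + C / j) = (C + D * ((j:ℝ) + j * t)) / j := by
            field_simp; ring
          rw [hrw, key]
          generalize (j:ℝ) + j * t = u at hne hcd ⊢
          have hcd' := hcd.ne'
          field_simp
      _ = cm j D (D + C / j) (c / j) A := by
          unfold cm
          rw [withDensity_apply _ hA, Measure.restrict_restrict hA]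
  · rw [if_neg hbj]
    have : cm b C D c (ecfT ⁻¹' A ∩ U j) = 0 := by
      apply cm_apply_zero (hpre.inter (hUmeas j))
      ext x
      simp only [mem_inter_iff, mem_empty_iff_false, iff_false, not_and]
      rintro ⟨-, hx1, hx2⟩ ⟨hx0, hxb⟩
      have hjb : j + 1 ≤ b := by omega
      have : (1:ℝ)/b ≤ 1/(j+1) := by
        apply one_div_le_one_div_of_le (by positivity)
        exact_mod_cast hjb
      linarith
    rw [this]
    rfl

lemma ecf_decomp (n : ℕ) : ∃ (ι : Type) (_ : Countable ι) (P : ι → ℕ × ℝ × ℝ × ℝ) (i0 : ι),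
    (∀ i, 1 ≤ (P i).1 ∧ 0 ≤ (P i).2.1 ∧ 0 < (P i).2.2.1 ∧ 0 ≤ (P i).2.2.2) ∧
    (P i0).1 = 1 ∧ 0 < (P i0).2.2.2 ∧
    Measure.map (ecfT^[n]) ecfP =
      Measure.sum (fun i => cm (P i).1 (P i).2.1 (P i).2.2.1 (P i).2.2.2) := by
  induction n with
  | zero =>
    refine ⟨PUnit, inferInstance, fun _ => (1, 0, 1, 1), PUnit.unit, ?_, rfl, one_pos, ?_⟩
    · intro i; norm_num
    · rw [Function.iterate_zero, Measure.map_id]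
      have h1 : ecfP = cm 1 0 1 1 := by
        unfold ecfP cm
        have h2 : (fun t : ℝ => ENNReal.ofReal ((1:ℝ) / ((0:ℝ) * t + 1) ^ 2)) = 1 := by
          funext t; norm_num
        rw [h2, withDensity_one]
        have h3 : (1 : ℝ) / ((1:ℕ) : ℝ) = 1 := by norm_num
        rw [h3]
        exact (Measure.restrict_congr_set Ioo_ae_eq_Ioc).symm
      ext s hs
      rw [Measure.sum_apply _ hs, tsum_eq_single PUnit.unit (by intro b hb; exact absurd rfl hb)]
      exact congrArg (fun μ : Measure ℝ => μ s) h1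
  | succ n ih =>
    obtain ⟨ι, hι, P, i0, hcond, hb1, hc0, heq⟩ := ih
    refine ⟨ι × ℕ, inferInstance, fun p => if (P p.1).1 ≤ p.2 then
        ((p.2 : ℕ), (P p.1).2.2.1, (P p.1).2.2.1 + (P p.1).2.1 / (p.2:ℝ), (P p.1).2.2.2 / (p.2:ℝ))
      else (1, 0, 1, 0), (i0, 1), ?_, ?_, ?_, ?_⟩
    · rintro ⟨i, j⟩
      obtain ⟨h1, h2, h3, h4⟩ := hcond i
      by_cases h : (P i).1 ≤ j
      · simp only [h, if_true]
        have hj1 : 1 ≤ j := le_trans h1 h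
        have hj0 : (0:ℝ) < j := by exact_mod_cast hj1
        refine ⟨hj1, le_of_lt h3, by positivity, by positivity⟩
      · simp only [h, if_false]
        norm_num
    · have : (P i0).1 ≤ 1 := le_of_eq hb1
      simp only [this, if_true]
    · have : (P i0).1 ≤ 1 := le_of_eq hb1
      simp only [this, if_true]
      simpa using hc0
    · rw [Function.iterate_succ']
      rw [← Measure.map_map measurable_ecfT (measurable_ecfT.iterate n)]
      rw [heq, Measure.map_sum measurable_ecfT.aemeasurable]
      have hstep : ∀ i : ι, Measure.map ecfT
          (cm (P i).1 (P i).2.1 (P i).2.2.1 (P i).2.2.2) =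
          Measure.sum (fun j : ℕ => if (P i).1 ≤ j then
            cm j (P i).2.2.1 ((P i).2.2.1 + (P i).2.1 / (j:ℝ)) ((P i).2.2.2 / (j:ℝ)) else 0) := by
        intro i
        obtain ⟨h1, h2, h3, h4⟩ := hcond i
        exact map_cm h1 h2 h3 h4
      calc Measure.sum (fun i => Measure.map ecfT (cm (P i).1 (P i).2.1 (P i).2.2.1 (P i).2.2.2))
          = Measure.sum (fun i : ι => Measure.sum (fun j : ℕ => if (P i).1 ≤ j then
              cm j (P i).2.2.1 ((P i).2.2.1 + (P i).2.1 / (j:ℝ)) ((P i).2.2.2 / (j:ℝ)) else 0)) := by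
            congr 1; funext i; exact hstep i
        _ = Measure.sum (fun p : ι × ℕ => if (P p.1).1 ≤ p.2 then
              cm p.2 (P p.1).2.2.1 ((P p.1).2.2.1 + (P p.1).2.1 / (p.2:ℝ)) ((P p.1).2.2.2 / (p.2:ℝ)) else 0) :=
            Measure.sum_sum _
        _ = _ := by
            congr 1; funext p
            by_cases h : (P p.1).1 ≤ p.2
            · simp only [h, if_true]
            · simp only [h, if_false]
              exact cm_zero.symm

set_option maxHeartbeats 1000000 in
lemma comp_bounds {b : ℕ} (hb : 1 ≤ b) {C D c : ℝ} (hC : 0 ≤ C) (hD : 0 < D) (hc : 0 ≤ c)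
    {j k : ℕ} (hj : 1 ≤ j) (hjk : j ≤ k) :
    ENNReal.ofReal ((j:ℝ) / ((k:ℝ) * ((k:ℝ) + 2))) *
        cm b C D c (Ioo (1 / ((j:ℝ) + 1)) (1 / (j:ℝ))) ≤
      cm b C D c (Ioo ((k:ℝ) / ((j:ℝ) * ((k:ℝ) + 1))) (((k:ℝ) + 1) / ((j:ℝ) * ((k:ℝ) + 2)))) ∧
    cm b C D c (Ioo ((k:ℝ) / ((j:ℝ) * ((k:ℝ) + 1))) (((k:ℝ) + 1) / ((j:ℝ) * ((k:ℝ) + 2)))) ≤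
      ENNReal.ofReal (((j:ℝ) + 1) / ((k:ℝ) * ((k:ℝ) + 1))) *
        cm b C D c (Ioo (1 / ((j:ℝ) + 1)) (1 / (j:ℝ))) := by
  have hj0 : (0:ℝ) < j := by exact_mod_cast hj
  have hjk' : (j:ℝ) ≤ (k:ℝ) := by exact_mod_cast hjk
  have hk0 : (0:ℝ) < k := lt_of_lt_of_le hj0 hjk'
  by_cases hbj : b ≤ j
  · have hb0 : (0:ℝ) < b := by exact_mod_cast hb
    have hbj' : (b:ℝ) ≤ (j:ℝ) := by exact_mod_cast hbj
    have h1j : 1 / (j:ℝ) ≤ 1 / (b:ℝ) := one_div_le_one_div_of_le hb0 hbj'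
    have ha1 : (0:ℝ) < 1 / ((j:ℝ) + 1) := by positivity
    have hab1 : 1 / ((j:ℝ) + 1) ≤ 1 / (j:ℝ) := by
      apply one_div_le_one_div_of_le hj0; linarith
    have ha2 : (0:ℝ) < (k:ℝ) / ((j:ℝ) * ((k:ℝ) + 1)) := by positivity
    have hab2 : (k:ℝ) / ((j:ℝ) * ((k:ℝ) + 1)) ≤ ((k:ℝ) + 1) / ((j:ℝ) * ((k:ℝ) + 2)) := by
      rw [div_le_div_iff₀ (by positivity) (by positivity)]
      nlinarith
    have hb2 : ((k:ℝ) + 1) / ((j:ℝ) * ((k:ℝ) + 2)) ≤ 1 / (b:ℝ) := by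
      apply le_trans _ h1j
      rw [div_le_div_iff₀ (by positivity) hj0]
      nlinarith
    rw [cm_Ioo hC hD hc ha1 hab1 h1j, cm_Ioo hC hD hc ha2 hab2 hb2]
    -- abbreviations
    set Q1 : ℝ := (C + D * ((j:ℝ) + 1)) * (C + D * (j:ℝ)) with hQ1def
    set Q2 : ℝ := (C * (k:ℝ) + D * (j:ℝ) * ((k:ℝ) + 1)) *
      (C * ((k:ℝ) + 1) + D * (j:ℝ) * ((k:ℝ) + 2)) with hQ2def
    have hQ1 : 0 < Q1 := by rw [hQ1def]; positivity
    have hQ2 : 0 < Q2 := by rw [hQ2def]; positivity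
    have hv1 : c * (1 / (j:ℝ) - 1 / ((j:ℝ) + 1)) /
        ((C * (1 / ((j:ℝ) + 1)) + D) * (C * (1 / (j:ℝ)) + D)) = c / Q1 := by
      have hB1 : (0:ℝ) < (C * (1 / ((j:ℝ) + 1)) + D) * (C * (1 / (j:ℝ)) + D) := by positivity
      rw [hQ1def, div_eq_div_iff hB1.ne' (by positivity)]
      field_simp
      try ring
      try exact Or.inl trivial
    have hv2 : c * (((k:ℝ) + 1) / ((j:ℝ) * ((k:ℝ) + 2)) - (k:ℝ) / ((j:ℝ) * ((k:ℝ) + 1))) /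
        ((C * ((k:ℝ) / ((j:ℝ) * ((k:ℝ) + 1))) + D) *
          (C * (((k:ℝ) + 1) / ((j:ℝ) * ((k:ℝ) + 2))) + D)) = c * (j:ℝ) / Q2 := by
      have hB2 : (0:ℝ) < (C * ((k:ℝ) / ((j:ℝ) * ((k:ℝ) + 1))) + D) *
          (C * (((k:ℝ) + 1) / ((j:ℝ) * ((k:ℝ) + 2))) + D) := by positivity
      rw [hQ2def, div_eq_div_iff hB2.ne' (by positivity)]
      field_simp
      try ring
      try exact Or.inl trivial
    rw [hv1, hv2]
    have key1 : (k:ℝ) * ((k:ℝ) + 2) * Q1 - Q2 =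
        (k:ℝ) * C ^ 2 + ((k:ℝ) ^ 2 + 2 * (k:ℝ) - (j:ℝ)) * (C * D) +
          (j:ℝ) * ((k:ℝ) + 2) * ((k:ℝ) - (j:ℝ)) * D ^ 2 := by
      rw [hQ1def, hQ2def]; ring
    have key2 : ((j:ℝ) + 1) * Q2 - (j:ℝ) * ((k:ℝ) * ((k:ℝ) + 1)) * Q1 =
        (k:ℝ) * ((k:ℝ) + 1) * C ^ 2 +
          (j:ℝ) * (2 * (j:ℝ) * (k:ℝ) + (j:ℝ) + (k:ℝ) ^ 2 + 3 * (k:ℝ) + 1) * (C * D) +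
          2 * (j:ℝ) ^ 2 * ((j:ℝ) + 1) * ((k:ℝ) + 1) * D ^ 2 := by
      rw [hQ1def, hQ2def]; ring
    have n1 : (0:ℝ) ≤ (k:ℝ) * C ^ 2 := by positivity
    have n2 : (0:ℝ) ≤ ((k:ℝ) ^ 2 + 2 * (k:ℝ) - (j:ℝ)) * (C * D) := by
      apply mul_nonneg _ (mul_nonneg hC hD.le)
      nlinarith
    have n3 : (0:ℝ) ≤ (j:ℝ) * ((k:ℝ) + 2) * ((k:ℝ) - (j:ℝ)) * D ^ 2 := by
      apply mul_nonneg _ (sq_nonneg D)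
      apply mul_nonneg (by positivity)
      linarith
    have m1 : (0:ℝ) ≤ (k:ℝ) * ((k:ℝ) + 1) * C ^ 2 := by positivity
    have m2 : (0:ℝ) ≤ (j:ℝ) * (2 * (j:ℝ) * (k:ℝ) + (j:ℝ) + (k:ℝ) ^ 2 + 3 * (k:ℝ) + 1) * (C * D) := by
      apply mul_nonneg _ (mul_nonneg hC hD.le)
      apply mul_nonneg hj0.le
      nlinarith
    have m3 : (0:ℝ) ≤ 2 * (j:ℝ) ^ 2 * ((j:ℝ) + 1) * ((k:ℝ) + 1) * D ^ 2 := by positivity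
    have hle1 : Q2 ≤ (k:ℝ) * ((k:ℝ) + 2) * Q1 := by linarith
    have hle2 : (j:ℝ) * ((k:ℝ) * ((k:ℝ) + 1)) * Q1 ≤ ((j:ℝ) + 1) * Q2 := by linarith
    constructor
    · rw [← ENNReal.ofReal_mul (by positivity)]
      apply ENNReal.ofReal_le_ofReal
      rw [div_mul_div_comm, div_le_div_iff₀ (by positivity) hQ2]
      nlinarith [mul_le_mul_of_nonneg_left hle1 (mul_nonneg hj0.le hc)]
    · rw [← ENNReal.ofReal_mul (by positivity)]
      apply ENNReal.ofReal_le_ofReal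
      rw [div_mul_div_comm, div_le_div_iff₀ hQ2 (by positivity)]
      nlinarith [mul_le_mul_of_nonneg_left hle2 hc]
  · push_neg at hbj
    have hjb : ((j:ℝ) + 1) ≤ (b:ℝ) := by exact_mod_cast hbj
    have hb0 : (0:ℝ) < b := by linarith
    have h1b : (1:ℝ) / b ≤ 1 / ((j:ℝ) + 1) := one_div_le_one_div_of_le (by positivity) hjb
    have hz1 : cm b C D c (Ioo (1 / ((j:ℝ) + 1)) (1 / (j:ℝ))) = 0 := by
      apply cm_apply_zero measurableSet_Ioo
      rw [eq_empty_iff_forall_notMem]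
      rintro x ⟨⟨hx1, hx1'⟩, hx2, hx2'⟩
      linarith
    have hz2 : cm b C D c
        (Ioo ((k:ℝ) / ((j:ℝ) * ((k:ℝ) + 1))) (((k:ℝ) + 1) / ((j:ℝ) * ((k:ℝ) + 2)))) = 0 := by
      apply cm_apply_zero measurableSet_Ioo
      have ha2 : 1 / ((j:ℝ) + 1) ≤ (k:ℝ) / ((j:ℝ) * ((k:ℝ) + 1)) := by
        rw [div_le_div_iff₀ (by positivity) (by positivity)]
        nlinarith
      rw [eq_empty_iff_forall_notMem]
      rintro x ⟨⟨hx1, hx1'⟩, hx2, hx2'⟩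
      linarith
    rw [hz1, hz2]
    simp

lemma sum_cm_ac {ι : Type} (P : ι → ℕ × ℝ × ℝ × ℝ) :
    Measure.sum (fun i => cm (P i).1 (P i).2.1 (P i).2.2.1 (P i).2.2.2) ≪ volume := by
  intro s hs
  obtain ⟨t, hst, htm, ht0⟩ := exists_measurable_superset_of_null hs
  apply measure_mono_null hst
  rw [Measure.sum_apply _ htm]
  exact ENNReal.tsum_eq_zero.mpr (fun i => cm_ac ht0)


set_option maxHeartbeats 1000000 in
/-- Near-Markov property of ECF partial quotients: `P(b_1 = j) = 1/(j(j+1))`, and for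
`k ≥ j ≥ 1` and `n ≥ 1`, `j/(k(k+2)) ≤ P(b_{n+1} = k | b_n = j) ≤ (j+1)/(k(k+1))`. -/
theorem ecf_near_markov :
    (∀ j : ℕ, 1 ≤ j → ecfP {x | ecfB 1 x = (j : ℤ)} = ((j : ENNReal) * (j + 1))⁻¹) ∧
    (∀ j k : ℕ, 1 ≤ j → j ≤ k → ∀ n : ℕ, 1 ≤ n →
      (j : ENNReal) / ((k : ENNReal) * (k + 2)) ≤
        ecfP ({x | ecfB (n + 1) x = (k : ℤ)} ∩ {x | ecfB n x = (j : ℤ)}) /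
          ecfP {x | ecfB n x = (j : ℤ)} ∧
      ecfP ({x | ecfB (n + 1) x = (k : ℤ)} ∩ {x | ecfB n x = (j : ℤ)}) /
          ecfP {x | ecfB n x = (j : ℤ)} ≤
        ((j : ENNReal) + 1) / ((k : ENNReal) * (k + 1))) := by
  constructor
  · intro j hj
    have hj0 : (0:ℝ) < j := by exact_mod_cast hj
    have hset : {x : ℝ | ecfB 1 x = (j:ℤ)} = Ioc (1 / ((j:ℝ) + 1)) (1 / (j:ℝ)) := by
      ext x
      show ⌊1 / (ecfT^[0] x)⌋ = (j:ℤ) ↔ _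
      rw [Function.iterate_zero_apply]
      exact floor_one_div_eq hj
    rw [hset]
    unfold ecfP
    rw [Measure.restrict_apply measurableSet_Ioc]
    have hsub : Ioc (1 / ((j:ℝ) + 1)) (1 / (j:ℝ)) ∩ Ioc 0 1 = Ioc (1 / ((j:ℝ) + 1)) (1 / (j:ℝ)) := by
      apply inter_eq_self_of_subset_left
      rintro x ⟨hx1, hx2⟩
      constructor
      · exact lt_trans (by positivity) hx1
      · apply le_trans hx2
        rw [div_le_one hj0]
        exact_mod_cast hj
    rw [hsub, Real.volume_Ioc]
    have hval : 1 / (j:ℝ) - 1 / ((j:ℝ) + 1) = ((j:ℝ) * ((j:ℝ) + 1))⁻¹ := by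
      field_simp
      ring
    rw [hval, ENNReal.ofReal_inv_of_pos (by positivity)]
    congr 1
    rw [ENNReal.ofReal_mul (by positivity), ENNReal.ofReal_add (by positivity) (by norm_num),
      ENNReal.ofReal_natCast, ENNReal.ofReal_one]
  · intro j k hj hjk n hn
    obtain ⟨m, rfl⟩ : ∃ m, n = m + 1 := ⟨n - 1, by omega⟩
    have hk1 : 1 ≤ k := le_trans hj hjk
    have hj0 : (0:ℝ) < j := by exact_mod_cast hj
    have hk0 : (0:ℝ) < k := by exact_mod_cast hk1
    have hjk' : (j:ℝ) ≤ (k:ℝ) := by exact_mod_cast hjk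
    set a1 : ℝ := 1 / ((j:ℝ) + 1) with ha1def
    set b1 : ℝ := 1 / (j:ℝ) with hb1def
    set a2 : ℝ := (k:ℝ) / ((j:ℝ) * ((k:ℝ) + 1)) with ha2def
    set b2 : ℝ := ((k:ℝ) + 1) / ((j:ℝ) * ((k:ℝ) + 2)) with hb2def
    have ha1a2 : a1 ≤ a2 := by
      rw [ha1def, ha2def, div_le_div_iff₀ (by positivity) (by positivity)]
      nlinarith
    have hb2b1 : b2 < b1 := by
      rw [hb2def, hb1def, div_lt_div_iff₀ (by positivity) hj0]
      nlinarith
    have ha2b2 : a2 < b2 := by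
      rw [ha2def, hb2def, div_lt_div_iff₀ (by positivity) (by positivity)]
      nlinarith
    set G : Set ℝ := {y : ℝ | ⌊1 / y⌋ = (j:ℤ)} with hGdef
    set H : Set ℝ := {y : ℝ | ⌊1 / y⌋ = (j:ℤ) ∧ ⌊1 / ecfT y⌋ = (k:ℤ)} with hHdef
    have hGIoc : G = Ioc a1 b1 := by
      ext y; exact floor_one_div_eq hj
    have hGmeas : MeasurableSet G := by rw [hGIoc]; exact measurableSet_Ioc
    have hHmeas : MeasurableSet H := by
      have : H = G ∩ ecfT ⁻¹' {y : ℝ | ⌊1 / y⌋ = (k:ℤ)} := rfl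
      rw [this]
      apply hGmeas.inter
      apply measurable_ecfT
      have : {y : ℝ | ⌊1 / y⌋ = (k:ℤ)} = Ioc (1 / ((k:ℝ) + 1)) (1 / (k:ℝ)) := by
        ext y; exact floor_one_div_eq hk1
      rw [this]; exact measurableSet_Ioc
    -- sandwich for H
    have hH1 : Ioo a2 b2 ⊆ H := by
      rintro y ⟨hya, hyb⟩
      have hy0 : 0 < y := lt_trans (by positivity) hya
      have hyIoc : y ∈ Ioc a1 b1 := ⟨lt_of_le_of_lt ha1a2 hya, le_of_lt (lt_trans hyb hb2b1)⟩
      have hfl1 : ⌊1 / y⌋ = (j:ℤ) := (floor_one_div_eq hj).mpr hyIoc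
      have hT : ecfT y = (1 / y - j) / j := ecfT_eq_s9 hj hyIoc
      -- bounds on 1/y
      have hinvlow : (j:ℝ) * ((k:ℝ) + 2) / ((k:ℝ) + 1) < 1 / y := by
        rw [lt_div_iff₀ hy0]
        calc (j:ℝ) * ((k:ℝ) + 2) / ((k:ℝ) + 1) * y
            < (j:ℝ) * ((k:ℝ) + 2) / ((k:ℝ) + 1) * b2 := by
              apply mul_lt_mul_of_pos_left hyb (by positivity)
          _ = 1 := by rw [hb2def]; field_simp
      have hinvhigh : 1 / y < (j:ℝ) * ((k:ℝ) + 1) / (k:ℝ) := by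
        rw [div_lt_iff₀ hy0]
        calc (1:ℝ) = (j:ℝ) * ((k:ℝ) + 1) / (k:ℝ) * a2 := by rw [ha2def]; field_simp
          _ < (j:ℝ) * ((k:ℝ) + 1) / (k:ℝ) * y := by
              apply mul_lt_mul_of_pos_left hya (by positivity)
      have hid1 : (j:ℝ) * ((k:ℝ) + 2) / ((k:ℝ) + 1) = (j:ℝ) + (j:ℝ) / ((k:ℝ) + 1) := by
        field_simp; ring
      have hid2 : (j:ℝ) * ((k:ℝ) + 1) / (k:ℝ) = (j:ℝ) + (j:ℝ) / (k:ℝ) := by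
        field_simp
      refine ⟨hfl1, (floor_one_div_eq hk1).mpr ⟨?_, ?_⟩⟩
      · rw [hT, lt_div_iff₀ hj0]
        have h3 : (j:ℝ) / ((k:ℝ) + 1) < 1 / y - (j:ℝ) := by
          rw [hid1] at hinvlow; linarith
        calc 1 / ((k:ℝ) + 1) * (j:ℝ) = (j:ℝ) / ((k:ℝ) + 1) := by ring
          _ < 1 / y - (j:ℝ) := h3
      · rw [hT, div_le_iff₀ hj0]
        have h3 : 1 / y - (j:ℝ) < (j:ℝ) / (k:ℝ) := by
          rw [hid2] at hinvhigh; linarith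
        calc 1 / y - (j:ℝ) ≤ (j:ℝ) / (k:ℝ) := le_of_lt h3
          _ = 1 / (k:ℝ) * (j:ℝ) := by ring
    have hH2 : H ⊆ Icc a2 b2 := by
      rintro y ⟨hfl1, hfl2⟩
      have hyIoc : y ∈ Ioc a1 b1 := (floor_one_div_eq hj).mp hfl1
      have hy0 : 0 < y := lt_trans (by positivity) hyIoc.1
      have hT : ecfT y = (1 / y - j) / j := ecfT_eq_s9 hj hyIoc
      have hTIoc : ecfT y ∈ Ioc (1 / ((k:ℝ) + 1)) (1 / (k:ℝ)) := (floor_one_div_eq hk1).mp hfl2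
      have hTlow : 1 / ((k:ℝ) + 1) < (1 / y - j) / j := by rw [← hT]; exact hTIoc.1
      have hThigh : (1 / y - j) / j ≤ 1 / (k:ℝ) := by rw [← hT]; exact hTIoc.2
      rw [lt_div_iff₀ hj0] at hTlow
      rw [div_le_iff₀ hj0] at hThigh
      have hinvhigh : 1 / y ≤ (j:ℝ) * ((k:ℝ) + 1) / (k:ℝ) := by
        rw [le_div_iff₀ hk0]
        have e1 : (1 / (k:ℝ)) * (j:ℝ) * (k:ℝ) = (j:ℝ) := by field_simp
        have e2 := mul_le_mul_of_nonneg_right hThigh hk0.le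
        nlinarith [e1, e2]
      have hinvlow : (j:ℝ) * ((k:ℝ) + 2) / ((k:ℝ) + 1) < 1 / y := by
        rw [div_lt_iff₀ (by positivity)]
        have e3 : (1 / ((k:ℝ) + 1)) * (j:ℝ) * ((k:ℝ) + 1) = (j:ℝ) := by field_simp
        have e4 := mul_lt_mul_of_pos_right hTlow (by positivity : (0:ℝ) < (k:ℝ) + 1)
        nlinarith [e3, e4]
      have e5 : y * (1 / y) = 1 := by field_simp
      constructor
      · rw [ha2def, div_le_iff₀ (by positivity)]
        have e6 := mul_le_mul_of_nonneg_left hinvhigh hy0.le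
        have e7 : y * ((j:ℝ) * ((k:ℝ) + 1) / (k:ℝ)) * (k:ℝ) = y * ((j:ℝ) * ((k:ℝ) + 1)) := by
          field_simp
        have e8 := mul_le_mul_of_nonneg_right e6 hk0.le
        nlinarith [e5, e7, e8]
      · rw [hb2def, le_div_iff₀ (by positivity)]
        have e9 := mul_lt_mul_of_pos_left hinvlow hy0
        have e10 : y * ((j:ℝ) * ((k:ℝ) + 2) / ((k:ℝ) + 1)) * ((k:ℝ) + 1) =
            y * ((j:ℝ) * ((k:ℝ) + 2)) := by field_simp
        have e11 := mul_lt_mul_of_pos_right e9 (by positivity : (0:ℝ) < (k:ℝ) + 1)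
        nlinarith [e5, e10, e11]
    -- the pushforward measure
    obtain ⟨ι, hι, P, i0, hcond, hbP, hcP, heq⟩ := ecf_decomp m
    have hmiter : Measurable (ecfT^[m]) := measurable_ecfT.iterate m
    have hsum_ac : Measure.map (ecfT^[m]) ecfP ≪ volume := by
      rw [heq]; exact sum_cm_ac P
    have hsetn : {x : ℝ | ecfB (m + 1) x = (j:ℤ)} = (ecfT^[m]) ⁻¹' G := rfl
    have hsetn1 : {x : ℝ | ecfB (m + 1 + 1) x = (k:ℤ)} ∩ {x : ℝ | ecfB (m + 1) x = (j:ℤ)} =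
        (ecfT^[m]) ⁻¹' H := by
      ext x
      show ⌊1 / (ecfT^[m + 1] x)⌋ = (k:ℤ) ∧ ⌊1 / (ecfT^[m] x)⌋ = (j:ℤ) ↔ _
      rw [Function.iterate_succ_apply']
      exact and_comm
    have hd : ecfP {x : ℝ | ecfB (m + 1) x = (j:ℤ)} = Measure.map (ecfT^[m]) ecfP G := by
      rw [hsetn, Measure.map_apply hmiter hGmeas]
    have ha : ecfP ({x : ℝ | ecfB (m + 1 + 1) x = (k:ℤ)} ∩ {x : ℝ | ecfB (m + 1) x = (j:ℤ)}) =
        Measure.map (ecfT^[m]) ecfP H := by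
      rw [hsetn1, Measure.map_apply hmiter hHmeas]
    set μ := Measure.map (ecfT^[m]) ecfP with hμdef
    have hμG : μ G = μ (Ioo a1 b1) := by
      rw [hGIoc]
      exact meas_sandwich hsum_ac Ioo_subset_Ioc_self Ioc_subset_Icc_self
    have hμH : μ H = μ (Ioo a2 b2) := meas_sandwich hsum_ac hH1 hH2
    -- sums
    have hμG' : μ (Ioo a1 b1) = ∑' i, cm (P i).1 (P i).2.1 (P i).2.2.1 (P i).2.2.2 (Ioo a1 b1) := by
      rw [heq, Measure.sum_apply _ measurableSet_Ioo]
    have hμH' : μ (Ioo a2 b2) = ∑' i, cm (P i).1 (P i).2.1 (P i).2.2.1 (P i).2.2.2 (Ioo a2 b2) := by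
      rw [heq, Measure.sum_apply _ measurableSet_Ioo]
    have hbounds : ∀ i : ι,
        ENNReal.ofReal ((j:ℝ) / ((k:ℝ) * ((k:ℝ) + 2))) *
          cm (P i).1 (P i).2.1 (P i).2.2.1 (P i).2.2.2 (Ioo a1 b1) ≤
        cm (P i).1 (P i).2.1 (P i).2.2.1 (P i).2.2.2 (Ioo a2 b2) ∧
        cm (P i).1 (P i).2.1 (P i).2.2.1 (P i).2.2.2 (Ioo a2 b2) ≤
        ENNReal.ofReal (((j:ℝ) + 1) / ((k:ℝ) * ((k:ℝ) + 1))) *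
          cm (P i).1 (P i).2.1 (P i).2.2.1 (P i).2.2.2 (Ioo a1 b1) := by
      intro i
      obtain ⟨h1, h2, h3, h4⟩ := hcond i
      exact comp_bounds h1 h2 h3 h4 hj hjk
    have hlow : ENNReal.ofReal ((j:ℝ) / ((k:ℝ) * ((k:ℝ) + 2))) * μ (Ioo a1 b1) ≤ μ (Ioo a2 b2) := by
      rw [hμG', hμH', ← ENNReal.tsum_mul_left]
      exact ENNReal.tsum_le_tsum (fun i => (hbounds i).1)
    have hhigh : μ (Ioo a2 b2) ≤
        ENNReal.ofReal (((j:ℝ) + 1) / ((k:ℝ) * ((k:ℝ) + 1))) * μ (Ioo a1 b1) := by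
      rw [hμG', hμH', ← ENNReal.tsum_mul_left]
      exact ENNReal.tsum_le_tsum (fun i => (hbounds i).2)
    -- positivity and finiteness of μ G
    have hdpos : μ G ≠ 0 := by
      obtain ⟨h1, h2, h3, h4⟩ := hcond i0
      have hab : a1 < b1 := by
        rw [ha1def, hb1def]
        apply one_div_lt_one_div_of_lt hj0; linarith
      have hval : cm (P i0).1 (P i0).2.1 (P i0).2.2.1 (P i0).2.2.2 (Ioo a1 b1) =
          ENNReal.ofReal ((P i0).2.2.2 * (b1 - a1) /
            (((P i0).2.1 * a1 + (P i0).2.2.1) * ((P i0).2.1 * b1 + (P i0).2.2.1))) := by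
        apply cm_Ioo h2 h3 h4 (by rw [ha1def]; positivity) hab.le
        rw [hbP, hb1def]
        simp only [Nat.cast_one]
        rw [div_le_div_iff₀ hj0 one_pos]
        have hj1R : (1:ℝ) ≤ (j:ℝ) := by exact_mod_cast hj
        linarith
      have hposreal : 0 < (P i0).2.2.2 * (b1 - a1) /
          (((P i0).2.1 * a1 + (P i0).2.2.1) * ((P i0).2.1 * b1 + (P i0).2.2.1)) := by
        have ha1p : 0 < a1 := by rw [ha1def]; positivity
        have hb1p : 0 < b1 := by rw [hb1def]; positivity
        apply div_pos (mul_pos hcP (by linarith))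
        apply mul_pos <;> nlinarith
      have hpos : 0 < μ G := by
        rw [hμG, hμG']
        apply lt_of_lt_of_le _ (ENNReal.le_tsum (f := fun i =>
          cm (P i).1 (P i).2.1 (P i).2.2.1 (P i).2.2.2 (Ioo a1 b1)) i0)
        rw [hval]
        exact ENNReal.ofReal_pos.mpr hposreal
      exact hpos.ne'
    have hdtop : μ G ≠ ⊤ := by
      have hle : μ G ≤ μ Set.univ := measure_mono (subset_univ G)
      have huniv : μ Set.univ = 1 := by
        rw [hμdef, Measure.map_apply hmiter MeasurableSet.univ, preimage_univ]
        unfold ecfP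
        rw [Measure.restrict_apply_univ, Real.volume_Ioc]
        norm_num
      rw [huniv] at hle
      exact ne_top_of_le_ne_top ENNReal.one_ne_top hle
    have hLcast : (j : ENNReal) / ((k : ENNReal) * ((k : ENNReal) + 2)) =
        ENNReal.ofReal ((j:ℝ) / ((k:ℝ) * ((k:ℝ) + 2))) := by
      rw [ENNReal.ofReal_div_of_pos (by positivity), ENNReal.ofReal_mul (by positivity),
        ENNReal.ofReal_natCast, ENNReal.ofReal_add (by positivity) (by norm_num),
        ENNReal.ofReal_natCast]
      norm_num
    have hUcast : ((j : ENNReal) + 1) / ((k : ENNReal) * ((k : ENNReal) + 1)) =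
        ENNReal.ofReal (((j:ℝ) + 1) / ((k:ℝ) * ((k:ℝ) + 1))) := by
      rw [ENNReal.ofReal_div_of_pos (by positivity), ENNReal.ofReal_mul (by positivity),
        ENNReal.ofReal_natCast, ENNReal.ofReal_add (by positivity) (by norm_num),
        ENNReal.ofReal_natCast, ENNReal.ofReal_add (by positivity) (by norm_num),
        ENNReal.ofReal_natCast, ENNReal.ofReal_one]
    constructor
    · rw [ha, hd, hLcast,
        ENNReal.le_div_iff_mul_le (Or.inl hdpos) (Or.inl hdtop), hμH, hμG]
      exact hlow
    · rw [ha, hd, hUcast,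
        ENNReal.div_le_iff_le_mul (Or.inl hdpos) (Or.inl hdtop), hμH, hμG]
      exact hhigh
end

section
/- Ratio bounds for consecutive cylinders: for every n ≥ 1 and every admissible sequence (b_1, …, b_n, b_{n+1}) of positive integers (i.e. b_1 ≤ … ≤ b_n ≤ b_{n+1}), one has b_n/(b_{n+1}(b_{n+1}+2)) ≤ P(B(b_1, …, b_n, b_{n+1})) / P(B(b_1, …, b_n)) ≤ (b_n + 1)/(b_{n+1}(b_{n+1}+1)). -/
open MeasureTheory Set

/-- The cylinder `B(b_1, …, b_n)`. -/
noncomputable def ecfCylinder (n : ℕ) (b : ℕ → ℕ) : Set ℝ :=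
  {x ∈ Set.Ioc (0 : ℝ) 1 | ∀ i, 1 ≤ i → i ≤ n → ecfB i x = (b i : ℤ)}

noncomputable def ecfPsi (k : ℕ) (t : ℝ) : ℝ := 1 / (k * (1 + t))

noncomputable def ecfPhi (b : ℕ → ℕ) : ℕ → ℝ → ℝ
  | 0 => id
  | n + 1 => fun t => ecfPhi b n (ecfPsi (b (n + 1)) t)

lemma ecfPsi_mem {k : ℕ} (hk : 1 ≤ k) {t : ℝ} (ht : 0 ≤ t) (ht' : t < 1 / k) :
    ecfPsi k t ∈ Ioc (1 / ((k : ℝ) + 1)) (1 / k) := by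
  have hk' : (1:ℝ) ≤ k := by exact_mod_cast hk
  have h1 : (0:ℝ) < k := by linarith
  have h2 : (k:ℝ) * t < 1 := by
    rw [mul_comm]; exact (lt_div_iff₀ h1).mp ht'
  constructor
  · rw [ecfPsi, div_lt_div_iff₀ (by linarith) (by positivity)]
    nlinarith
  · rw [ecfPsi, div_le_div_iff₀ (by positivity) h1]
    nlinarith

lemma floor_psi {k : ℕ} (hk : 1 ≤ k) {t : ℝ} (ht : 0 ≤ t) (ht' : t < 1 / k) :
    ⌊1 / ecfPsi k t⌋ = (k : ℤ) := by
  have hk' : (1:ℝ) ≤ k := by exact_mod_cast hk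
  have h1 : (0:ℝ) < k := by linarith
  have h2 : (k:ℝ) * t < 1 := by
    rw [mul_comm]; exact (lt_div_iff₀ h1).mp ht'
  have h3 : 1 / ecfPsi k t = (k:ℝ) * (1 + t) := by
    rw [ecfPsi, one_div_one_div]
  rw [h3, Int.floor_eq_iff]
  push_cast
  constructor <;> nlinarith

lemma ecfT_psi {k : ℕ} (hk : 1 ≤ k) {t : ℝ} (ht : 0 ≤ t) (ht' : t < 1 / k) :
    ecfT (ecfPsi k t) = t := by
  have hk' : (1:ℝ) ≤ k := by exact_mod_cast hk
  have h1 : (0:ℝ) < k := by linarith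
  have hne : ecfPsi k t ≠ 0 := by
    have h := (ecfPsi_mem hk ht ht').1
    have : (0:ℝ) < ecfPsi k t := lt_trans (by positivity) h
    linarith
  rw [ecfT, if_neg hne, floor_psi hk ht ht']
  have h3 : 1 / ecfPsi k t = (k:ℝ) * (1 + t) := by rw [ecfPsi, one_div_one_div]
  rw [h3]
  push_cast
  field_simp
  ring

lemma sect_of_floor {k : ℕ} (hk : 1 ≤ k) {x : ℝ} (hx : x ≠ 0)
    (hfl : ⌊1 / x⌋ = (k : ℤ)) :
    x = ecfPsi k (ecfT x) ∧ 0 ≤ ecfT x ∧ ecfT x < 1 / k := by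
  have hk' : (1:ℝ) ≤ k := by exact_mod_cast hk
  have h1 : (0:ℝ) < k := by linarith
  have hxpos : 0 < x := by
    by_contra h
    push_neg at h
    have h2 : 1/x ≤ 0 := one_div_nonpos.mpr h
    have h3 : ⌊1/x⌋ ≤ 0 := Int.floor_nonpos h2
    omega
  have hle : (k:ℝ) ≤ 1 / x := by
    have := Int.floor_le (1/x); rw [hfl] at this; exact_mod_cast this
  have hlt : 1 / x < (k:ℝ) + 1 := by
    have := Int.lt_floor_add_one (1/x); rw [hfl] at this; exact_mod_cast this
  have hT : ecfT x = (1/x - k) / k := by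
    rw [ecfT, if_neg hx, hfl]; push_cast; ring
  refine ⟨?_, ?_, ?_⟩
  · rw [hT, ecfPsi]
    have hxne : x ≠ 0 := hx
    field_simp
    ring
  · rw [hT]
    have : (0:ℝ) ≤ 1/x - k := by linarith
    positivity
  · rw [hT, div_lt_div_iff₀ h1 h1]
    nlinarith
-- chunk 2, to be appended after b.lean content
lemma ecfT_zero : ecfT 0 = 0 := by simp [ecfT]

lemma ecfB_succ {i : ℕ} (hi : 1 ≤ i) (x : ℝ) : ecfB (i + 1) x = ecfB i (ecfT x) := by
  obtain ⟨j, rfl⟩ := Nat.exists_eq_add_of_le hi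
  simp only [ecfB, Nat.add_sub_cancel]
  rw [show 1 + j - 1 = j by omega, show 1 + j = j + 1 by omega,
    Function.iterate_succ_apply]

lemma mem_cyl_succ {n : ℕ} (hn : 1 ≤ n) {b : ℕ → ℕ} (hb2 : 1 ≤ b 2) {x : ℝ} :
    x ∈ ecfCylinder (n + 1) b ↔
      x ∈ Ioc (0:ℝ) 1 ∧ ⌊1 / x⌋ = (b 1 : ℤ) ∧
        ecfT x ∈ ecfCylinder n (fun i => b (i + 1)) := by
  constructor
  · rintro ⟨hIoc, h⟩
    have h1 : ecfB 1 x = (b 1 : ℤ) := h 1 le_rfl (by omega)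
    have hfl : ⌊1 / x⌋ = (b 1 : ℤ) := by simpa [ecfB] using h1
    have h2 : ecfB 2 x = (b 2 : ℤ) := h 2 (by omega) (by omega)
    have hfl2 : ⌊1 / ecfT x⌋ = (b 2 : ℤ) := by
      have := (ecfB_succ (i := 1) le_rfl x).symm.trans h2
      simpa [ecfB] using this
    have hTpos : 0 < ecfT x := by
      by_contra hc
      push_neg at hc
      have h3 : 1 / ecfT x ≤ 0 := one_div_nonpos.mpr hc
      have h4 : ⌊1 / ecfT x⌋ ≤ 0 := Int.floor_nonpos h3
      omega
    have hTle : ecfT x ≤ 1 := by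
      have h5 : (1:ℝ) ≤ 1 / ecfT x := by
        have : (1:ℤ) ≤ ⌊1 / ecfT x⌋ := by omega
        calc (1:ℝ) = ((1:ℤ):ℝ) := by norm_num
        _ ≤ ⌊1 / ecfT x⌋ := by exact_mod_cast this
        _ ≤ 1 / ecfT x := Int.floor_le _
      have := (le_div_iff₀ hTpos).mp h5
      linarith
    refine ⟨hIoc, hfl, ⟨hTpos, hTle⟩, fun i hi hi' => ?_⟩
    rw [← ecfB_succ hi]
    exact h (i + 1) (by omega) (by omega)
  · rintro ⟨hIoc, hfl, hT⟩
    refine ⟨hIoc, fun i hi hi' => ?_⟩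
    rcases Nat.exists_eq_add_of_le hi with ⟨j, rfl⟩
    rcases Nat.eq_zero_or_pos j with rfl | hj
    · simpa [ecfB] using hfl
    · rw [show 1 + j = j + 1 by omega, ecfB_succ (by omega)]
      exact hT.2 j hj (by omega)

lemma ecfPhi_shift (b : ℕ → ℕ) : ∀ n t,
    ecfPhi b (n + 1) t = ecfPsi (b 1) (ecfPhi (fun i => b (i + 1)) n t) := by
  intro n
  induction n with
  | zero => intro t; rfl
  | succ m ih =>
      intro t
      show ecfPhi b (m + 1) (ecfPsi (b (m + 2)) t) = _
      rw [ih (ecfPsi (b (m + 2)) t)]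
      rfl

/-- Upper characterization: every point of the cylinder is `Φ` of its tail. -/
lemma cyl_sub_phi : ∀ (n : ℕ) (b : ℕ → ℕ), (∀ i, 1 ≤ i → i ≤ n + 1 → 1 ≤ b i) →
    ∀ x ∈ ecfCylinder (n + 1) b,
      x = ecfPhi b (n + 1) (ecfT^[n + 1] x) ∧ 0 ≤ ecfT^[n + 1] x ∧
        ecfT^[n + 1] x < 1 / (b (n + 1)) := by
  intro n
  induction n with
  | zero =>
      rintro b hb x ⟨hIoc, h⟩
      have hfl : ⌊1 / x⌋ = (b 1 : ℤ) := by simpa [ecfB] using h 1 le_rfl le_rfl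
      obtain ⟨hx1, hx2, hx3⟩ := sect_of_floor (hb 1 le_rfl le_rfl) (ne_of_gt hIoc.1) hfl
      exact ⟨hx1, hx2, hx3⟩
  | succ m ih =>
      rintro b hb x hx
      rw [mem_cyl_succ (by omega) (hb 2 (by omega) (by omega))] at hx
      obtain ⟨hIoc, hfl, hT⟩ := hx
      obtain ⟨h1, h2, h3⟩ := ih (fun i => b (i + 1))
        (fun i hi hi' => hb (i + 1) (by omega) (by omega)) (ecfT x) hT
      obtain ⟨hx1, _, _⟩ := sect_of_floor (hb 1 (by omega) (by omega)) (ne_of_gt hIoc.1) hfl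
      have hiter : ecfT^[m + 2] x = ecfT^[m + 1] (ecfT x) := Function.iterate_succ_apply ecfT (m+1) x
      refine ⟨?_, by rw [hiter]; exact h2, by rw [hiter]; exact h3⟩
      rw [ecfPhi_shift, hiter, ← h1]
      exact hx1

/-- Lower characterization: `Φ` of the open parameter interval lies in the cylinder. -/
lemma phi_sub_cyl : ∀ (n : ℕ) (b : ℕ → ℕ), (∀ i, 1 ≤ i → i ≤ n + 1 → 1 ≤ b i) →
    (∀ i, 1 ≤ i → i ≤ n → b i ≤ b (i + 1)) →
    ∀ t : ℝ, 0 < t → t < 1 / (b (n + 1)) →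
      ecfPhi b (n + 1) t ∈ ecfCylinder (n + 1) b ∧ ecfT^[n + 1] (ecfPhi b (n + 1) t) = t := by
  intro n
  induction n with
  | zero =>
      intro b hb _ t ht ht'
      have hb1 : 1 ≤ b 1 := hb 1 le_rfl le_rfl
      have hb1' : (1:ℝ) ≤ b 1 := by exact_mod_cast hb1
      have hmem := ecfPsi_mem hb1 ht.le ht'
      have hfl := floor_psi hb1 ht.le ht'
      have hTt := ecfT_psi hb1 ht.le ht'
      have hx0 : (0:ℝ) < ecfPsi (b 1) t := lt_trans (by positivity) hmem.1
      have hx1 : ecfPsi (b 1) t ≤ 1 := le_trans hmem.2 (by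
        rw [div_le_one (by linarith)]; exact hb1')
      constructor
      · refine ⟨⟨hx0, hx1⟩, fun i hi hi' => ?_⟩
        have : i = 1 := by omega
        subst this
        show ⌊1 / (ecfT^[0] _)⌋ = _
        exact hfl
      · show ecfT^[1] _ = t
        exact hTt
  | succ m ih =>
      intro b hb hmono t ht ht'
      set b' : ℕ → ℕ := fun i => b (i + 1) with hb'
      have hb1 : 1 ≤ b 1 := hb 1 (by omega) (by omega)
      obtain ⟨hycyl, hyiter⟩ := ih b' (fun i hi hi' => hb (i + 1) (by omega) (by omega))
        (fun i hi hi' => hmono (i + 1) (by omega) (by omega)) t ht ht'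
      set y := ecfPhi b' (m + 1) t with hy
      have hyIoc : y ∈ Ioc (0:ℝ) 1 := hycyl.1
      have hfl2 : ⌊1 / y⌋ = (b 2 : ℤ) := by
        simpa [ecfB] using hycyl.2 1 le_rfl (by omega)
      obtain ⟨hy1, hy2, hy3⟩ := sect_of_floor (hb 2 (by omega) (by omega)) (ne_of_gt hyIoc.1) hfl2
      have hTy_pos : 0 < ecfT y := by
        rcases lt_or_eq_of_le hy2 with h | h
        · exact h
        · exfalso
          have : ecfT^[m + 1] y = 0 := by
            have : ecfT^[m + 1] y = ecfT^[m] (ecfT y) := Function.iterate_succ_apply ecfT m y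
            rw [this, ← h]
            exact Function.iterate_fixed ecfT_zero m
          rw [hyiter] at this
          linarith
      have hb12 : b 1 ≤ b 2 := hmono 1 le_rfl (by omega)
      have hb2' : (1:ℝ) ≤ b 2 := by exact_mod_cast hb 2 (by omega) (by omega)
      have hylt : y < 1 / (b 1) := by
        have h1 : y < 1 / (b 2) := by
          rw [hy1, ecfPsi]
          apply div_lt_div_of_pos_left one_pos (by positivity)
          nlinarith
        apply lt_of_lt_of_le h1
        apply one_div_le_one_div_of_le (by exact_mod_cast hb1)
        exact_mod_cast hb12
      have hy0 : 0 ≤ y := hyIoc.1.le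
      have hflx := floor_psi hb1 hy0 hylt
      have hTx := ecfT_psi hb1 hy0 hylt
      have hmemx := ecfPsi_mem hb1 hy0 hylt
      have hb1' : (1:ℝ) ≤ b 1 := by exact_mod_cast hb1
      have hxIoc : ecfPsi (b 1) y ∈ Ioc (0:ℝ) 1 := by
        refine ⟨lt_trans (by positivity) hmemx.1, le_trans hmemx.2 ?_⟩
        rw [div_le_one (by linarith)]; exact hb1'
      have hphix : ecfPhi b (m + 2) t = ecfPsi (b 1) y := by
        rw [ecfPhi_shift]
      constructor
      · rw [hphix, mem_cyl_succ (by omega) (hb 2 (by omega) (by omega))]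
        exact ⟨hxIoc, hflx, by rw [hTx]; exact hycyl⟩
      · rw [hphix]
        have : ecfT^[m + 2] (ecfPsi (b 1) y) = ecfT^[m + 1] (ecfT (ecfPsi (b 1) y)) :=
          Function.iterate_succ_apply ecfT (m + 1) _
        rw [this, hTx, hyiter]
-- chunk 3
/-- bottom row `(c_n, d_n)` of the Möbius matrix of `Φ_n`. -/
def ecfC (b : ℕ → ℕ) : ℕ → ℕ × ℕ
  | 0 => (0, 1)
  | n + 1 => (b (n + 1) * (ecfC b n).2, (ecfC b n).1 + b (n + 1) * (ecfC b n).2)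

/-- `D_n = b_1 ⋯ b_n`. -/
def ecfDd (b : ℕ → ℕ) : ℕ → ℕ
  | 0 => 1
  | n + 1 => ecfDd b n * b (n + 1)

lemma ecfC_le (b : ℕ → ℕ) : ∀ n, (ecfC b n).1 ≤ (ecfC b n).2
  | 0 => by simp [ecfC]
  | n + 1 => by simp [ecfC]

lemma ecfC_d_pos (b : ℕ → ℕ) : ∀ n, (∀ i, 1 ≤ i → i ≤ n → 1 ≤ b i) → 1 ≤ (ecfC b n).2
  | 0 => fun _ => le_rfl
  | n + 1 => fun h => by
      have h1 := ecfC_d_pos b n (fun i hi hi' => h i hi (by omega))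
      have h2 := h (n + 1) (by omega) le_rfl
      simp only [ecfC]
      calc 1 ≤ b (n+1) * (ecfC b n).2 := Nat.one_le_iff_ne_zero.2 (by positivity)
      _ ≤ _ := Nat.le_add_left _ _

lemma ecfDd_pos (b : ℕ → ℕ) : ∀ n, (∀ i, 1 ≤ i → i ≤ n → 1 ≤ b i) → 1 ≤ ecfDd b n
  | 0 => fun _ => le_rfl
  | n + 1 => fun h => by
      have h1 := ecfDd_pos b n (fun i hi hi' => h i hi (by omega))
      have h2 := h (n + 1) (by omega) le_rfl
      simp only [ecfDd]
      exact Nat.one_le_iff_ne_zero.2 (by positivity)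

lemma phi_diff : ∀ (n : ℕ) (b : ℕ → ℕ), (∀ i, 1 ≤ i → i ≤ n → 1 ≤ b i) →
    ∀ t1 t2 : ℝ, 0 ≤ t1 → 0 ≤ t2 →
      |ecfPhi b n t2 - ecfPhi b n t1| =
        (ecfDd b n) * |t2 - t1| /
          (((ecfC b n).1 * t1 + (ecfC b n).2) * ((ecfC b n).1 * t2 + (ecfC b n).2)) := by
  intro n
  induction n with
  | zero => intro b _ t1 t2 _ _; simp [ecfPhi, ecfC, ecfDd]
  | succ m ih =>
      intro b hb t1 t2 ht1 ht2
      have hB : 1 ≤ b (m + 1) := hb (m + 1) (by omega) le_rfl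
      have hB' : (1:ℝ) ≤ b (m + 1) := by exact_mod_cast hB
      set B : ℝ := (b (m + 1) : ℝ) with hBdef
      have hBpos : 0 < B := by linarith
      set c : ℝ := ((ecfC b m).1 : ℝ) with hc
      set d : ℝ := ((ecfC b m).2 : ℝ) with hd
      have hc0 : 0 ≤ c := by positivity
      have hd1 : (1:ℝ) ≤ d := by
        rw [hd]; exact_mod_cast ecfC_d_pos b m (fun i hi hi' => hb i hi (by omega))
      set s1 : ℝ := ecfPsi (b (m + 1)) t1 with hs1
      set s2 : ℝ := ecfPsi (b (m + 1)) t2 with hs2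
      have hs1v : s1 = 1 / (B * (1 + t1)) := rfl
      have hs2v : s2 = 1 / (B * (1 + t2)) := rfl
      have hs1pos : 0 < s1 := by rw [hs1v]; positivity
      have hs2pos : 0 < s2 := by rw [hs2v]; positivity
      have key := ih b (fun i hi hi' => hb i hi (by omega)) s1 s2 hs1pos.le hs2pos.le
      have hphi : ∀ t : ℝ, ecfPhi b (m + 1) t = ecfPhi b m (ecfPsi (b (m + 1)) t) :=
        fun t => rfl
      have hC1 : ((ecfC b (m+1)).1 : ℝ) = B * d := by
        simp [ecfC, hBdef, hd]
      have hC2 : ((ecfC b (m+1)).2 : ℝ) = c + B * d := by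
        simp [ecfC, hBdef, hc, hd]
      have hD : (ecfDd b (m+1) : ℝ) = (ecfDd b m : ℝ) * B := by
        simp [ecfDd, hBdef]
      rw [hphi t1, hphi t2, ← hs1, ← hs2, key, hC1, hC2, hD]
      have e1 : c * s1 + d = (B * d * t1 + (c + B * d)) / (B * (1 + t1)) := by
        rw [hs1v]; field_simp; ring
      have e2 : c * s2 + d = (B * d * t2 + (c + B * d)) / (B * (1 + t2)) := by
        rw [hs2v]; field_simp; ring
      have e3 : |s2 - s1| = |t2 - t1| / (B * (1 + t1) * (1 + t2)) := by
        have : s2 - s1 = (t1 - t2) / (B * (1 + t1) * (1 + t2)) := by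
          rw [hs1v, hs2v]; field_simp; ring
        have hdpos : (0:ℝ) < B * (1 + t1) * (1 + t2) := by
          apply mul_pos (mul_pos hBpos (by linarith)) (by linarith)
        rw [this, abs_div, abs_of_pos hdpos, abs_sub_comm]
      have hden1 : (0:ℝ) < B * d * t1 + (c + B * d) := by positivity
      have hden2 : (0:ℝ) < B * d * t2 + (c + B * d) := by positivity
      rw [e1, e2, e3]
      rw [div_eq_div_iff (by positivity) (by positivity)]
      field_simp

lemma phi_btw : ∀ (n : ℕ) (b : ℕ → ℕ), (∀ i, 1 ≤ i → i ≤ n → 1 ≤ b i) →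
    ∀ t1 t t2 : ℝ, 0 ≤ t1 → t1 ≤ t → t ≤ t2 →
      min (ecfPhi b n t1) (ecfPhi b n t2) ≤ ecfPhi b n t ∧
        ecfPhi b n t ≤ max (ecfPhi b n t1) (ecfPhi b n t2) := by
  intro n
  induction n with
  | zero =>
      intro b _ t1 t t2 _ h1 h2
      simp only [ecfPhi, id]
      exact ⟨le_trans (min_le_left _ _) h1, le_trans h2 (le_max_right _ _)⟩
  | succ m ih =>
      intro b hb t1 t t2 ht1 h1 h2
      have hB : 1 ≤ b (m + 1) := hb (m + 1) (by omega) le_rfl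
      have hB' : (1:ℝ) ≤ b (m + 1) := by exact_mod_cast hB
      have hanti : ∀ u v : ℝ, 0 ≤ u → u ≤ v →
          ecfPsi (b (m + 1)) v ≤ ecfPsi (b (m + 1)) u := by
        intro u v hu huv
        unfold ecfPsi
        apply one_div_le_one_div_of_le (by nlinarith)
        nlinarith
      have ht2' : (0:ℝ) ≤ t2 := le_trans ht1 (le_trans h1 h2)
      have hpos : 0 ≤ ecfPsi (b (m + 1)) t2 := by
        unfold ecfPsi
        have : (0:ℝ) < (b (m+1) : ℝ) * (1 + t2) := by nlinarith
        positivity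
      have := ih b (fun i hi hi' => hb i hi (by omega))
        (ecfPsi (b (m + 1)) t2) (ecfPsi (b (m + 1)) t) (ecfPsi (b (m + 1)) t1)
        hpos (hanti t t2 (le_trans ht1 h1) h2) (hanti t1 t ht1 h1)
      have hphi : ∀ s : ℝ, ecfPhi b (m + 1) s = ecfPhi b m (ecfPsi (b (m + 1)) s) :=
        fun s => rfl
      rw [hphi t1, hphi t, hphi t2]
      exact ⟨by rw [min_comm]; exact this.1, by rw [max_comm]; exact this.2⟩
-- chunk 4
lemma phi_contOn : ∀ (n : ℕ) (b : ℕ → ℕ), (∀ i, 1 ≤ i → i ≤ n → 1 ≤ b i) →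
    ContinuousOn (ecfPhi b n) (Ici (0:ℝ)) := by
  intro n
  induction n with
  | zero => intro b _; exact continuousOn_id
  | succ m ih =>
      intro b hb
      have hB : 1 ≤ b (m + 1) := hb (m + 1) (by omega) le_rfl
      have hB' : (1:ℝ) ≤ b (m + 1) := by exact_mod_cast hB
      have hcont : ContinuousOn (ecfPsi (b (m + 1))) (Ici (0:ℝ)) := by
        apply ContinuousOn.div continuousOn_const
        · exact (continuous_const.mul (continuous_const.add continuous_id)).continuousOn
        · intro t ht
          have : (0:ℝ) ≤ t := ht
          have : (0:ℝ) < (b (m + 1) : ℝ) * (1 + t) := by nlinarith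
          exact ne_of_gt this
      have hmaps : MapsTo (ecfPsi (b (m + 1))) (Ici (0:ℝ)) (Ici (0:ℝ)) := by
        intro t ht
        have h0 : (0:ℝ) ≤ t := ht
        have : (0:ℝ) < (b (m + 1) : ℝ) * (1 + t) := by nlinarith
        show (0:ℝ) ≤ 1 / ((b (m + 1) : ℝ) * (1 + t))
        positivity
      exact (ih b (fun i hi hi' => hb i hi (by omega))).comp hcont hmaps

lemma cyl_volume (n : ℕ) (b : ℕ → ℕ) (hpos : ∀ i, 1 ≤ i → i ≤ n + 1 → 1 ≤ b i)
    (hmono : ∀ i, 1 ≤ i → i ≤ n → b i ≤ b (i + 1)) :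
    volume (ecfCylinder (n + 1) b) = ENNReal.ofReal
      ((ecfDd b (n + 1) : ℝ) /
        ((ecfC b (n + 1)).2 * ((ecfC b (n + 1)).1 + b (n + 1) * (ecfC b (n + 1)).2))) := by
  have hpos' : ∀ i, 1 ≤ i → i ≤ n + 1 → 1 ≤ b i := hpos
  have hB : 1 ≤ b (n + 1) := hpos (n + 1) (by omega) le_rfl
  have hB' : (1:ℝ) ≤ b (n + 1) := by exact_mod_cast hB
  set Br : ℝ := (b (n + 1) : ℝ) with hBr
  have hBpos : 0 < Br := by linarith
  set u : ℝ := 1 / Br with hu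
  have hupos : 0 < u := by positivity
  set c : ℝ := ((ecfC b (n + 1)).1 : ℝ) with hc
  set d : ℝ := ((ecfC b (n + 1)).2 : ℝ) with hd
  set D : ℝ := (ecfDd b (n + 1) : ℝ) with hD
  have hc0 : 0 ≤ c := by rw [hc]; positivity
  have hd1 : (1:ℝ) ≤ d := by rw [hd]; exact_mod_cast ecfC_d_pos b (n + 1) hpos'
  have hD1 : (1:ℝ) ≤ D := by rw [hD]; exact_mod_cast ecfDd_pos b (n + 1) hpos'
  set P : ℝ := ecfPhi b (n + 1) 0 with hP
  set Q : ℝ := ecfPhi b (n + 1) u with hQ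
  have habs : |Q - P| = D * u / (d * (c * u + d)) := by
    have h := phi_diff (n + 1) b hpos' 0 u le_rfl hupos.le
    rw [← hP, ← hQ, ← hc, ← hd, ← hD] at h
    rw [h, sub_zero, abs_of_pos hupos]
    ring
  have hne : P ≠ Q := by
    intro h
    rw [h, sub_self, abs_zero] at habs
    have : 0 < D * u / (d * (c * u + d)) := by positivity
    linarith [habs ▸ this]
  have hminmax : min P Q < max P Q := min_lt_max.mpr hne
  -- upper inclusion
  have hsub1 : ecfCylinder (n + 1) b ⊆ Icc (min P Q) (max P Q) := by
    intro x hx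
    obtain ⟨h1, h2, h3⟩ := cyl_sub_phi n b hpos' x hx
    have h3' : ecfT^[n+1] x ≤ u := le_of_lt h3
    have := phi_btw (n + 1) b hpos' 0 (ecfT^[n+1] x) u le_rfl h2 h3'
    rw [← hP, ← hQ] at this
    rw [h1]
    exact ⟨this.1, this.2⟩
  -- lower inclusion
  have hsub2 : Ioo (min P Q) (max P Q) ⊆ ecfCylinder (n + 1) b := by
    intro y hy
    have hcont : ContinuousOn (ecfPhi b (n + 1)) (uIcc 0 u) := by
      apply (phi_contOn (n + 1) b hpos').mono
      rw [uIcc_of_le hupos.le]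
      exact Icc_subset_Ici_self
    have hivt := intermediate_value_uIcc hcont
    have hyu : y ∈ uIcc P Q := by
      rw [mem_uIcc]
      rcases le_total P Q with h | h
      · left
        rw [min_eq_left h, max_eq_right h] at hy
        exact ⟨hy.1.le, hy.2.le⟩
      · right
        rw [min_eq_right h, max_eq_left h] at hy
        exact ⟨hy.1.le, hy.2.le⟩
    obtain ⟨s, hs, hsy⟩ := hivt hyu
    rw [uIcc_of_le hupos.le] at hs
    have hs0 : s ≠ 0 := by
      rintro rfl
      rw [← hP] at hsy
      rcases le_total P Q with h | h
      · rw [min_eq_left h] at hy; exact lt_irrefl _ (hsy ▸ hy.1)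
      · rw [max_eq_left h] at hy; exact lt_irrefl _ (hsy ▸ hy.2)
    have hsu : s ≠ u := by
      rintro rfl
      rw [← hQ] at hsy
      rcases le_total P Q with h | h
      · rw [max_eq_right h] at hy; exact lt_irrefl _ (hsy ▸ hy.2)
      · rw [min_eq_right h] at hy; exact lt_irrefl _ (hsy ▸ hy.1)
    have hspos : 0 < s := lt_of_le_of_ne hs.1 (Ne.symm hs0)
    have hslt : s < 1 / (b (n + 1) : ℝ) := lt_of_le_of_ne hs.2 hsu
    obtain ⟨hmem, _⟩ := phi_sub_cyl n b hpos hmono s hspos hslt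
    rw [← hsy]
    exact hmem
  -- volume computation
  have hvol : volume (ecfCylinder (n + 1) b) = ENNReal.ofReal (max P Q - min P Q) := by
    apply le_antisymm
    · calc volume (ecfCylinder (n + 1) b) ≤ volume (Icc (min P Q) (max P Q)) :=
          measure_mono hsub1
      _ = ENNReal.ofReal (max P Q - min P Q) := Real.volume_Icc
    · calc ENNReal.ofReal (max P Q - min P Q) = volume (Ioo (min P Q) (max P Q)) :=
          Real.volume_Ioo.symm
      _ ≤ volume (ecfCylinder (n + 1) b) := measure_mono hsub2
  rw [hvol, max_sub_min_eq_abs, habs]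
  congr 1
  rw [hu]
  rw [div_eq_div_iff (by positivity) (by positivity)]
  field_simp
lemma ratio_low (c d β B : ℝ) (hc0 : 0 ≤ c) (hcd : c ≤ d) (hd0 : 0 < d)
    (hβ0 : 0 ≤ β) (hβB : β ≤ B) (hB2 : 0 ≤ B) :
    β * ((c + B * d) * (c + (B + 1) * d)) ≤ B * (B + 2) * (d * (c + β * d)) := by
  nlinarith [mul_nonneg (mul_nonneg (sub_nonneg.2 hcd) hβ0) (mul_nonneg hB2 (mul_pos hd0 hd0).le),
    mul_nonneg (mul_nonneg hc0 (mul_pos hd0 hd0).le)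
      (mul_nonneg (by linarith : (0:ℝ) ≤ B + 2) (sub_nonneg.2 hβB)),
    mul_nonneg (mul_nonneg (mul_nonneg hβ0 hc0) hd0.le) (sub_nonneg.2 hcd)]

lemma ratio_up (c d β B : ℝ) (hc0 : 0 ≤ c) (hcd : c ≤ d) (hd0 : 0 < d)
    (hβ0 : 0 ≤ β) (hβB : β ≤ B) (hB2 : 0 ≤ B) :
    B * (B + 1) * (d * (c + β * d)) ≤ (β + 1) * ((c + B * d) * (c + (B + 1) * d)) := by
  nlinarith [mul_nonneg (mul_nonneg (by linarith : (0:ℝ) ≤ β + 1) hc0) hc0,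
    mul_nonneg (mul_nonneg (mul_nonneg (by linarith : (0:ℝ) ≤ β + 1) hc0) hd0.le)
      (by linarith : (0:ℝ) ≤ 2 * B + 1),
    mul_nonneg (mul_nonneg (mul_nonneg hB2 (by linarith : (0:ℝ) ≤ B + 1)) hd0.le)
      (sub_nonneg.2 hcd)]
set_option maxHeartbeats 1000000 in
/-- Ratio bounds for consecutive cylinders: for an admissible `(b_1, …, b_n, b_{n+1})`,
`b_n/(b_{n+1}(b_{n+1}+2)) ≤ P(B(b_1,…,b_{n+1}))/P(B(b_1,…,b_n)) ≤ (b_n+1)/(b_{n+1}(b_{n+1}+1))`. -/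
theorem ecf_cylinder_ratio (n : ℕ) (hn : 1 ≤ n) (b : ℕ → ℕ)
    (hpos : ∀ i, 1 ≤ i → i ≤ n + 1 → 1 ≤ b i)
    (hmono : ∀ i, 1 ≤ i → i ≤ n → b i ≤ b (i + 1)) :
    (b n : ENNReal) / ((b (n + 1) : ENNReal) * ((b (n + 1) : ENNReal) + 2)) ≤
        volume (ecfCylinder (n + 1) b) / volume (ecfCylinder n b) ∧
      volume (ecfCylinder (n + 1) b) / volume (ecfCylinder n b) ≤
        ((b n : ENNReal) + 1) / ((b (n + 1) : ENNReal) * ((b (n + 1) : ENNReal) + 1)) := by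
  obtain ⟨m, rfl⟩ : ∃ m, n = m + 1 := ⟨n - 1, by omega⟩
  have hv1 := cyl_volume m b (fun i hi hi' => hpos i hi (by omega))
    (fun i hi hi' => hmono i hi (by omega))
  have hv2 := cyl_volume (m + 1) b hpos hmono
  set c : ℝ := ((ecfC b (m + 1)).1 : ℝ) with hc
  set d : ℝ := ((ecfC b (m + 1)).2 : ℝ) with hd
  set D : ℝ := (ecfDd b (m + 1) : ℝ) with hD
  set β : ℝ := (b (m + 1) : ℝ) with hβ
  set B : ℝ := (b (m + 2) : ℝ) with hB
  have hβ1 : (1:ℝ) ≤ β := by rw [hβ]; exact_mod_cast hpos (m + 1) (by omega) (by omega)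
  have hB1 : (1:ℝ) ≤ B := by rw [hB]; exact_mod_cast hpos (m + 2) (by omega) (by omega)
  have hβB : β ≤ B := by rw [hβ, hB]; exact_mod_cast hmono (m + 1) (by omega) (by omega)
  have hc0 : 0 ≤ c := by rw [hc]; positivity
  have hd1 : (1:ℝ) ≤ d := by
    rw [hd]; exact_mod_cast ecfC_d_pos b (m + 1) (fun i hi hi' => hpos i hi (by omega))
  have hcd : c ≤ d := by rw [hc, hd]; exact_mod_cast ecfC_le b (m + 1)
  have hD1 : (1:ℝ) ≤ D := by
    rw [hD]; exact_mod_cast ecfDd_pos b (m + 1) (fun i hi hi' => hpos i hi (by omega))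
  have hd0 : (0:ℝ) < d := by linarith
  have hC1 : ((ecfC b (m + 2)).1 : ℝ) = B * d := by simp [ecfC, hB, hd]
  have hC2 : ((ecfC b (m + 2)).2 : ℝ) = c + B * d := by simp [ecfC, hB, hc, hd]
  have hD2 : (ecfDd b (m + 2) : ℝ) = D * B := by simp [ecfDd, hB, hD]
  rw [hC1, hC2, hD2] at hv2
  set V1 : ℝ := D / (d * (c + β * d)) with hV1
  set V2 : ℝ := D * B / ((c + B * d) * (B * d + B * (c + B * d))) with hV2
  have hV1pos : 0 < V1 := by rw [hV1]; positivity
  have hV2pos : 0 < V2 := by rw [hV2]; positivity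
  have hratio : volume (ecfCylinder (m + 1 + 1) b) / volume (ecfCylinder (m + 1) b) =
      ENNReal.ofReal (V2 / V1) := by
    rw [hv1, hv2, ← ENNReal.ofReal_div_of_pos hV1pos]
  have hne1 : d ≠ 0 := ne_of_gt hd0
  have hne2 : c + β * d ≠ 0 := by positivity
  have hne3 : D ≠ 0 := by positivity
  have hne4 : c + B * d ≠ 0 := by positivity
  have hne5 : B * d + B * (c + B * d) ≠ 0 := by positivity
  have key : V2 / V1 = d * (c + β * d) / ((c + B * d) * (c + (B + 1) * d)) := by
    rw [hV2, hV1]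
    field_simp
    ring
  have hlow : β / (B * (B + 2)) ≤ V2 / V1 := by
    rw [key, div_le_div_iff₀ (by positivity) (by positivity)]
    have := ratio_low c d β B hc0 hcd hd0 (by linarith) hβB (by linarith)
    linarith
  have hup : V2 / V1 ≤ (β + 1) / (B * (B + 1)) := by
    rw [key, div_le_div_iff₀ (by positivity) (by positivity)]
    have := ratio_up c d β B hc0 hcd hd0 (by linarith) hβB (by linarith)
    linarith
  have hcast1 : (b (m + 1) : ENNReal) / ((b (m + 2) : ENNReal) * ((b (m + 2) : ENNReal) + 2)) =
      ENNReal.ofReal (β / (B * (B + 2))) := by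
    rw [ENNReal.ofReal_div_of_pos (by positivity),
      ENNReal.ofReal_mul (by positivity : (0:ℝ) ≤ B),
      ENNReal.ofReal_add (by positivity : (0:ℝ) ≤ B) (by norm_num : (0:ℝ) ≤ 2)]
    rw [hβ, hB]
    norm_num [ENNReal.ofReal_natCast]
  have hcast2 : ((b (m + 1) : ENNReal) + 1) / ((b (m + 2) : ENNReal) * ((b (m + 2) : ENNReal) + 1)) =
      ENNReal.ofReal ((β + 1) / (B * (B + 1))) := by
    rw [ENNReal.ofReal_div_of_pos (by positivity),
      ENNReal.ofReal_mul (by positivity : (0:ℝ) ≤ B),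
      ENNReal.ofReal_add (by positivity : (0:ℝ) ≤ B) (by norm_num : (0:ℝ) ≤ 1),
      ENNReal.ofReal_add (by positivity : (0:ℝ) ≤ β) (by norm_num : (0:ℝ) ≤ 1)]
    rw [hβ, hB]
    norm_num [ENNReal.ofReal_natCast]
  constructor
  · rw [hratio]
    calc (b (m + 1) : ENNReal) / ((b (m + 1 + 1) : ENNReal) * ((b (m + 1 + 1) : ENNReal) + 2))
        = ENNReal.ofReal (β / (B * (B + 2))) := hcast1
      _ ≤ ENNReal.ofReal (V2 / V1) := ENNReal.ofReal_le_ofReal hlow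
  · rw [hratio]
    calc ENNReal.ofReal (V2 / V1) ≤ ENNReal.ofReal ((β + 1) / (B * (B + 1))) :=
        ENNReal.ofReal_le_ofReal hup
      _ = _ := hcast2.symm
end

section
/- Let θ < 1 be a real number. Then for every integer j > 1: (i) ∑_{k=j}^{∞} (j/(k(k+2)))·(k/j)^θ ≥ (j/(j+2))·(1/(1−θ)), and (ii) ∑_{k=j}^{∞} ((j+1)/(k(k+1)))·(k/j)^θ ≤ (1 + 1/j)·(1 − 1/j)^{θ−1}·(1/(1−θ)). -/
open Real Filter

/-- Tangent line inequality for convex `x ^ p`, `p ≤ 0`. -/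
lemma ecf_rpow_tangent {a b p : ℝ} (ha : 0 < a) (hb : 0 < b) (hp : p ≤ 0) :
    a ^ p + p * a ^ (p - 1) * (b - a) ≤ b ^ p := by
  have hx : (0:ℝ) < b / a := div_pos hb ha
  have hlog : Real.log (b / a) ≤ b / a - 1 := Real.log_le_sub_one_of_pos hx
  have h1 : 1 + p * (b / a - 1) ≤ (b / a) ^ p := by
    rw [Real.rpow_def_of_pos hx]
    calc 1 + p * (b / a - 1) ≤ Real.log (b / a) * p + 1 := by nlinarith
      _ ≤ Real.exp (Real.log (b / a) * p) := by linarith [Real.add_one_le_exp (Real.log (b/a) * p)]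
  have h2 : a ^ p * (1 + p * (b / a - 1)) ≤ a ^ p * (b / a) ^ p :=
    mul_le_mul_of_nonneg_left h1 (Real.rpow_pos_of_pos ha p).le
  have h3 : a ^ p * (b / a) ^ p = b ^ p := by
    rw [Real.div_rpow hb.le ha.le]
    field_simp
  have h4 : a ^ (p - 1) = a ^ p / a := Real.rpow_sub_one ha.ne' p
  have h5 : a ^ p * (1 + p * (b / a - 1)) = a ^ p + p * (a ^ p / a) * (b - a) := by
    field_simp
  rw [h3, h5] at h2
  rw [h4]
  exact h2

lemma ecf_key1 {k p : ℝ} (hk : 0 < k) (hp : p ≤ 0) :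
    k ^ p - (k + 1) ^ p ≤ -p * k ^ (p - 1) := by
  have := ecf_rpow_tangent hk (by linarith : (0:ℝ) < k + 1) hp
  nlinarith [this]

lemma ecf_key2 {k p : ℝ} (hk : 1 < k) (hp : p ≤ 0) :
    -p * k ^ (p - 1) ≤ (k - 1) ^ p - k ^ p := by
  have := ecf_rpow_tangent (by linarith : (0:ℝ) < k) (by linarith : (0:ℝ) < k - 1) hp
  nlinarith [this]

/-- Telescoping sum. -/
lemma ecf_hasSum_tele {h : ℕ → ℝ} (hmono : ∀ n, h (n + 1) ≤ h n)
    (hlim : Tendsto h atTop (nhds 0)) :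
    HasSum (fun i => h i - h (i + 1)) (h 0) := by
  rw [hasSum_iff_tendsto_nat_of_nonneg (fun i => sub_nonneg.2 (hmono i))]
  have : (fun n => ∑ i ∈ Finset.range n, (h i - h (i + 1))) = fun n => h 0 - h n := by
    funext n; exact Finset.sum_range_sub' h n
  rw [this]
  simpa using tendsto_const_nhds.sub hlim

/-- Series estimates: for `θ < 1` and an integer `j > 1`,
`∑_{k ≥ j} (j/(k(k+2)))(k/j)^θ ≥ (j/(j+2))·1/(1-θ)` and
`∑_{k ≥ j} ((j+1)/(k(k+1)))(k/j)^θ ≤ (1+1/j)(1-1/j)^{θ-1}·1/(1-θ)`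
(the sums over `k ≥ j` are written via the shift `k = j + i`). -/
theorem ecf_series_estimates (θ : ℝ) (hθ : θ < 1) (j : ℕ) (hj : 1 < j) :
    ((j : ℝ) / (j + 2)) * (1 / (1 - θ)) ≤
      (∑' i : ℕ, (j : ℝ) / (((j : ℝ) + i) * ((j : ℝ) + i + 2)) *
        (((j : ℝ) + i) / j) ^ θ) ∧
    (∑' i : ℕ, ((j : ℝ) + 1) / (((j : ℝ) + i) * ((j : ℝ) + i + 1)) *
        (((j : ℝ) + i) / j) ^ θ) ≤
      (1 + 1 / (j : ℝ)) * (1 - 1 / (j : ℝ)) ^ (θ - 1) * (1 / (1 - θ)) := by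
  set J : ℝ := (j : ℝ) with hJdef
  have hJ2 : (2:ℝ) ≤ J := by
    have h2 : 2 ≤ j := hj
    rw [hJdef]
    exact_mod_cast h2
  have hJ0 : (0:ℝ) < J := by linarith
  have hJ1 : (1:ℝ) < J := by linarith
  have hθ1 : (0:ℝ) < 1 - θ := by linarith
  have hp : θ - 1 ≤ 0 := by linarith
  have hJθ : J ^ θ ≠ 0 := (Real.rpow_pos_of_pos hJ0 θ).ne'
  -- basic facts about k = J + i
  have hk0 : ∀ i : ℕ, (0:ℝ) < J + i := fun i => by positivity
  -- rewriting of the summands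
  have hf : ∀ i : ℕ, J / ((J + i) * (J + i + 2)) * ((J + i) / J) ^ θ
      = J ^ (1 - θ) * ((J + i) ^ (θ - 2) * ((J + i) / (J + i + 2))) := by
    intro i
    have hk := hk0 i
    have e1 : (J + i) ^ θ = (J + i) ^ (θ - 2) * (J + i) ^ (2:ℕ) := by
      rw [← Real.rpow_natCast (J + i) 2, ← Real.rpow_add hk]; norm_num
    have e2 : J ^ (1 - θ) = J / J ^ θ := by
      rw [Real.rpow_sub hJ0, Real.rpow_one]
    rw [Real.div_rpow hk.le hJ0.le, e1, e2]
    field_simp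
  have hf' : ∀ i : ℕ, (J + 1) / ((J + i) * (J + i + 1)) * ((J + i) / J) ^ θ
      = (J + 1) * J ^ (-θ) * ((J + i) ^ (θ - 2) * ((J + i) / (J + i + 1))) := by
    intro i
    have hk := hk0 i
    have e1 : (J + i) ^ θ = (J + i) ^ (θ - 2) * (J + i) ^ (2:ℕ) := by
      rw [← Real.rpow_natCast (J + i) 2, ← Real.rpow_add hk]; norm_num
    have e2 : J ^ (-θ) = 1 / J ^ θ := by
      rw [Real.rpow_neg hJ0.le]; exact inv_eq_one_div _
    rw [Real.div_rpow hk.le hJ0.le, e1, e2]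
    field_simp
  -- summability of the comparison series
  have hS2 : Summable (fun i : ℕ => (J + i) ^ (θ - 2)) := by
    have h1 : Summable (fun n : ℕ => (n:ℝ) ^ (θ - 2)) :=
      Real.summable_nat_rpow.mpr (by linarith)
    have h2 := (summable_nat_add_iff j).mpr h1
    refine h2.congr fun n => ?_
    congr 1
    push_cast
    ring
  -- summability of both series
  have hfnn : ∀ i : ℕ, 0 ≤ J / ((J + i) * (J + i + 2)) * ((J + i) / J) ^ θ := by
    intro i; have := hk0 i; positivity
  have hfnn' : ∀ i : ℕ, 0 ≤ (J + 1) / ((J + i) * (J + i + 1)) * ((J + i) / J) ^ θ := by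
    intro i; have := hk0 i; positivity
  have hfs : Summable (fun i : ℕ => J / ((J + i) * (J + i + 2)) * ((J + i) / J) ^ θ) := by
    refine Summable.of_nonneg_of_le hfnn (fun i => ?_) (hS2.mul_left (J ^ (1 - θ)))
    rw [hf i]
    have hk := hk0 i
    have h1 : (J + i) / (J + i + 2) ≤ 1 := by
      rw [div_le_one (by linarith)]; linarith
    calc J ^ (1 - θ) * ((J + i) ^ (θ - 2) * ((J + i) / (J + i + 2)))
        ≤ J ^ (1 - θ) * ((J + i) ^ (θ - 2) * 1) := by gcongr
      _ = J ^ (1 - θ) * (J + i) ^ (θ - 2) := by ring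
  have hfs' : Summable (fun i : ℕ => (J + 1) / ((J + i) * (J + i + 1)) * ((J + i) / J) ^ θ) := by
    refine Summable.of_nonneg_of_le hfnn' (fun i => ?_) (hS2.mul_left ((J + 1) * J ^ (-θ)))
    rw [hf' i]
    have hk := hk0 i
    have h1 : (J + i) / (J + i + 1) ≤ 1 := by
      rw [div_le_one (by linarith)]; linarith
    calc (J + 1) * J ^ (-θ) * ((J + i) ^ (θ - 2) * ((J + i) / (J + i + 1)))
        ≤ (J + 1) * J ^ (-θ) * ((J + i) ^ (θ - 2) * 1) := by gcongr
      _ = (J + 1) * J ^ (-θ) * (J + i) ^ (θ - 2) := by ring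
  constructor
  · -- lower bound
    set h : ℕ → ℝ := fun n => (J + n) ^ (θ - 1) with hhdef
    have hmono : ∀ n, h (n + 1) ≤ h n := by
      intro n
      apply Real.rpow_le_rpow_of_nonpos (hk0 n) _ hp
      push_cast; linarith
    have hlim : Tendsto h atTop (nhds 0) := by
      have h1 : Tendsto (fun x : ℝ => x ^ (-(1 - θ))) atTop (nhds 0) :=
        tendsto_rpow_neg_atTop hθ1
      have h2 : Tendsto (fun n : ℕ => J + (n:ℝ)) atTop atTop :=
        tendsto_atTop_add_const_left _ J tendsto_natCast_atTop_atTop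
      have := h1.comp h2
      refine this.congr fun n => ?_
      simp only [Function.comp]
      congr 1; ring
    have htele : HasSum (fun i => h i - h (i + 1)) (h 0) := ecf_hasSum_tele hmono hlim
    set c : ℝ := J / (J + 2) * (J ^ (1 - θ) / (1 - θ)) with hcdef
    have hc0 : 0 ≤ c := by
      apply mul_nonneg (by positivity)
      exact div_nonneg (Real.rpow_nonneg hJ0.le _) hθ1.le
    have hpoint : ∀ i : ℕ, c * (h i - h (i + 1))
        ≤ J / ((J + i) * (J + i + 2)) * ((J + i) / J) ^ θ := by
      intro i
      have hk := hk0 i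
      have key : h i - h (i + 1) ≤ (1 - θ) * (J + i) ^ (θ - 2) := by
        have h1 := ecf_key1 hk hp
        have e1 : h (i + 1) = (J + i + 1) ^ (θ - 1) := by
          simp only [hhdef]; push_cast
          rw [show J + ((i:ℝ) + 1) = J + i + 1 from by ring]
        have e2 : θ - 1 - 1 = θ - 2 := by ring
        rw [e2] at h1
        rw [e1]
        calc (J + i) ^ (θ - 1) - (J + i + 1) ^ (θ - 1)
            = (J + i) ^ (θ - 1) - ((J + i) + 1) ^ (θ - 1) := by ring_nf
          _ ≤ -(θ - 1) * (J + i) ^ (θ - 2) := h1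
          _ = (1 - θ) * (J + i) ^ (θ - 2) := by ring
      calc c * (h i - h (i + 1)) ≤ c * ((1 - θ) * (J + i) ^ (θ - 2)) :=
            mul_le_mul_of_nonneg_left key hc0
        _ = J ^ (1 - θ) * ((J + i) ^ (θ - 2) * (J / (J + 2))) := by
            rw [hcdef]; field_simp
        _ ≤ J ^ (1 - θ) * ((J + i) ^ (θ - 2) * ((J + i) / (J + i + 2))) := by
            have hA : (0:ℝ) ≤ (J + i) ^ (θ - 2) := Real.rpow_nonneg hk.le _
            have hd : J / (J + 2) ≤ (J + i) / (J + i + 2) := by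
              rw [div_le_div_iff₀ (by linarith) (by linarith)]
              have hi : (0:ℝ) ≤ (i:ℝ) := Nat.cast_nonneg i
              nlinarith
            exact mul_le_mul_of_nonneg_left (mul_le_mul_of_nonneg_left hd hA)
              (Real.rpow_nonneg hJ0.le _)
        _ = J / ((J + i) * (J + i + 2)) * ((J + i) / J) ^ θ := (hf i).symm
    have hsum_g : HasSum (fun i => c * (h i - h (i + 1))) (c * h 0) := htele.mul_left c
    have hceq : c * h 0 = J / (J + 2) * (1 / (1 - θ)) := by
      have e0 : h 0 = J ^ (θ - 1) := by simp [hhdef]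
      have e1 : J ^ (1 - θ) * J ^ (θ - 1) = 1 := by
        rw [← Real.rpow_add hJ0]; norm_num
      rw [e0, hcdef]
      field_simp
      nlinarith [e1]
    calc J / (J + 2) * (1 / (1 - θ)) = c * h 0 := hceq.symm
      _ = ∑' i, c * (h i - h (i + 1)) := hsum_g.tsum_eq.symm
      _ ≤ ∑' i : ℕ, J / ((J + i) * (J + i + 2)) * ((J + i) / J) ^ θ :=
          Summable.tsum_le_tsum hpoint hsum_g.summable hfs
  · -- upper bound
    set h : ℕ → ℝ := fun n => (J - 1 + n) ^ (θ - 1) with hhdef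
    have hb0 : ∀ n : ℕ, (0:ℝ) < J - 1 + n := fun n => by
      have : (0:ℝ) ≤ (n:ℝ) := Nat.cast_nonneg n; linarith
    have hmono : ∀ n, h (n + 1) ≤ h n := by
      intro n
      apply Real.rpow_le_rpow_of_nonpos (hb0 n) _ hp
      push_cast; linarith
    have hlim : Tendsto h atTop (nhds 0) := by
      have h1 : Tendsto (fun x : ℝ => x ^ (-(1 - θ))) atTop (nhds 0) :=
        tendsto_rpow_neg_atTop hθ1
      have h2 : Tendsto (fun n : ℕ => J - 1 + (n:ℝ)) atTop atTop :=
        tendsto_atTop_add_const_left _ (J - 1) tendsto_natCast_atTop_atTop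
      have := h1.comp h2
      refine this.congr fun n => ?_
      simp only [Function.comp]
      congr 1; ring
    have htele : HasSum (fun i => h i - h (i + 1)) (h 0) := ecf_hasSum_tele hmono hlim
    set c : ℝ := (J + 1) * J ^ (-θ) / (1 - θ) with hcdef
    have hc0 : 0 ≤ c := by
      apply div_nonneg _ hθ1.le
      positivity
    have hpoint : ∀ i : ℕ, (J + 1) / ((J + i) * (J + i + 1)) * ((J + i) / J) ^ θ
        ≤ c * (h i - h (i + 1)) := by
      intro i
      have hk := hk0 i
      have hk1 : (1:ℝ) < J + i := by
        have : (0:ℝ) ≤ (i:ℝ) := Nat.cast_nonneg i; linarith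
      have key : (1 - θ) * (J + i) ^ (θ - 2) ≤ h i - h (i + 1) := by
        have h1 := ecf_key2 hk1 hp
        have e2 : θ - 1 - 1 = θ - 2 := by ring
        rw [e2] at h1
        have e1 : h i = (J + i - 1) ^ (θ - 1) := by
          simp only [hhdef]
          rw [show J - 1 + (i:ℝ) = J + i - 1 from by ring]
        have e3 : h (i + 1) = (J + i) ^ (θ - 1) := by
          simp only [hhdef]; push_cast
          rw [show J - 1 + ((i:ℝ) + 1) = J + i from by ring]
        rw [e1, e3]
        calc (1 - θ) * (J + i) ^ (θ - 2) = -(θ - 1) * (J + i) ^ (θ - 2) := by ring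
          _ ≤ (J + i - 1) ^ (θ - 1) - (J + i) ^ (θ - 1) := h1
      have h1 : (J + i) / (J + i + 1) ≤ 1 := by
        rw [div_le_one (by linarith)]; linarith
      have hC2 : (0:ℝ) ≤ (J + 1) * J ^ (-θ) := by positivity
      calc (J + 1) / ((J + i) * (J + i + 1)) * ((J + i) / J) ^ θ
          = (J + 1) * J ^ (-θ) * ((J + i) ^ (θ - 2) * ((J + i) / (J + i + 1))) := hf' i
        _ ≤ (J + 1) * J ^ (-θ) * ((J + i) ^ (θ - 2) * 1) := by gcongr
        _ = (J + 1) * J ^ (-θ) * (J + i) ^ (θ - 2) := by ring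
        _ ≤ (J + 1) * J ^ (-θ) * ((h i - h (i + 1)) / (1 - θ)) := by
            apply mul_le_mul_of_nonneg_left _ hC2
            rw [le_div_iff₀ hθ1]
            calc (J + i) ^ (θ - 2) * (1 - θ) = (1 - θ) * (J + i) ^ (θ - 2) := by ring
              _ ≤ h i - h (i + 1) := key
        _ = c * (h i - h (i + 1)) := by rw [hcdef]; ring
    have hsum_g : HasSum (fun i => c * (h i - h (i + 1))) (c * h 0) := htele.mul_left c
    have hceq : c * h 0 = (1 + 1 / J) * (1 - 1 / J) ^ (θ - 1) * (1 / (1 - θ)) := by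
      have e0 : h 0 = (J - 1) ^ (θ - 1) := by simp [hhdef]
      have eb : (1 : ℝ) - 1 / J = (J - 1) / J := by field_simp
      have e1 : (1 - 1 / J) ^ (θ - 1) = (J - 1) ^ (θ - 1) / J ^ (θ - 1) := by
        rw [eb, Real.div_rpow (by linarith) hJ0.le]
      have hJθ1 : J ^ (θ - 1) ≠ 0 := (Real.rpow_pos_of_pos hJ0 _).ne'
      have e4 : J * J ^ (θ - 1) = J ^ θ := by
        rw [mul_comm, ← Real.rpow_add_one hJ0.ne', show θ - 1 + 1 = θ from by ring]
      have e3 : J ^ (-θ) = 1 / (J * J ^ (θ - 1)) := by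
        rw [Real.rpow_neg hJ0.le, ← e4, inv_eq_one_div]
      rw [e0, e1, hcdef, e3]
      field_simp
    calc (∑' i : ℕ, (J + 1) / ((J + i) * (J + i + 1)) * ((J + i) / J) ^ θ)
        ≤ ∑' i, c * (h i - h (i + 1)) := Summable.tsum_le_tsum hpoint hfs' hsum_g.summable
      _ = c * h 0 := hsum_g.tsum_eq
      _ = (1 + 1 / J) * (1 - 1 / J) ^ (θ - 1) * (1 / (1 - θ)) := hceq
end
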